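/- arXiv:1405.1468 — 9 statements merged into one kernel-verified Lean document; each statement's English description precedes it below -/
import Mathlib

section
/- Let (X,μ) be a probability space and let f : X → [0,∞) be measurable with ∫ f dμ = 1 and with f·log f μ-integrable; set D := ∫ f log f dμ and let ν := f·μ be the corresponding probability measure with density f. Then for every C > 0 one has ν ≪_{e^C, (D+e^{−1})/C} μ; that is, ν(A) ≤ e^C · μ(A) + (D+e^{−1})/C for every measurable set A ⊆ X. -/
open MeasureTheory Real

lemma aux_neg_exp_le (x : ℝ) (hx : 0 ≤ x) : -Real.exp (-1) ≤ x * Real.log x := by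
  rcases eq_or_lt_of_le hx with h | h
  · rw [← h]; simp; positivity
  · have h1 := Real.add_one_le_exp (-(Real.log x) - 1)
    have h2 : Real.exp (-(Real.log x) - 1) = Real.exp (-1) / x := by
      rw [Real.exp_sub, Real.exp_neg, Real.exp_neg, Real.exp_log h]; ring
    rw [h2] at h1
    have h3 : (-(Real.log x) - 1 + 1) * x ≤ (Real.exp (-1) / x) * x :=
      mul_le_mul_of_nonneg_right h1 hx
    rw [div_mul_cancel₀ _ (ne_of_gt h)] at h3
    nlinarith

/-- **Uniform integrability from a relative entropy bound.**
If `ν = f·μ` is a probability measure with density `f` with respect to the probability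
measure `μ`, with `f·log f` integrable and `D := ∫ f log f dμ`, then for every `C > 0` one
has `ν(A) ≤ e^C · μ(A) + (D + e^{−1})/C` for every measurable `A`. -/
theorem uniform_integrability_from_relative_entropy
    {X : Type*} [MeasurableSpace X] (μ : Measure X) [IsProbabilityMeasure μ]
    (f : X → ℝ) (hf : Measurable f) (hf0 : ∀ x, 0 ≤ f x)
    (hf1 : ∫ x, f x ∂μ = 1)
    (hint : Integrable (fun x => f x * Real.log (f x)) μ)
    (D : ℝ) (hD : D = ∫ x, f x * Real.log (f x) ∂μ)
    (ν : Measure X) (hν : ν = μ.withDensity (fun x => ENNReal.ofReal (f x)))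
    (C : ℝ) (hC : 0 < C) :
    ∀ A : Set X, MeasurableSet A →
      ν A ≤ ENNReal.ofReal (Real.exp C) * μ A
          + ENNReal.ofReal ((D + Real.exp (-1)) / C) := by
  intro A hA
  set S : Set X := {x | f x ≤ Real.exp C} with hSdef
  have hS : MeasurableSet S := measurableSet_le hf measurable_const
  -- ν A as a lintegral
  have hνA : ν A = ∫⁻ x in A, ENNReal.ofReal (f x) ∂μ := by
    rw [hν, withDensity_apply _ hA]
  -- split
  have hsplit : ν A ≤ (∫⁻ x in A ∩ S, ENNReal.ofReal (f x) ∂μ)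
      + ∫⁻ x in A ∩ Sᶜ, ENNReal.ofReal (f x) ∂μ := by
    rw [hνA, ← lintegral_union (hA.inter hS.compl)
      (Set.disjoint_of_subset (Set.inter_subset_right) (Set.inter_subset_right)
        disjoint_compl_right), Set.inter_union_compl]
  -- first bound
  have hb1 : (∫⁻ x in A ∩ S, ENNReal.ofReal (f x) ∂μ)
      ≤ ENNReal.ofReal (Real.exp C) * μ A := by
    calc (∫⁻ x in A ∩ S, ENNReal.ofReal (f x) ∂μ)
        ≤ ∫⁻ _ in A ∩ S, ENNReal.ofReal (Real.exp C) ∂μ := by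
          refine setLIntegral_mono measurable_const fun x hx => ?_
          exact ENNReal.ofReal_le_ofReal hx.2
      _ = ENNReal.ofReal (Real.exp C) * μ (A ∩ S) := by
          rw [setLIntegral_const]
      _ ≤ ENNReal.ofReal (Real.exp C) * μ A := by
          gcongr; exact Set.inter_subset_left
  -- key real bound
  have hIS : -Real.exp (-1) ≤ ∫ x in S, f x * Real.log (f x) ∂μ := by
    have h1 : -Real.exp (-1) * (μ S).toReal ≤ ∫ x in S, f x * Real.log (f x) ∂μ :=
      setIntegral_ge_of_const_le_real hS (measure_ne_top μ S)
        (fun x _ => aux_neg_exp_le (f x) (hf0 x)) hint.integrableOn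
    have h2 : (μ S).toReal ≤ 1 := by
      simpa using ENNReal.toReal_mono (by simp) (prob_le_one (μ := μ) (s := S))
    nlinarith [Real.exp_pos (-1), ENNReal.toReal_nonneg (a := μ S)]
  have hIcompl : (∫ x in Sᶜ, f x * Real.log (f x) ∂μ) ≤ D + Real.exp (-1) := by
    have := integral_add_compl hS hint
    rw [hD]; linarith
  -- second bound
  have hb2 : (∫⁻ x in A ∩ Sᶜ, ENNReal.ofReal (f x) ∂μ)
      ≤ ENNReal.ofReal ((D + Real.exp (-1)) / C) := by
    calc (∫⁻ x in A ∩ Sᶜ, ENNReal.ofReal (f x) ∂μ)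
        ≤ ∫⁻ x in Sᶜ, ENNReal.ofReal (f x) ∂μ :=
          lintegral_mono_set Set.inter_subset_right
      _ ≤ ∫⁻ x in Sᶜ, ENNReal.ofReal (f x * Real.log (f x) / C) ∂μ := by
          refine setLIntegral_mono (ENNReal.measurable_ofReal.comp ((hf.mul hf.log).div_const C)) fun x hx => ?_
          have hx' : Real.exp C < f x := lt_of_not_ge hx
          have hfx : 0 < f x := lt_trans (Real.exp_pos C) hx'
          have hlog : C ≤ Real.log (f x) := by
            rw [← Real.log_exp C]; exact Real.log_le_log (Real.exp_pos C) hx'.le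
          refine ENNReal.ofReal_le_ofReal ?_
          rw [le_div_iff₀ hC]
          nlinarith
      _ = ENNReal.ofReal (∫ x in Sᶜ, f x * Real.log (f x) / C ∂μ) := by
          rw [MeasureTheory.ofReal_integral_eq_lintegral_ofReal
            ((hint.integrableOn).div_const C)]
          refine (ae_restrict_iff' hS.compl).2 (ae_of_all _ fun x hx => ?_)
          have hx' : Real.exp C < f x := lt_of_not_ge hx
          have hfx : 0 < f x := lt_trans (Real.exp_pos C) hx'
          have hlog : (0:ℝ) ≤ Real.log (f x) := le_trans hC.le
            (by rw [← Real.log_exp C]; exact Real.log_le_log (Real.exp_pos C) hx'.le)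
          positivity
      _ ≤ ENNReal.ofReal ((D + Real.exp (-1)) / C) := by
          rw [integral_div]
          exact ENNReal.ofReal_le_ofReal (by gcongr)
  calc ν A ≤ _ := hsplit
    _ ≤ _ := add_le_add hb1 hb2
end

section
/- Let (X,μ) be a probability space, let s, t, r be measurable maps from X into finite sets, and let A ⊆ X be measurable with μ(A) > 0. Let μ_{|A} denote the conditioned probability measure μ(A)^{-1}·μ(A ∩ ·). Then μ(A)·I_{μ_{|A}}(s;t|r) ≤ log 2 + I_μ(s;t|r). -/
open MeasureTheory

/-- Shannon entropy of a finite-valued map, with natural logarithm. -/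
noncomputable def finEntropy {X S : Type*} [MeasurableSpace X] [Fintype S]
    (μ : Measure X) (s : X → S) : ℝ :=
  ∑ i : S, Real.negMulLog ((μ (s ⁻¹' {i})).toReal)

/-- Conditional mutual information `I_μ(s;t|r)` of finite-valued maps. -/
noncomputable def finCondMutualInfo {X S T R : Type*} [MeasurableSpace X]
    [Fintype S] [Fintype T] [Fintype R]
    (μ : Measure X) (s : X → S) (t : X → T) (r : X → R) : ℝ :=
  finEntropy μ (fun x => (s x, r x)) + finEntropy μ (fun x => (t x, r x))
    - finEntropy μ (fun x => (s x, t x, r x)) - finEntropy μ r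

namespace FinEnt
open Finset Real

set_option linter.unusedSectionVars false

variable {ι κ κ' : Type*} [Fintype ι] [Fintype κ] [Fintype κ'] [DecidableEq κ] [DecidableEq κ']

noncomputable def fib (p : ι → ℝ) (f : ι → κ) (k : κ) : ℝ :=
  ∑ i ∈ univ.filter (fun i => f i = k), p i

noncomputable def Hs (p : ι → ℝ) (f : ι → κ) : ℝ := ∑ k, Real.negMulLog (fib p f k)

lemma fib_nonneg {p : ι → ℝ} (hp : ∀ i, 0 ≤ p i) (f : ι → κ) (k : κ) : 0 ≤ fib p f k :=
  Finset.sum_nonneg fun i _ => hp i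

lemma sum_fib (p : ι → ℝ) (f : ι → κ) : ∑ k, fib p f k = ∑ i, p i :=
  Finset.sum_fiberwise _ _ _

lemma le_fib {p : ι → ℝ} (hp : ∀ i, 0 ≤ p i) (f : ι → κ) (i : ι) : p i ≤ fib p f (f i) :=
  Finset.single_le_sum (fun j _ => hp j) (by simp)

lemma sum_mul_comp (p : ι → ℝ) (f : ι → κ) (c : κ → ℝ) :
    ∑ i, p i * c (f i) = ∑ k, fib p f k * c k := by
  simp only [fib, Finset.sum_mul]
  rw [← Finset.sum_fiberwise univ f (fun i => p i * c (f i))]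
  refine Finset.sum_congr rfl fun k _ => Finset.sum_congr rfl fun i hi => ?_
  simp only [mem_filter] at hi
  rw [hi.2]

lemma fib_comp (p : ι → ℝ) (F : ι → κ) (g : κ → κ') (k' : κ') :
    fib (fib p F) g k' = fib p (fun i => g (F i)) k' := by
  classical
  simp only [fib]
  rw [← Finset.sum_fiberwise (univ.filter fun i => g (F i) = k') F p]
  rw [Finset.sum_filter]
  refine Finset.sum_congr rfl fun k _ => ?_
  rw [Finset.filter_filter]
  by_cases h : g k = k'
  · rw [if_pos h]
    refine Finset.sum_congr ?_ (fun _ _ => rfl)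
    ext i
    simp only [mem_filter, mem_univ, true_and]
    exact ⟨fun hi => ⟨hi ▸ h, hi⟩, fun hi => hi.2⟩
  · rw [if_neg h]
    refine (Finset.sum_eq_zero fun i hi => absurd ?_ h).symm
    simp only [mem_filter, mem_univ, true_and] at hi
    rw [← hi.2, hi.1]
lemma Hs_comp (p : ι → ℝ) (F : ι → κ) (g : κ → κ') :
    Hs (fib p F) g = Hs p (fun i => g (F i)) :=
  Finset.sum_congr rfl fun k _ => by rw [fib_comp]

lemma fib_comp_inj {g : κ → κ'} (hg : Function.Injective g) (p : ι → ℝ) (f : ι → κ) (k : κ) :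
    fib p (fun i => g (f i)) (g k) = fib p f k := by
  simp only [fib]
  congr 1
  ext i
  simp [hg.eq_iff]

lemma Hs_relabel {g : κ → κ'} (hg : Function.Injective g) (p : ι → ℝ) (f : ι → κ) :
    Hs p (fun i => g (f i)) = Hs p f := by
  rw [Hs, Hs, ← Finset.sum_subset (Finset.subset_univ (univ.image g))]
  · rw [Finset.sum_image (fun a _ b _ h => hg h)]
    exact Finset.sum_congr rfl fun k _ => by rw [fib_comp_inj hg]
  · intro k' _ hk'
    have : fib p (fun i => g (f i)) k' = 0 := by
      rw [fib, Finset.sum_eq_zero]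
      intro i hi
      simp only [mem_filter, mem_univ, true_and] at hi
      exact absurd (Finset.mem_image.2 ⟨f i, mem_univ _, hi⟩) hk'
    simp [this]

lemma negMulLog_add_le {x y : ℝ} (hx : 0 ≤ x) (hy : 0 ≤ y) :
    Real.negMulLog (x + y) ≤ Real.negMulLog x + Real.negMulLog y := by
  rcases eq_or_lt_of_le hx with h | hx'
  · simp [← h]
  rcases eq_or_lt_of_le hy with h | hy'
  · simp [← h]
  simp only [Real.negMulLog, neg_mul, add_mul, neg_add]
  have h1 : x * Real.log x ≤ x * Real.log (x + y) :=
    mul_le_mul_of_nonneg_left (Real.log_le_log hx' (by linarith)) hx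
  have h2 : y * Real.log y ≤ y * Real.log (x + y) :=
    mul_le_mul_of_nonneg_left (Real.log_le_log hy' (by linarith)) hy
  linarith

lemma negMulLog_sum_le (s : Finset κ) (x : κ → ℝ) (hx : ∀ k ∈ s, 0 ≤ x k) :
    Real.negMulLog (∑ k ∈ s, x k) ≤ ∑ k ∈ s, Real.negMulLog (x k) := by
  classical
  induction s using Finset.induction with
  | empty => simp
  | @insert a s' ha ih =>
    rw [Finset.sum_insert ha, Finset.sum_insert ha]
    calc Real.negMulLog (x a + ∑ k ∈ s', x k)
        ≤ Real.negMulLog (x a) + Real.negMulLog (∑ k ∈ s', x k) :=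
          negMulLog_add_le (hx a (mem_insert_self _ _)) (Finset.sum_nonneg fun k hk => hx k (mem_insert_of_mem hk))
      _ ≤ _ := by
          have := ih (fun k hk => hx k (mem_insert_of_mem hk))
          linarith
lemma logSum {a b : ι → ℝ} (ha : ∀ i, 0 ≤ a i) (hb : ∀ i, 0 ≤ b i)
    (hab : ∀ i, b i = 0 → a i = 0) (hs : ∑ i, a i = ∑ i, b i) :
    ∑ i, a i * Real.log (b i) ≤ ∑ i, a i * Real.log (a i) := by
  classical
  rcases eq_or_lt_of_le (Finset.sum_nonneg fun i (_ : i ∈ univ) => hb i) with h0 | hBpos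
  · have hbz : ∀ i, b i = 0 := by
      intro i
      exact (Finset.sum_eq_zero_iff_of_nonneg (fun j _ => hb j)).1 h0.symm i (mem_univ i)
    simp [hab _ (hbz _), hbz]
  · have hBne : (∑ i, b i) ≠ 0 := hBpos.ne'
    set w : ι → ℝ := fun i => b i / (∑ i, b i) with hw
    set x : ι → ℝ := fun i => if b i = 0 then 0 else a i / b i with hx
    have hw0 : ∀ i ∈ univ, (0:ℝ) ≤ w i := fun i _ => div_nonneg (hb i) hBpos.le
    have hw1 : ∑ i, w i = 1 := by
      rw [hw, ← Finset.sum_div, div_self hBne]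
    have hmem : ∀ i ∈ univ, x i ∈ Set.Ici (0:ℝ) := by
      intro i _
      simp only [hx, Set.mem_Ici]
      split_ifs
      · exact le_refl _
      · exact div_nonneg (ha i) (hb i)
    have jensen := Real.concaveOn_negMulLog.le_map_sum hw0 hw1 hmem
    have hwx : ∑ i, w i • x i = 1 := by
      have : ∀ i, w i • x i = a i / (∑ i, b i) := by
        intro i
        simp only [hw, hx, smul_eq_mul]
        by_cases h : b i = 0
        · simp [h, hab i h]
        · rw [if_neg h]; field_simp
      rw [Finset.sum_congr rfl fun i _ => this i, ← Finset.sum_div, hs, div_self hBne]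
    rw [hwx, Real.negMulLog_one] at jensen
    have key : ∑ i, w i • Real.negMulLog (x i)
        = (∑ i, (a i * Real.log (b i) - a i * Real.log (a i))) / (∑ i, b i) := by
      rw [Finset.sum_div]
      refine Finset.sum_congr rfl fun i _ => ?_
      simp only [hw, hx, smul_eq_mul, Real.negMulLog]
      by_cases h : b i = 0
      · simp [h, hab i h]
      · rw [if_neg h]
        by_cases h2 : a i = 0
        · simp [h2]
        · rw [Real.log_div h2 h]
          field_simp
          ring
    rw [key] at jensen
    have h2 : (∑ i, (a i * Real.log (b i) - a i * Real.log (a i))) ≤ 0 := by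
      by_contra hcon
      push_neg at hcon
      have := div_pos hcon hBpos
      linarith
    rw [Finset.sum_sub_distrib] at h2
    linarith

lemma fib_id (p : ι → ℝ) [DecidableEq ι] (v : ι) : fib p id v = p v := by
  rw [fib]
  rw [show (univ.filter (fun i => id i = v)) = {v} by ext i; simp [eq_comm]]
  exact Finset.sum_singleton _ _

lemma fib_snd {S R : Type*} [Fintype S] [Fintype R] [DecidableEq R] (m : S × R → ℝ) (k : R) :
    fib m Prod.snd k = ∑ i, m (i, k) := by
  rw [fib, Finset.sum_filter, Fintype.sum_prod_type]
  simp

lemma Hs_eq (p : ι → ℝ) (f : ι → κ) : Hs p f = -∑ k, fib p f k * Real.log (fib p f k) := by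
  simp [Hs, Real.negMulLog, neg_mul, Finset.sum_neg_distrib]

lemma key {S T R : Type*} [Fintype S] [Fintype T] [Fintype R]
    [DecidableEq S] [DecidableEq T] [DecidableEq R]
    (w : S × T × R → ℝ) (hw : ∀ v, 0 ≤ w v) :
    Hs w (fun v => v.2.2) + Hs w id
      ≤ Hs w (fun v => (v.1, v.2.2)) + Hs w (fun v => (v.2.1, v.2.2)) := by
  classical
  set msr := fib w (fun v => (v.1, v.2.2)) with hmsr
  set mtr := fib w (fun v => (v.2.1, v.2.2)) with hmtr
  set mr := fib w (fun v => v.2.2) with hmr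
  have hmsr0 : ∀ u, 0 ≤ msr u := fun u => fib_nonneg hw _ u
  have hmtr0 : ∀ u, 0 ≤ mtr u := fun u => fib_nonneg hw _ u
  have hmr0 : ∀ k, 0 ≤ mr k := fun k => fib_nonneg hw _ k
  have hmargS : ∀ k, ∑ i, msr (i, k) = mr k := by
    intro k
    rw [hmr, show (fun v : S × T × R => v.2.2) = (fun v => Prod.snd ((fun v : S×T×R => (v.1, v.2.2)) v)) from rfl,
      ← fib_comp w _ Prod.snd k, ← hmsr, fib_snd]
  have hmargT : ∀ k, ∑ j, mtr (j, k) = mr k := by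
    intro k
    rw [hmr, show (fun v : S × T × R => v.2.2) = (fun v => Prod.snd ((fun v : S×T×R => (v.2.1, v.2.2)) v)) from rfl,
      ← fib_comp w _ Prod.snd k, ← hmtr, fib_snd]
  set b : S × T × R → ℝ := fun v => msr (v.1, v.2.2) * mtr (v.2.1, v.2.2) / mr v.2.2 with hb
  have hb0 : ∀ v, 0 ≤ b v := fun v =>
    div_nonneg (mul_nonneg (hmsr0 _) (hmtr0 _)) (hmr0 _)
  have hwle : ∀ v : S × T × R, w v ≤ msr (v.1, v.2.2) ∧ w v ≤ mtr (v.2.1, v.2.2) ∧ w v ≤ mr v.2.2 :=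
    fun v => ⟨le_fib hw _ v, le_fib hw _ v, le_fib hw _ v⟩
  have hab : ∀ v, b v = 0 → w v = 0 := by
    intro v h
    by_contra hw0
    have hwpos : 0 < w v := lt_of_le_of_ne (hw v) (Ne.symm hw0)
    have h1 : 0 < msr (v.1, v.2.2) := lt_of_lt_of_le hwpos (hwle v).1
    have h2 : 0 < mtr (v.2.1, v.2.2) := lt_of_lt_of_le hwpos (hwle v).2.1
    have h3 : 0 < mr v.2.2 := lt_of_lt_of_le hwpos (hwle v).2.2
    have : 0 < b v := div_pos (mul_pos h1 h2) h3
    rw [h] at this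
    exact lt_irrefl 0 this
  have perk : ∀ k, ∑ i, ∑ j, msr (i, k) * mtr (j, k) / mr k = mr k := by
    intro k
    by_cases h : mr k = 0
    · have hms : ∀ i, msr (i, k) = 0 := by
        intro i
        have h1 : msr (i, k) ≤ mr k := by
          rw [← hmargS k]
          exact Finset.single_le_sum (f := fun i => msr (i, k)) (fun j _ => hmsr0 _) (mem_univ i)
        exact le_antisymm (h ▸ h1) (hmsr0 _)
      simp [hms, h]
    · have step : ∀ i, ∑ j, msr (i, k) * mtr (j, k) / mr k = msr (i, k) * mr k / mr k := by
        intro i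
        rw [← hmargT k, Finset.mul_sum, Finset.sum_div]
      rw [Finset.sum_congr rfl fun i _ => step i, ← Finset.sum_div, ← Finset.sum_mul, hmargS k,
        mul_div_assoc, div_self h, mul_one]
  have hsum : ∑ v, w v = ∑ v, b v := by
    have h1 : ∑ v, b v = ∑ k, mr k := by
      rw [Fintype.sum_prod_type]
      have inner : ∀ i : S, ∑ p : T × R, b (i, p) = ∑ k, ∑ j, msr (i, k) * mtr (j, k) / mr k := by
        intro i
        rw [Fintype.sum_prod_type, Finset.sum_comm]
      rw [Finset.sum_congr rfl fun i _ => inner i, Finset.sum_comm]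
      exact Finset.sum_congr rfl fun k _ => perk k
    rw [h1, hmr, sum_fib]
  have expand : ∑ v, w v * Real.log (b v)
      = (∑ u, msr u * Real.log (msr u)) + (∑ u, mtr u * Real.log (mtr u))
        - ∑ k, mr k * Real.log (mr k) := by
    have per : ∀ v, w v * Real.log (b v)
        = w v * Real.log (msr (v.1, v.2.2)) + w v * Real.log (mtr (v.2.1, v.2.2))
          - w v * Real.log (mr v.2.2) := by
      intro v
      by_cases h : w v = 0
      · simp [h]
      · have hwpos : 0 < w v := lt_of_le_of_ne (hw v) (Ne.symm h)
        have h1 : 0 < msr (v.1, v.2.2) := lt_of_lt_of_le hwpos (hwle v).1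
        have h2 : 0 < mtr (v.2.1, v.2.2) := lt_of_lt_of_le hwpos (hwle v).2.1
        have h3 : 0 < mr v.2.2 := lt_of_lt_of_le hwpos (hwle v).2.2
        rw [hb]
        show w v * Real.log (msr (v.1, v.2.2) * mtr (v.2.1, v.2.2) / mr v.2.2) = _
        rw [Real.log_div (mul_pos h1 h2).ne' h3.ne', Real.log_mul h1.ne' h2.ne']
        ring
    rw [Finset.sum_congr rfl fun v _ => per v, Finset.sum_sub_distrib, Finset.sum_add_distrib]
    congr 1
    congr 1
    · exact sum_mul_comp w (fun v => (v.1, v.2.2)) (fun u => Real.log (msr u))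
    · exact sum_mul_comp w (fun v => (v.2.1, v.2.2)) (fun u => Real.log (mtr u))
    · exact sum_mul_comp w (fun v => v.2.2) (fun k => Real.log (mr k))
  have main := logSum hw hb0 hab hsum
  rw [expand] at main
  have hid : ∑ v, w v * Real.log (w v) = ∑ v, fib w id v * Real.log (fib w id v) :=
    Finset.sum_congr rfl fun v _ => by rw [fib_id]
  rw [hid] at main
  rw [Hs_eq, Hs_eq, Hs_eq, Hs_eq]
  rw [← hmsr, ← hmtr, ← hmr]
  linarith

section General

variable {S T R U : Type*} [Fintype S] [Fintype T] [Fintype R] [Fintype U]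
  [DecidableEq S] [DecidableEq T] [DecidableEq R] [DecidableEq U]
lemma condMI_nonneg (p : ι → ℝ) (hp : ∀ i, 0 ≤ p i) (f : ι → S) (g : ι → T) (h : ι → R) :
    Hs p h + Hs p (fun i => (f i, g i, h i))
      ≤ Hs p (fun i => (f i, h i)) + Hs p (fun i => (g i, h i)) := by
  have hkey := key (fib p (fun i => (f i, g i, h i))) (fun v => fib_nonneg hp _ v)
  rw [Hs_comp, Hs_comp, Hs_comp, Hs_comp] at hkey
  exact hkey

lemma Hs_perm {p : ι → ℝ} {c : ι → κ} {d : ι → κ'} (g : κ → κ')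
    (hg : Function.Injective g) (hgc : ∀ i, g (c i) = d i) : Hs p d = Hs p c := by
  have hd : d = fun i => g (c i) := funext fun i => (hgc i).symm
  rw [hd, Hs_relabel hg]

lemma fib_fst (m : κ × κ' → ℝ) (k : κ) : fib m Prod.fst k = ∑ j, m (k, j) := by
  rw [fib, Finset.sum_filter, Fintype.sum_prod_type, Finset.sum_comm]
  simp

lemma Hs_le_pair (p : ι → ℝ) (hp : ∀ i, 0 ≤ p i) (f : ι → κ) (g : ι → κ') :
    Hs p f ≤ Hs p (fun i => (f i, g i)) := by
  rw [Hs, Hs, Fintype.sum_prod_type]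
  apply Finset.sum_le_sum
  intro k _
  have hfk : fib p f k = ∑ j, fib p (fun i => (f i, g i)) (k, j) := by
    rw [← fib_fst, fib_comp]
  rw [hfk]
  exact negMulLog_sum_le univ _ (fun j _ => fib_nonneg hp _ _)

lemma Hs_unit (p : ι → ℝ) (f : ι → Unit) : Hs p f = Real.negMulLog (∑ i, p i) := by
  rw [Hs]
  rw [Fintype.sum_unique]
  congr 1
  rw [fib]
  rw [Finset.filter_true_of_mem (fun i _ => Subsingleton.elim _ _)]

lemma Hs_pair_le (p : ι → ℝ) (hp : ∀ i, 0 ≤ p i) (hmass : ∑ i, p i = 1)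
    (f : ι → S) (g : ι → T) :
    Hs p (fun i => (f i, g i)) ≤ Hs p f + Hs p g := by
  have h := condMI_nonneg p hp f g (fun _ => ())
  rw [Hs_unit p (fun _ => ()), hmass, Real.negMulLog_one] at h
  have e1 : Hs p (fun i => (f i, ())) = Hs p f :=
    Hs_perm (fun x : S => (x, ())) (fun a b hab => by simpa using hab) (fun i => rfl)
  have e2 : Hs p (fun i => (g i, ())) = Hs p g :=
    Hs_perm (fun x : T => (x, ())) (fun a b hab => by simpa using hab) (fun i => rfl)
  have e3 : Hs p (fun i => (f i, g i, ())) = Hs p (fun i => (f i, g i)) :=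
    Hs_perm (fun x : S × T => (x.1, x.2, ())) (fun a b hab => by
      cases a; cases b; simpa [Prod.ext_iff] using hab) (fun i => rfl)
  rw [e1, e2, e3] at h
  linarith

end General

section Chain

variable {S T R U : Type*} [Fintype S] [Fintype T] [Fintype R] [Fintype U]
  [DecidableEq S] [DecidableEq T] [DecidableEq R] [DecidableEq U]
lemma Hs_bool_le (p : ι → ℝ) (hp : ∀ i, 0 ≤ p i) (hmass : ∑ i, p i = 1) (e : ι → Bool) :
    Hs p e ≤ Real.log 2 := by
  have hls := logSum (a := fib p e) (b := fun _ => (2:ℝ)⁻¹)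
    (fun k => fib_nonneg hp e k) (fun k => by norm_num) (fun k h => by norm_num at h)
    (by rw [sum_fib, hmass]; simp)
  have hL : ∑ k : Bool, fib p e k * Real.log (2:ℝ)⁻¹ = -Real.log 2 := by
    rw [← Finset.sum_mul, sum_fib, hmass, one_mul, Real.log_inv]
  have hR : ∑ k : Bool, fib p e k * Real.log (fib p e k) = -Hs p e := by
    simp [Hs, Real.negMulLog, neg_mul, Finset.sum_neg_distrib]
  rw [hL, hR] at hls
  linarith

/-- conditional mutual information for weights -/
noncomputable def Ic (p : ι → ℝ) (f : ι → S) (g : ι → T) (h : ι → R) : ℝ :=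
  Hs p (fun i => (f i, h i)) + Hs p (fun i => (g i, h i))
    - Hs p (fun i => (f i, g i, h i)) - Hs p h

lemma Ic_nonneg (p : ι → ℝ) (hp : ∀ i, 0 ≤ p i) (f : ι → S) (g : ι → T) (h : ι → R) :
    0 ≤ Ic p f g h := by
  have := condMI_nonneg p hp f g h
  rw [Ic]; linarith

lemma Ic_le_log_two (p : ι → ℝ) (hp : ∀ i, 0 ≤ p i) (hmass : ∑ i, p i = 1)
    (f : ι → S) (e : ι → Bool) (u : ι → U) :
    Ic p f e u ≤ Real.log 2 := by
  rw [Ic]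
  have h1 : Hs p (fun i => (f i, u i)) ≤ Hs p (fun i => (f i, e i, u i)) := by
    have := Hs_le_pair p hp (fun i => (f i, u i)) e
    calc Hs p (fun i => (f i, u i)) ≤ Hs p (fun i => ((f i, u i), e i)) := this
      _ = Hs p (fun i => (f i, e i, u i)) :=
        Hs_perm (fun x : S × Bool × U => ((x.1, x.2.2), x.2.1))
          (fun a b hab => by cases a; cases b; simp_all [Prod.ext_iff])
          (fun i => rfl)
  have h2 : Hs p (fun i => (e i, u i)) ≤ Hs p e + Hs p u := Hs_pair_le p hp hmass e u
  have h3 : Hs p e ≤ Real.log 2 := Hs_bool_le p hp hmass e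
  linarith

end Chain

section Chain2

variable {S T R U : Type*} [Fintype S] [Fintype T] [Fintype R] [Fintype U]
  [DecidableEq S] [DecidableEq T] [DecidableEq R] [DecidableEq U]
lemma Ic_cond_le (p : ι → ℝ) (hp : ∀ i, 0 ≤ p i) (hmass : ∑ i, p i = 1)
    (f : ι → S) (g : ι → T) (h : ι → R) (e : ι → Bool) :
    Ic p f g (fun i => (h i, e i)) ≤ Real.log 2 + Ic p f g h := by
  have eA : Hs p (fun i => (f i, h i, e i)) = Hs p (fun i => (f i, e i, h i)) :=
    Hs_perm (fun x : S × Bool × R => (x.1, x.2.2, x.2.1))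
      (by rintro ⟨a1,a2,a3⟩ ⟨b1,b2,b3⟩ hab; simp_all [Prod.ext_iff]) (fun i => rfl)
  have eB : Hs p (fun i => (g i, h i, e i)) = Hs p (fun i => ((g i, e i), h i)) :=
    Hs_perm (fun x : (T × Bool) × R => (x.1.1, x.2, x.1.2))
      (by rintro ⟨⟨a1,a2⟩,a3⟩ ⟨⟨b1,b2⟩,b3⟩ hab; simp_all [Prod.ext_iff]) (fun i => rfl)
  have eC : Hs p (fun i => (f i, g i, h i, e i)) = Hs p (fun i => (f i, (g i, e i), h i)) :=
    Hs_perm (fun x : S × (T × Bool) × R => (x.1, x.2.1.1, x.2.2, x.2.1.2))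
      (by rintro ⟨a1,⟨a2,a3⟩,a4⟩ ⟨b1,⟨b2,b3⟩,b4⟩ hab; simp_all [Prod.ext_iff]) (fun i => rfl)
  have eD : Hs p (fun i => (h i, e i)) = Hs p (fun i => (e i, h i)) :=
    Hs_perm (fun x : Bool × R => (x.2, x.1))
      (by rintro ⟨a1,a2⟩ ⟨b1,b2⟩ hab; simp_all [Prod.ext_iff]) (fun i => rfl)
  have eE : Hs p (fun i => ((g i, e i), h i)) = Hs p (fun i => (e i, g i, h i)) :=
    Hs_perm (fun x : Bool × T × R => ((x.2.1, x.1), x.2.2))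
      (by rintro ⟨a1,a2,a3⟩ ⟨b1,b2,b3⟩ hab; simp_all [Prod.ext_iff]) (fun i => rfl)
  have eF : Hs p (fun i => (f i, (g i, e i), h i)) = Hs p (fun i => (f i, e i, g i, h i)) :=
    Hs_perm (fun x : S × Bool × T × R => (x.1, (x.2.2.1, x.2.1), x.2.2.2))
      (by rintro ⟨a1,a2,a3,a4⟩ ⟨b1,b2,b3,b4⟩ hab; simp_all [Prod.ext_iff]) (fun i => rfl)
  have id1 : Ic p f g (fun i => (h i, e i)) + Ic p f e h
      = Ic p f (fun i => (g i, e i)) h := by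
    simp only [Ic]
    rw [eA, eB, eC, eD]
    ring
  have id2 : Ic p f (fun i => (g i, e i)) h
      = Ic p f g h + Ic p f e (fun i => (g i, h i)) := by
    simp only [Ic]
    rw [eE, eF]
    ring
  have b3 : Ic p f e (fun i => (g i, h i)) ≤ Real.log 2 :=
    Ic_le_log_two p hp hmass f e (fun i => (g i, h i))
  have n4 : 0 ≤ Ic p f e h := Ic_nonneg p hp f e h
  linarith

end Chain2

section Split
variable {J : Type*} [Fintype J] [DecidableEq J]
lemma fib_restrict (p : ι → ℝ) (F : ι → J) (e : ι → Bool) (d : J → κ) (k : κ) (bb : Bool) :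
    fib (fun u : J => fib p (fun i => (F i, e i)) (u, bb)) d k
      = fib p (fun i => (d (F i), e i)) (k, bb) := by
  classical
  rw [show fib p (fun i => (d (F i), e i)) (k, bb)
      = fib (fib p (fun i => (F i, e i))) (fun v => (d v.1, v.2)) (k, bb) by
    rw [fib_comp]]
  rw [fib, fib, Finset.sum_filter, Finset.sum_filter, Fintype.sum_prod_type]
  refine Finset.sum_congr rfl fun u _ => ?_
  rw [Fintype.sum_bool]
  by_cases h : d u = k
  · cases bb <;> simp [h, Prod.ext_iff]
  · cases bb <;> simp [h, Prod.ext_iff]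

lemma Hs_split (p : ι → ℝ) (F : ι → J) (e : ι → Bool) (d : J → κ) :
    Hs (fun u : J => fib p (fun i => (F i, e i)) (u, true)) d
      + Hs (fun u : J => fib p (fun i => (F i, e i)) (u, false)) d
      = Hs p (fun i => (d (F i), e i)) := by
  classical
  rw [Hs, Hs, Hs, Fintype.sum_prod_type]
  rw [← Finset.sum_add_distrib]
  refine (Finset.sum_congr rfl fun k _ => ?_).symm
  rw [Fintype.sum_bool, fib_restrict, fib_restrict]

end Split

section FiniteMain

variable {S T R U : Type*} [Fintype S] [Fintype T] [Fintype R] [Fintype U]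
  [DecidableEq S] [DecidableEq T] [DecidableEq R] [DecidableEq U]
lemma finite_main (p : ι → ℝ) (hp : ∀ i, 0 ≤ p i) (hmass : ∑ i, p i = 1)
    (f : ι → S) (g : ι → T) (h : ι → R) (e : ι → Bool) :
    Ic (fun u : S × T × R => fib p (fun i => ((f i, g i, h i), e i)) (u, true))
        (fun u => u.1) (fun u => u.2.1) (fun u => u.2.2)
      ≤ Real.log 2 + Ic p f g h := by
  classical
  set F : ι → S × T × R := fun i => (f i, g i, h i) with hF
  set q : (S × T × R) → ℝ := fun u => fib p (fun i => (F i, e i)) (u, true) with hq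
  set q' : (S × T × R) → ℝ := fun u => fib p (fun i => (F i, e i)) (u, false) with hq'
  have hq0 : ∀ u, 0 ≤ q u := fun u => fib_nonneg hp _ _
  have hq'0 : ∀ u, 0 ≤ q' u := fun u => fib_nonneg hp _ _
  -- split of the four entropies
  have s1 : Hs q (fun u => (u.1, u.2.2)) + Hs q' (fun u => (u.1, u.2.2))
      = Hs p (fun i => ((f i, h i), e i)) :=
    Hs_split p F e (fun u => (u.1, u.2.2))
  have s2 : Hs q (fun u => (u.2.1, u.2.2)) + Hs q' (fun u => (u.2.1, u.2.2))
      = Hs p (fun i => ((g i, h i), e i)) :=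
    Hs_split p F e (fun u => (u.2.1, u.2.2))
  have s3 : Hs q (fun u => (u.1, u.2.1, u.2.2)) + Hs q' (fun u => (u.1, u.2.1, u.2.2))
      = Hs p (fun i => ((f i, g i, h i), e i)) :=
    Hs_split p F e (fun u => (u.1, u.2.1, u.2.2))
  have s4 : Hs q (fun u => u.2.2) + Hs q' (fun u => u.2.2)
      = Hs p (fun i => (h i, e i)) :=
    Hs_split p F e (fun u => u.2.2)
  -- relabel the RHS of s1–s3 into triple/quadruple form
  have r1 : Hs p (fun i => ((f i, h i), e i)) = Hs p (fun i => (f i, h i, e i)) :=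
    Hs_perm (c := fun i => (f i, h i, e i)) (fun x : S × R × Bool => ((x.1, x.2.1), x.2.2))
      (by rintro ⟨a1,a2,a3⟩ ⟨b1,b2,b3⟩ hab; simp_all [Prod.ext_iff]) (fun i => rfl)
  have r2 : Hs p (fun i => ((g i, h i), e i)) = Hs p (fun i => (g i, h i, e i)) :=
    Hs_perm (c := fun i => (g i, h i, e i)) (fun x : T × R × Bool => ((x.1, x.2.1), x.2.2))
      (by rintro ⟨a1,a2,a3⟩ ⟨b1,b2,b3⟩ hab; simp_all [Prod.ext_iff]) (fun i => rfl)
  have r3 : Hs p (fun i => ((f i, g i, h i), e i)) = Hs p (fun i => (f i, g i, h i, e i)) :=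
    Hs_perm (c := fun i => (f i, g i, h i, e i))
      (fun x : S × T × R × Bool => ((x.1, x.2.1, x.2.2.1), x.2.2.2))
      (by rintro ⟨a1,a2,a3,a4⟩ ⟨b1,b2,b3,b4⟩ hab; simp_all [Prod.ext_iff]) (fun i => rfl)
  have split : Ic q (fun u => u.1) (fun u => u.2.1) (fun u => u.2.2)
      + Ic q' (fun u => u.1) (fun u => u.2.1) (fun u => u.2.2)
      = Ic p f g (fun i => (h i, e i)) := by
    simp only [Ic]
    linarith [s1, s2, s3, s4, r1, r2, r3]
  have hn : 0 ≤ Ic q' (fun u => u.1) (fun u => u.2.1) (fun u => u.2.2) :=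
    Ic_nonneg q' hq'0 _ _ _
  have hchain := Ic_cond_le p hp hmass f g h e
  linarith [split, hn, hchain]

end FiniteMain

section Bridge
variable {X : Type*} [MeasurableSpace X] [MeasurableSpace ι] [MeasurableSingletonClass ι]
lemma atoms_sum (ν : Measure X) [IsFiniteMeasure ν] {φ : X → ι} (hφ : Measurable φ)
    (t : Finset ι) : (ν (φ ⁻¹' ↑t)).toReal = ∑ v ∈ t, (ν (φ ⁻¹' {v})).toReal := by
  classical
  have hset : φ ⁻¹' ↑t = ⋃ v ∈ t, φ ⁻¹' {v} := by
    ext x; simp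
  rw [hset, measure_biUnion_finset ?_ (fun v _ => hφ (measurableSet_singleton v)),
    ENNReal.toReal_sum (fun v _ => measure_ne_top ν _)]
  intro a _ b _ hab
  refine Set.disjoint_left.2 fun x hxa hxb => hab ?_
  simp only [Set.mem_preimage, Set.mem_singleton_iff] at hxa hxb
  rw [← hxa, ← hxb]

lemma bridge (ν : Measure X) [IsFiniteMeasure ν] {φ : X → ι} (hφ : Measurable φ)
    (g : ι → κ) :
    finEntropy ν (fun x => g (φ x)) = Hs (fun v => (ν (φ ⁻¹' {v})).toReal) g := by
  classical
  rw [finEntropy, Hs]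
  refine Finset.sum_congr rfl fun k _ => ?_
  congr 1
  have hset : (fun x => g (φ x)) ⁻¹' {k} = φ ⁻¹' ↑(univ.filter (fun v => g v = k)) := by
    ext x; simp
  rw [hset, atoms_sum ν hφ]
  rfl

end Bridge

section Scaling
lemma fib_div (p : ι → ℝ) (f : ι → κ) (c : ℝ) (k : κ) :
    fib (fun i => p i / c) f k = fib p f k / c := by
  rw [fib, fib, Finset.sum_div]

lemma negMulLog_div (x : ℝ) {c : ℝ} (hc : 0 < c) :
    Real.negMulLog (x / c) = Real.negMulLog x / c + (x / c) * Real.log c := by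
  by_cases hx : x = 0
  · simp [hx]
  · rw [Real.negMulLog, Real.negMulLog, Real.log_div hx hc.ne']
    field_simp
    ring

lemma Hs_div (p : ι → ℝ) (f : ι → κ) {c : ℝ} (hc : 0 < c) :
    Hs (fun i => p i / c) f = Hs p f / c + ((∑ i, p i) / c) * Real.log c := by
  rw [Hs, Hs]
  rw [Finset.sum_congr rfl fun k _ => by rw [fib_div, negMulLog_div _ hc]]
  rw [Finset.sum_add_distrib, ← Finset.sum_div, ← Finset.sum_mul, ← Finset.sum_div, sum_fib]

end Scaling

lemma Ic_div {ι S T R : Type*} [Fintype ι] [Fintype S] [Fintype T] [Fintype R]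
    [DecidableEq S] [DecidableEq T] [DecidableEq R]
    (p : ι → ℝ) (f : ι → S) (g : ι → T) (h : ι → R) {c : ℝ} (hc : 0 < c) :
    Ic (fun i => p i / c) f g h = Ic p f g h / c := by
  simp only [Ic, Hs_div _ _ hc]
  ring

end FinEnt

open FinEnt Finset Real

set_option maxHeartbeats 1000000 in
/-- **Conditioning mutual information on a subset.** -/
theorem cond_mutualInfo_on_subset
    {X S T R : Type*} [MeasurableSpace X]
    [Fintype S] [MeasurableSpace S] [MeasurableSingletonClass S]
    [Fintype T] [MeasurableSpace T] [MeasurableSingletonClass T]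
    [Fintype R] [MeasurableSpace R] [MeasurableSingletonClass R]
    (μ : Measure X) [IsProbabilityMeasure μ]
    (s : X → S) (t : X → T) (r : X → R)
    (hs : Measurable s) (ht : Measurable t) (hr : Measurable r)
    (A : Set X) (hA : MeasurableSet A) (hApos : 0 < μ A) :
    (μ A).toReal * finCondMutualInfo (ProbabilityTheory.cond μ A) s t r
      ≤ Real.log 2 + finCondMutualInfo μ s t r := by
  classical
  have hA0 : μ A ≠ 0 := hApos.ne'
  have hAtop : μ A ≠ ⊤ := measure_ne_top μ A
  set a : ℝ := (μ A).toReal with ha_def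
  have ha : 0 < a := ENNReal.toReal_pos hA0 hAtop
  set e : X → Bool := fun x => if x ∈ A then true else false with he
  have hE : Measurable e := Measurable.ite hA measurable_const measurable_const
  set φ : X → S × T × R × Bool := fun x => (s x, t x, r x, e x) with hφdef
  have hφ : Measurable φ := hs.prodMk (ht.prodMk (hr.prodMk hE))
  set p : S × T × R × Bool → ℝ := fun v => (μ (φ ⁻¹' {v})).toReal with hp
  have hp0 : ∀ v, 0 ≤ p v := fun v => ENNReal.toReal_nonneg
  have hmass : ∑ v, p v = 1 := by
    have h1 := atoms_sum μ hφ (univ : Finset (S × T × R × Bool))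
    rw [Finset.coe_univ, Set.preimage_univ, measure_univ] at h1
    simpa [hp] using h1.symm
  have hRHS : finCondMutualInfo μ s t r
      = Ic p (fun v => v.1) (fun v => v.2.1) (fun v => v.2.2.1) := by
    rw [finCondMutualInfo, Ic, hp]
    rw [show finEntropy μ (fun x => (s x, r x))
        = Hs (fun v => (μ (φ ⁻¹' {v})).toReal) (fun v : S × T × R × Bool => (v.1, v.2.2.1)) from
          bridge μ hφ (fun v : S × T × R × Bool => (v.1, v.2.2.1)),
      show finEntropy μ (fun x => (t x, r x))
        = Hs (fun v => (μ (φ ⁻¹' {v})).toReal) (fun v : S × T × R × Bool => (v.2.1, v.2.2.1)) from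
          bridge μ hφ (fun v : S × T × R × Bool => (v.2.1, v.2.2.1)),
      show finEntropy μ (fun x => (s x, t x, r x))
        = Hs (fun v => (μ (φ ⁻¹' {v})).toReal)
            (fun v : S × T × R × Bool => (v.1, v.2.1, v.2.2.1)) from
          bridge μ hφ (fun v : S × T × R × Bool => (v.1, v.2.1, v.2.2.1)),
      show finEntropy μ r
        = Hs (fun v => (μ (φ ⁻¹' {v})).toReal) (fun v : S × T × R × Bool => v.2.2.1) from
          bridge μ hφ (fun v : S × T × R × Bool => v.2.2.1)]
  set ψ : X → S × T × R := fun x => (s x, t x, r x) with hψdef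
  have hψ : Measurable ψ := hs.prodMk (ht.prodMk hr)
  haveI : IsProbabilityMeasure (ProbabilityTheory.cond μ A) :=
    ProbabilityTheory.cond_isProbabilityMeasure hA0
  set pA : S × T × R → ℝ := fun u => ((ProbabilityTheory.cond μ A) (ψ ⁻¹' {u})).toReal with hpA
  have hLHS : finCondMutualInfo (ProbabilityTheory.cond μ A) s t r
      = Ic pA (fun u => u.1) (fun u => u.2.1) (fun u => u.2.2) := by
    rw [finCondMutualInfo, Ic, hpA]
    rw [show finEntropy (ProbabilityTheory.cond μ A) (fun x => (s x, r x))
        = Hs (fun u => ((ProbabilityTheory.cond μ A) (ψ ⁻¹' {u})).toReal)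
            (fun u : S × T × R => (u.1, u.2.2)) from bridge _ hψ (fun u : S × T × R => (u.1, u.2.2)),
      show finEntropy (ProbabilityTheory.cond μ A) (fun x => (t x, r x))
        = Hs (fun u => ((ProbabilityTheory.cond μ A) (ψ ⁻¹' {u})).toReal)
            (fun u : S × T × R => (u.2.1, u.2.2)) from bridge _ hψ (fun u : S × T × R => (u.2.1, u.2.2)),
      show finEntropy (ProbabilityTheory.cond μ A) (fun x => (s x, t x, r x))
        = Hs (fun u => ((ProbabilityTheory.cond μ A) (ψ ⁻¹' {u})).toReal)
            (fun u : S × T × R => (u.1, u.2.1, u.2.2)) from bridge _ hψ (fun u : S × T × R => (u.1, u.2.1, u.2.2)),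
      show finEntropy (ProbabilityTheory.cond μ A) r
        = Hs (fun u => ((ProbabilityTheory.cond μ A) (ψ ⁻¹' {u})).toReal)
            (fun u : S × T × R => u.2.2) from bridge _ hψ (fun u : S × T × R => u.2.2)]
  set q : S × T × R → ℝ :=
    fun u => fib p (fun v => ((v.1, v.2.1, v.2.2.1), v.2.2.2)) (u, true) with hqdef
  have hq : ∀ u : S × T × R, q u = p (u.1, u.2.1, u.2.2, true) := by
    intro u
    have hq1 : q u = ∑ i ∈ univ.filter (fun v : S × T × R × Bool =>
        ((v.1, v.2.1, v.2.2.1), v.2.2.2) = (u, true)), p i := rfl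
    rw [hq1]
    rw [show (univ.filter (fun v : S × T × R × Bool =>
        ((v.1, v.2.1, v.2.2.1), v.2.2.2) = (u, true))) = {(u.1, u.2.1, u.2.2, true)} by
      ext v
      rcases v with ⟨v1, v2, v3, v4⟩
      rcases u with ⟨u1, u2, u3⟩
      simp [Prod.ext_iff]
      tauto]
    exact Finset.sum_singleton _ _
  have hpAq : pA = fun u => q u / a := by
    funext u
    simp only [hpA]
    rw [ProbabilityTheory.cond_apply hA, hq u]
    have hset : A ∩ ψ ⁻¹' {u} = φ ⁻¹' {(u.1, u.2.1, u.2.2, true)} := by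
      ext x
      rcases u with ⟨u1, u2, u3⟩
      simp only [Set.mem_inter_iff, Set.mem_preimage, Set.mem_singleton_iff, hψdef, hφdef,
        Prod.ext_iff, he]
      constructor
      · rintro ⟨hxA, h1, h2, h3⟩
        simp_all
      · rintro ⟨h1, h2, h3, h4⟩
        by_cases hxA : x ∈ A <;> simp_all
    rw [hset, ENNReal.toReal_mul, ENNReal.toReal_inv, hp]
    rw [div_eq_inv_mul]
  rw [hLHS, hpAq, Ic_div _ _ _ _ ha, mul_div_cancel₀ _ ha.ne', hRHS]
  exact finite_main p hp0 hmass (fun v => v.1) (fun v => v.2.1) (fun v => v.2.2.1)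
    (fun v => v.2.2.2)
end

section
/- Suppose (X,μ) and (Z,ν) are standard Borel probability spaces, M > 0, ε ≥ 0, and z ↦ μ_z is a family of finite measures on X such that: z ↦ μ_z(A) is measurable for every measurable A ⊆ X; sup_z μ_z(X) < ∞; μ(A) = ∫_Z μ_z(A) ν(dz) for every measurable A; and μ_z(A) ≤ M·μ(A) + ε for every z ∈ Z and every measurable A. Suppose in addition that for each z ∈ Z, Y_z ⊆ X is a measurable set with μ_z(Y_z) = 1. Then for every α < 1 − ε there is a finite subset S ⊆ Z with |S| ≤ M/(1 − α − ε) and μ(⋃_{z∈S} Y_z) > α. -/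
open MeasureTheory
open scoped ENNReal

/-- **Greedy covering lemma.** If a probability measure `μ` on a standard Borel space
decomposes as `μ = ∫ μ_z dν(z)` with each `μ_z ≪_{M,ε} μ` and `μ_z(Y_z) = 1`, then for
every `α < 1 − ε` some union of at most `M/(1 − α − ε)` of the sets `Y_z` has
`μ`-measure greater than `α`. -/
theorem greedy_covering
    {X Z : Type*} [MeasurableSpace X] [StandardBorelSpace X]
    [MeasurableSpace Z] [StandardBorelSpace Z]
    (μ : Measure X) [IsProbabilityMeasure μ]
    (ν : Measure Z) [IsProbabilityMeasure ν]
    (μz : Z → Measure X)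
    (hmeas : ∀ A : Set X, MeasurableSet A → Measurable fun z => μz z A)
    (hbdd : (⨆ z, μz z Set.univ) < ⊤)
    (hdecomp : ∀ A : Set X, MeasurableSet A → μ A = ∫⁻ z, μz z A ∂ν)
    (M ε : ℝ) (hM : 0 < M) (hε : 0 ≤ ε)
    (habs : ∀ z, ∀ A : Set X, MeasurableSet A →
      μz z A ≤ ENNReal.ofReal M * μ A + ENNReal.ofReal ε)
    (Y : Z → Set X) (hYmeas : ∀ z, MeasurableSet (Y z))
    (hY : ∀ z, μz z (Y z) = 1) :
    ∀ α : ℝ, α < 1 - ε →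
      ∃ S : Finset Z, (S.card : ℝ) ≤ M / (1 - α - ε) ∧
        α < (μ (⋃ z ∈ S, Y z)).toReal := by
  classical
  intro α hα
  have h1αε : 0 < 1 - α - ε := by linarith
  rcases lt_or_ge α 0 with hneg | hα0
  · refine ⟨∅, ?_, ?_⟩
    · simp only [Finset.card_empty, Nat.cast_zero]
      positivity
    · simpa using hneg
  -- α ≥ 0 case
  have hα1 : α < 1 := by linarith
  have hZ : Nonempty Z := by
    by_contra h
    rw [not_nonempty_iff] at h
    have h1 : ν Set.univ = 1 := measure_univ
    rw [Set.univ_eq_empty_iff.mpr h, measure_empty] at h1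
    exact zero_ne_one h1
  obtain ⟨z0⟩ := hZ
  -- M ≥ 1 - ε
  have hM1 : 1 - ε ≤ M := by
    have h := habs z0 (Y z0) (hYmeas z0)
    rw [hY z0] at h
    have h2 : ENNReal.ofReal M * μ (Y z0) + ENNReal.ofReal ε
        ≤ ENNReal.ofReal M * 1 + ENNReal.ofReal ε := by
      gcongr
      exact prob_le_one
    rw [mul_one, ← ENNReal.ofReal_add hM.le hε] at h2
    have h3 : (1 : ℝ≥0∞) ≤ ENNReal.ofReal (M + ε) := le_trans h h2
    rw [ENNReal.one_le_ofReal] at h3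
    linarith
  set δr : ℝ := (1 - α - ε) / M with hδrdef
  have hδr : 0 < δr := by positivity
  have hUmeas : ∀ S : Finset Z, MeasurableSet (⋃ z ∈ S, Y z) :=
    fun S => S.measurableSet_biUnion (fun z _ => hYmeas z)
  -- key greedy step
  have key : ∀ S : Finset Z, (μ (⋃ z ∈ S, Y z)).toReal ≤ α →
      ∃ z ∉ S, δr ≤ (μ (Y z \ ⋃ w ∈ S, Y w)).toReal := by
    intro S hle
    set U : Set X := ⋃ z ∈ S, Y z with hUdef
    have hUm : MeasurableSet U := hUmeas S
    have hUfin : μ U ≠ ⊤ := measure_ne_top μ U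
    have hμU : μ U ≤ ENNReal.ofReal α := by
      rw [ENNReal.le_ofReal_iff_toReal_le hUfin hα0]
      exact hle
    -- find z1 with μz z1 U ≤ ofReal α
    obtain ⟨z1, hz1⟩ : ∃ z, μz z U ≤ ENNReal.ofReal α := by
      by_contra hc
      push_neg at hc
      have hlt : ∫⁻ _, ENNReal.ofReal α ∂ν < ∫⁻ z, μz z U ∂ν := by
        refine lintegral_strict_mono (IsProbabilityMeasure.ne_zero ν)
          ((hmeas U hUm).aemeasurable) ?_ (Filter.Eventually.of_forall hc)
        simp [lintegral_const]
      rw [lintegral_const, measure_univ, mul_one, ← hdecomp U hUm] at hlt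
      exact absurd hμU (not_le.mpr hlt)
    have hz1notS : z1 ∉ S := by
      intro hmem
      have hsub : Y z1 ⊆ U := Set.subset_biUnion_of_mem hmem
      have h1 : (1 : ℝ≥0∞) ≤ μz z1 U := (hY z1) ▸ measure_mono hsub
      have : (1 : ℝ≥0∞) ≤ ENNReal.ofReal α := h1.trans hz1
      rw [ENNReal.one_le_ofReal] at this
      linarith
    -- μz z1 (Y z1 \ U) is large
    have hcover : (1 : ℝ≥0∞) ≤ μz z1 (Y z1 \ U) + ENNReal.ofReal α := by
      calc (1 : ℝ≥0∞) = μz z1 (Y z1) := (hY z1).symm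
        _ ≤ μz z1 ((Y z1 \ U) ∪ U) := measure_mono (by
            intro x hx
            by_cases hxU : x ∈ U
            · exact Or.inr hxU
            · exact Or.inl ⟨hx, hxU⟩)
        _ ≤ μz z1 (Y z1 \ U) + μz z1 U := measure_union_le _ _
        _ ≤ μz z1 (Y z1 \ U) + ENNReal.ofReal α := by gcongr
    have hzfin : μz z1 (Y z1 \ U) ≠ ⊤ := by
      refine ne_top_of_le_ne_top ?_ ((habs z1 (Y z1 \ U) ((hYmeas z1).diff hUm)))
      refine ENNReal.add_ne_top.mpr ⟨?_, ENNReal.ofReal_ne_top⟩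
      exact ENNReal.mul_ne_top ENNReal.ofReal_ne_top (measure_ne_top μ _)
    set s : ℝ := (μz z1 (Y z1 \ U)).toReal with hsdef
    set t : ℝ := (μ (Y z1 \ U)).toReal with htdef
    have hs1 : 1 - α ≤ s := by
      have := ENNReal.toReal_mono (by
        exact ENNReal.add_ne_top.mpr ⟨hzfin, ENNReal.ofReal_ne_top⟩) hcover
      rw [ENNReal.toReal_one, ENNReal.toReal_add hzfin ENNReal.ofReal_ne_top,
        ENNReal.toReal_ofReal hα0] at this
      linarith
    have hst : s ≤ M * t + ε := by
      have h := habs z1 (Y z1 \ U) ((hYmeas z1).diff hUm)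
      have := ENNReal.toReal_mono (by
        exact ENNReal.add_ne_top.mpr ⟨ENNReal.mul_ne_top ENNReal.ofReal_ne_top
          (measure_ne_top μ _), ENNReal.ofReal_ne_top⟩) h
      rw [ENNReal.toReal_add (ENNReal.mul_ne_top ENNReal.ofReal_ne_top (measure_ne_top μ _))
        ENNReal.ofReal_ne_top, ENNReal.toReal_mul, ENNReal.toReal_ofReal hM.le,
        ENNReal.toReal_ofReal hε] at this
      exact this
    refine ⟨z1, hz1notS, ?_⟩
    rw [hδrdef, div_le_iff₀ hM]
    nlinarith
  -- measure additivity for insert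
  have hinsert : ∀ (z : Z) (S : Finset Z), z ∉ S →
      (μ (⋃ w ∈ insert z S, Y w)).toReal
        = (μ (⋃ w ∈ S, Y w)).toReal + (μ (Y z \ ⋃ w ∈ S, Y w)).toReal := by
    intro z S _
    have h1 : (⋃ w ∈ insert z S, Y w) = (⋃ w ∈ S, Y w) ∪ (Y z \ ⋃ w ∈ S, Y w) := by
      rw [Finset.set_biUnion_insert, Set.union_diff_self, Set.union_comm]
    rw [h1, measure_union disjoint_sdiff_self_right ((hYmeas z).diff (hUmeas S)),
      ENNReal.toReal_add (measure_ne_top μ _) (measure_ne_top μ _)]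
  -- induction
  have main : ∀ n : ℕ, ∃ S : Finset Z, S.card ≤ n ∧
      (α < (μ (⋃ z ∈ S, Y z)).toReal ∨
        (S.card = n ∧ (n : ℝ) * δr ≤ (μ (⋃ z ∈ S, Y z)).toReal)) := by
    intro n
    induction n with
    | zero =>
      refine ⟨∅, le_refl 0, Or.inr ⟨rfl, ?_⟩⟩
      simp [ENNReal.toReal_nonneg]
    | succ n ih =>
      obtain ⟨S, hcard, hS⟩ := ih
      rcases hS with h | ⟨hc, hm⟩
      · exact ⟨S, hcard.trans (Nat.le_succ n), Or.inl h⟩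
      · rcases lt_or_ge α ((μ (⋃ z ∈ S, Y z)).toReal) with h | h
        · exact ⟨S, hcard.trans (Nat.le_succ n), Or.inl h⟩
        · obtain ⟨z1, hz1S, hz1⟩ := key S h
          refine ⟨insert z1 S, ?_, Or.inr ⟨?_, ?_⟩⟩
          · rw [Finset.card_insert_of_notMem hz1S, hc]
          · rw [Finset.card_insert_of_notMem hz1S, hc]
          · rw [hinsert z1 S hz1S]
            push_cast
            nlinarith
  -- conclude
  obtain ⟨S, hcard, hS⟩ := main (Nat.floor (α / δr) + 1)
  have hn : α < ((Nat.floor (α / δr) + 1 : ℕ) : ℝ) * δr := by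
    have hf : α / δr < (Nat.floor (α / δr) : ℝ) + 1 := Nat.lt_floor_add_one _
    have := (div_lt_iff₀ hδr).mp hf
    push_cast
    linarith
  have hαS : α < (μ (⋃ z ∈ S, Y z)).toReal := by
    rcases hS with h | ⟨_, hm⟩
    · exact h
    · exact lt_of_lt_of_le hn hm
  refine ⟨S, ?_, hαS⟩
  have h1 : (S.card : ℝ) ≤ ((Nat.floor (α / δr) + 1 : ℕ) : ℝ) := by
    exact_mod_cast hcard
  have h2 : ((Nat.floor (α / δr) : ℕ) : ℝ) ≤ α / δr := Nat.floor_le (by positivity)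
  have h3 : α / δr + 1 ≤ M / (1 - α - ε) := by
    rw [hδrdef, div_div_eq_mul_div]
    rw [div_add' _ _ _ h1αε.ne', div_le_div_iff₀ h1αε h1αε]
    nlinarith [mul_nonneg (mul_nonneg (by linarith : (0:ℝ) ≤ M - (1 - ε))
        (by linarith : (0:ℝ) ≤ 1 - α)) h1αε.le,
      mul_nonneg (mul_nonneg hε hα0) h1αε.le]
  push_cast at h1
  linarith
end

section
/- Let c, L, a, δ > 0. Let X and Y be standard Borel spaces, each equipped with a pair of totally bounded Borel-measurable pseudometrics (d₁^X, d₂^X) and (d₁^Y, d₂^Y), let μ be a finite Borel measure on X, and let Φ : X → Y be a Borel map which is c-almost L-pair-Lipschitz, i.e. d_i^Y(Φ x, Φ x′) ≤ L·d_i^X(x,x′) + c for i = 1,2 and all x, x′ ∈ X. Then bicov_a((X, d₁^X, d₂^X, μ), δ) ≥ bicov_a((Y, d₁^Y, d₂^Y, Φ_*μ), L·δ + c). -/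
open MeasureTheory

/-- A totally bounded Borel-measurable pseudometric. -/
structure IsTBBorelPseudoMetric {X : Type*} [MeasurableSpace X] (d : X → X → ℝ) : Prop where
  refl : ∀ x, d x x = 0
  symm : ∀ x y, d x y = d y x
  triangle : ∀ x y z, d x z ≤ d x y + d y z
  measurable : Measurable (Function.uncurry d)
  totallyBounded : ∀ ε : ℝ, 0 < ε → ∃ F : Finset X, ∀ x, ∃ y ∈ F, d x y < ε

/-- Open `δ`-neighbourhood of a set for a pseudometric. -/
def pball {X : Type*} (d : X → X → ℝ) (δ : ℝ) (F : Set X) : Set X :=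
  {x' | ∃ x ∈ F, d x x' < δ}

/-- The `a`-partial `δ`-bi-covering number of a pair-pseudometric measure space:
the least cardinality of a finite `F ⊆ X` whose `δ`-bi-neighbourhood
`B^{d₂}_δ(B^{d₁}_δ(F))` has (outer) measure greater than `a`. -/
noncomputable def bicov {X : Type*} [MeasurableSpace X]
    (d₁ d₂ : X → X → ℝ) (μ : Measure X) (a δ : ℝ) : ℕ∞ :=
  sInf {n : ℕ∞ | ∃ F : Finset X, (F.card : ℕ∞) = n ∧
    ENNReal.ofReal a < μ (pball d₂ δ (pball d₁ δ ↑F))}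

/-- **Monotonicity of partial bi-covering numbers under almost pair-Lipschitz maps.** -/
theorem bicov_le_of_almost_pair_lipschitz
    {X Y : Type*} [MeasurableSpace X] [StandardBorelSpace X]
    [MeasurableSpace Y] [StandardBorelSpace Y]
    (d₁X d₂X : X → X → ℝ) (d₁Y d₂Y : Y → Y → ℝ)
    (h₁X : IsTBBorelPseudoMetric d₁X) (h₂X : IsTBBorelPseudoMetric d₂X)
    (h₁Y : IsTBBorelPseudoMetric d₁Y) (h₂Y : IsTBBorelPseudoMetric d₂Y)
    (μ : Measure X) [IsFiniteMeasure μ]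
    (c L a δ : ℝ) (hc : 0 < c) (hL : 0 < L) (ha : 0 < a) (hδ : 0 < δ)
    (Φ : X → Y) (hΦ : Measurable Φ)
    (hLip₁ : ∀ x x', d₁Y (Φ x) (Φ x') ≤ L * d₁X x x' + c)
    (hLip₂ : ∀ x x', d₂Y (Φ x) (Φ x') ≤ L * d₂X x x' + c) :
    bicov d₁Y d₂Y (Measure.map Φ μ) a (L * δ + c) ≤ bicov d₁X d₂X μ a δ := by

  classical
  apply le_sInf
  rintro n ⟨F, rfl, hF⟩
  have hsub : pball d₂X δ (pball d₁X δ ↑F) ⊆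
      Φ ⁻¹' (pball d₂Y (L * δ + c) (pball d₁Y (L * δ + c) ↑(F.image Φ))) := by
    rintro x'' ⟨x', ⟨x, hxF, hd1⟩, hd2⟩
    refine ⟨Φ x', ⟨Φ x, Finset.mem_image_of_mem Φ hxF, ?_⟩, ?_⟩
    · calc d₁Y (Φ x) (Φ x') ≤ L * d₁X x x' + c := hLip₁ x x'
        _ < L * δ + c := by nlinarith
    · calc d₂Y (Φ x') (Φ x'') ≤ L * d₂X x' x'' + c := hLip₂ x' x''
        _ < L * δ + c := by nlinarith
  have hμ : ENNReal.ofReal a <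
      (Measure.map Φ μ) (pball d₂Y (L * δ + c) (pball d₁Y (L * δ + c) ↑(F.image Φ))) := by
    calc ENNReal.ofReal a < μ (pball d₂X δ (pball d₁X δ ↑F)) := hF
      _ ≤ μ (Φ ⁻¹' (pball d₂Y (L * δ + c) (pball d₁Y (L * δ + c) ↑(F.image Φ)))) :=
          measure_mono hsub
      _ ≤ _ := Measure.le_map_apply hΦ.aemeasurable _
  calc sInf {n : ℕ∞ | ∃ G : Finset Y, (G.card : ℕ∞) = n ∧
        ENNReal.ofReal a < (Measure.map Φ μ) (pball d₂Y (L * δ + c) (pball d₁Y (L * δ + c) ↑G))}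
      ≤ ((F.image Φ).card : ℕ∞) := sInf_le ⟨F.image Φ, rfl, hμ⟩
    _ ≤ (F.card : ℕ∞) := by exact_mod_cast Finset.card_image_le
end

section
/- Let (X, d^X, μ, T) and (Y, d^Y, ν, S) be compact model probability-preserving systems, let Φ : X → Y be a Borel factor map (Φ_*μ = ν and Φ ∘ T = S ∘ Φ μ-almost everywhere), and let ε > 0. Then there is L < ∞ such that for all sufficiently large N ∈ ℕ there is a compact subset X₀ ⊆ X with μ(X₀) > 1 − ε on which Φ is continuous and (εN)-almost L-pair-Lipschitz from (X₀, d^X_{[-N;0)}, d^X_{[0;N)}) to (Y, d^Y_{[-N;0)}, d^Y_{[0;N)}); that is, for all x, x′ ∈ X₀ and both I = [-N;0) and I = [0;N), one has d^Y_I(Φ x, Φ x′) ≤ L·d^X_I(x,x′) + εN. -/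
open MeasureTheory

/-- The marginal pseudometric `d^X_I(x,x′) := ∑_{n∈I} d(T^n x, T^n x′)` of a
compact model system, for a finite set `I ⊆ ℤ`. -/
noncomputable def margMetric {X : Type*} [MetricSpace X] (T : Equiv.Perm X)
    (I : Finset ℤ) (x x' : X) : ℝ :=
  ∑ n ∈ I, dist ((T ^ n) x) ((T ^ n) x')

section helpers
open Set ENNReal


lemma lusin_step {X Y : Type*} [MetricSpace X] [CompactSpace X] [MeasurableSpace X] [BorelSpace X]
    [MetricSpace Y] [CompactSpace Y] [MeasurableSpace Y] [BorelSpace Y]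
    (μ : Measure X) [IsFiniteMeasure μ] (Φ : X → Y) (hΦ : Measurable Φ)
    {ε : ℝ≥0∞} (hε : ε ≠ 0) {r : ℝ} (hr : 0 < r) :
    ∃ F : Set X, IsClosed F ∧ μ Fᶜ ≤ ε ∧
      ∀ x ∈ F, ∃ U : Set X, IsOpen U ∧ x ∈ U ∧ ∀ x' ∈ F ∩ U, dist (Φ x) (Φ x') ≤ 2 * r := by
  classical
  obtain ⟨t, htf, htcover⟩ := Metric.totallyBounded_iff.mp
    (isCompact_univ : IsCompact (univ : Set Y)).totallyBounded r hr
  set s := htf.toFinset with hs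
  have hcards : ((s.card : ℝ≥0∞) + 1) ≠ 0 := by simp
  have hcardt : ((s.card : ℝ≥0∞) + 1) ≠ ∞ := by simp
  set ε₀ := ε / ((s.card : ℝ≥0∞) + 1) with hε₀
  have hε₀0 : ε₀ ≠ 0 := ENNReal.div_ne_zero.mpr ⟨hε, hcardt⟩
  have hchoice : ∀ y : Y, ∃ C : Set X, C ⊆ Φ ⁻¹' Metric.ball y r ∧ IsClosed C ∧
      μ (Φ ⁻¹' Metric.ball y r \ C) < ε₀ :=
    fun y => (hΦ measurableSet_ball).exists_isClosed_diff_lt (measure_ne_top μ _) hε₀0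
  choose C hC1 hC2 hC3 using hchoice
  refine ⟨⋃ y ∈ s, C y, s.finite_toSet.isClosed_biUnion fun y _ => hC2 y, ?_, ?_⟩
  · have hsub : (⋃ y ∈ s, C y)ᶜ ⊆ ⋃ y ∈ s, (Φ ⁻¹' Metric.ball y r \ C y) := by
      intro x hx
      obtain ⟨y, hyt, hyb⟩ := mem_iUnion₂.mp (htcover (mem_univ (Φ x)))
      have hys : y ∈ s := htf.mem_toFinset.mpr hyt
      exact mem_iUnion₂.mpr ⟨y, hys, hyb, fun hC => hx (mem_iUnion₂.mpr ⟨y, hys, hC⟩)⟩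
    calc μ (⋃ y ∈ s, C y)ᶜ ≤ ∑ y ∈ s, μ (Φ ⁻¹' Metric.ball y r \ C y) :=
          (measure_mono hsub).trans (measure_biUnion_finset_le s _)
      _ ≤ ∑ _y ∈ s, ε₀ := Finset.sum_le_sum fun y _ => (hC3 y).le
      _ = (s.card : ℝ≥0∞) * ε₀ := by rw [Finset.sum_const, nsmul_eq_mul]
      _ ≤ ((s.card : ℝ≥0∞) + 1) * ε₀ := mul_le_mul_left le_self_add _
      _ = ε := ENNReal.mul_div_cancel hcards hcardt
  · intro x hx
    obtain ⟨y₀, hy₀, hxy₀⟩ := mem_iUnion₂.mp hx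
    refine ⟨(⋃ y ∈ {y : Y | y ∈ s ∧ x ∉ C y}, C y)ᶜ, ?_, ?_, ?_⟩
    · exact ((s.finite_toSet.subset (fun y hy => hy.1)).isClosed_biUnion
        fun y hy => hC2 y).isOpen_compl
    · intro hmem
      obtain ⟨y, hy, hxy⟩ := mem_iUnion₂.mp hmem
      exact hy.2 hxy
    · rintro x' ⟨hx'F, hx'U⟩
      obtain ⟨y₁, hy₁, hx'y₁⟩ := mem_iUnion₂.mp hx'F
      have hxy₁ : x ∈ C y₁ := by
        by_contra hxn
        exact hx'U (mem_iUnion₂.mpr ⟨y₁, ⟨hy₁, hxn⟩, hx'y₁⟩)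
      have h1 : dist (Φ x) y₁ < r := Metric.mem_ball.mp (hC1 y₁ hxy₁)
      have h2 : dist (Φ x') y₁ < r := Metric.mem_ball.mp (hC1 y₁ hx'y₁)
      calc dist (Φ x) (Φ x') ≤ dist (Φ x) y₁ + dist y₁ (Φ x') := dist_triangle _ _ _
        _ ≤ r + r := by rw [dist_comm y₁]; exact add_le_add h1.le h2.le
        _ = 2 * r := by ring

lemma lusin_cont {X Y : Type*} [MetricSpace X] [CompactSpace X] [MeasurableSpace X] [BorelSpace X]
    [MetricSpace Y] [CompactSpace Y] [MeasurableSpace Y] [BorelSpace Y]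
    (μ : Measure X) [IsFiniteMeasure μ] (Φ : X → Y) (hΦ : Measurable Φ)
    {δ : ℝ≥0∞} (hδ : δ ≠ 0) :
    ∃ K : Set X, IsClosed K ∧ μ Kᶜ ≤ δ ∧ ContinuousOn Φ K := by
  have hstep : ∀ m : ℕ, ∃ F : Set X, IsClosed F ∧ μ Fᶜ ≤ δ / 2 / 2 ^ m ∧
      ∀ x ∈ F, ∃ U, IsOpen U ∧ x ∈ U ∧ ∀ x' ∈ F ∩ U,
        dist (Φ x) (Φ x') ≤ 2 * (1 / (m + 1)) := by
    intro m
    refine lusin_step μ Φ hΦ ?_ (by positivity)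
    exact ENNReal.div_ne_zero.mpr
      ⟨ENNReal.div_ne_zero.mpr ⟨hδ, ENNReal.ofNat_ne_top⟩, ENNReal.pow_ne_top ENNReal.ofNat_ne_top⟩
  choose F hFcl hFμ hFprop using hstep
  refine ⟨⋂ m, F m, isClosed_iInter hFcl, ?_, ?_⟩
  · rw [compl_iInter]
    calc μ (⋃ m, (F m)ᶜ) ≤ ∑' m, μ (F m)ᶜ := measure_iUnion_le _
      _ ≤ ∑' m : ℕ, δ / 2 / 2 ^ m := ENNReal.tsum_le_tsum hFμ
      _ = δ := by
          have : ∀ m : ℕ, δ / 2 / 2 ^ m = δ / 2 * 2⁻¹ ^ m := by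
            intro m
            rw [div_eq_mul_inv, ENNReal.inv_pow]
          simp_rw [this]
          rw [ENNReal.tsum_mul_left, ENNReal.tsum_geometric, ENNReal.one_sub_inv_two, inv_inv,
            div_eq_mul_inv, mul_assoc, ENNReal.inv_mul_cancel two_ne_zero ENNReal.ofNat_ne_top,
            mul_one]
  · intro x hx
    rw [Metric.continuousWithinAt_iff]
    intro ε' hε'
    obtain ⟨m, hm⟩ := exists_nat_one_div_lt (show (0:ℝ) < ε' / 2 by linarith)
    obtain ⟨U, hUo, hxU, hU⟩ := hFprop m x (mem_iInter.mp hx m)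
    obtain ⟨ρ, hρ, hball⟩ := Metric.isOpen_iff.mp hUo x hxU
    refine ⟨ρ, hρ, fun y hy hdy => ?_⟩
    have h := hU y ⟨mem_iInter.mp hy m, hball (Metric.mem_ball.mpr hdy)⟩
    rw [dist_comm]
    calc dist (Φ x) (Φ y) ≤ 2 * (1 / (m + 1)) := h
      _ < 2 * (ε' / 2) := by
          have : (0:ℝ) < (m:ℝ) + 1 := by positivity
          nlinarith
      _ = ε' := by ring

lemma iter_mp {X : Type*} [MeasurableSpace X] (T : Equiv.Perm X) (μ : Measure X)
    (hT : MeasurePreserving ⇑T μ μ)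
    (hTinv : MeasurePreserving ⇑T.symm μ μ) (n : ℤ) : MeasurePreserving ⇑(T ^ n) μ μ := by
  induction n using Int.induction_on with
  | zero => simpa using MeasurePreserving.id μ
  | succ i ih =>
      have h : ⇑(T ^ ((i : ℤ) + 1)) = ⇑(T ^ (i : ℤ)) ∘ ⇑T := by
        funext x; simp [zpow_add_one, Equiv.Perm.mul_apply]
      rw [h]; exact ih.comp hT
  | pred i ih =>
      have h : ⇑(T ^ (-(i : ℤ) - 1)) = ⇑(T ^ (-(i : ℤ))) ∘ ⇑T.symm := by
        funext x; simp [zpow_sub_one, Equiv.Perm.mul_apply, Equiv.Perm.inv_def]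
      rw [h]; exact ih.comp hTinv

lemma iter_cont {X : Type*} [TopologicalSpace X] (T : Equiv.Perm X) (hTc : Continuous ⇑T)
    (hTc' : Continuous ⇑T.symm) (n : ℤ) : Continuous ⇑(T ^ n) := by
  induction n using Int.induction_on with
  | zero => simpa using continuous_id
  | succ i ih =>
      have h : ⇑(T ^ ((i : ℤ) + 1)) = ⇑(T ^ (i : ℤ)) ∘ ⇑T := by
        funext x; simp [zpow_add_one, Equiv.Perm.mul_apply]
      rw [h]; exact ih.comp hTc
  | pred i ih =>
      have h : ⇑(T ^ (-(i : ℤ) - 1)) = ⇑(T ^ (-(i : ℤ))) ∘ ⇑T.symm := by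
        funext x; simp [zpow_sub_one, Equiv.Perm.mul_apply, Equiv.Perm.inv_def]
      rw [h]; exact ih.comp hTc'


end helpers

section main
open Set ENNReal
set_option maxHeartbeats 1000000

/-- **Factor maps are almost pair-Lipschitz on a large compact set.** -/
theorem factor_map_almost_pair_lipschitz
    {X Y : Type*}
    [MetricSpace X] [CompactSpace X] [MeasurableSpace X] [BorelSpace X]
    [MetricSpace Y] [CompactSpace Y] [MeasurableSpace Y] [BorelSpace Y]
    (T : Equiv.Perm X) (hTc : Continuous ⇑T) (hTc' : Continuous ⇑T.symm)
    (S : Equiv.Perm Y) (hSc : Continuous ⇑S) (hSc' : Continuous ⇑S.symm)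
    (μ : Measure X) [IsProbabilityMeasure μ] (hT : MeasurePreserving ⇑T μ μ)
    (ν : Measure Y) [IsProbabilityMeasure ν] (hS : MeasurePreserving ⇑S ν ν)
    (Φ : X → Y) (hΦ : Measurable Φ) (hmap : Measure.map Φ μ = ν)
    (hequiv : ∀ᵐ x ∂μ, Φ (T x) = S (Φ x))
    (ε : ℝ) (hε : 0 < ε) :
    ∃ L : ℝ, ∃ N₀ : ℕ, ∀ N : ℕ, N₀ ≤ N →
      ∃ X₀ : Set X, IsCompact X₀ ∧ 1 - ε < (μ X₀).toReal ∧ ContinuousOn Φ X₀ ∧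
        ∀ x ∈ X₀, ∀ x' ∈ X₀,
          margMetric S (Finset.Ico (-(N : ℤ)) 0) (Φ x) (Φ x')
              ≤ L * margMetric T (Finset.Ico (-(N : ℤ)) 0) x x' + ε * N ∧
          margMetric S (Finset.Ico (0 : ℤ) (N : ℤ)) (Φ x) (Φ x')
              ≤ L * margMetric T (Finset.Ico (0 : ℤ) (N : ℤ)) x x' + ε * N := by
  classical
  -- constants
  set D := Metric.diam (univ : Set Y) with hD_def
  have hD : 0 ≤ D := Metric.diam_nonneg
  have hdistD : ∀ y y' : Y, dist y y' ≤ D := fun y y' =>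
    Metric.dist_le_diam_of_mem isCompact_univ.isBounded trivial trivial
  set η := ε / (4 * (D + 1)) with hη_def
  have hη : 0 < η := by positivity
  set δ' := ε / 2 * η / (η + 2) with hδ'_def
  have hδ' : 0 < δ' := by positivity
  -- the inverse is measure preserving
  have hTinv : MeasurePreserving ⇑T.symm μ μ := by
    let Tm : X ≃ᵐ X := Homeomorph.toMeasurableEquiv ⟨T, hTc, hTc'⟩
    exact MeasurePreserving.symm Tm hT
  have hTiter := iter_mp T μ hT hTinv
  have hTiterC := iter_cont T hTc hTc'
  -- a.e. equivariance for all powers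
  have hinv : ∀ᵐ x ∂μ, Φ (T.symm x) = S.symm (Φ x) := by
    filter_upwards [hTinv.quasiMeasurePreserving.ae hequiv] with x hx
    rw [Equiv.apply_symm_apply] at hx
    exact ((Equiv.symm_apply_eq S).mpr hx).symm
  have hequivZ : ∀ n : ℤ, ∀ᵐ x ∂μ, Φ ((T ^ n) x) = (S ^ n) (Φ x) := by
    intro n
    induction n using Int.induction_on with
    | zero => filter_upwards with x; simp
    | succ i ih =>
        filter_upwards [hT.quasiMeasurePreserving.ae ih, hequiv] with x h1 h2
        have hTx : (T ^ ((i : ℤ) + 1)) x = (T ^ (i : ℤ)) (T x) := by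
          simp [zpow_add_one, Equiv.Perm.mul_apply]
        have hSx : (S ^ ((i : ℤ) + 1)) (Φ x) = (S ^ (i : ℤ)) (S (Φ x)) := by
          simp [zpow_add_one, Equiv.Perm.mul_apply]
        rw [hTx, h1, h2, hSx]
    | pred i ih =>
        filter_upwards [hTinv.quasiMeasurePreserving.ae ih, hinv] with x h1 h2
        have hTx : (T ^ (-(i : ℤ) - 1)) x = (T ^ (-(i : ℤ))) (T.symm x) := by
          simp [zpow_sub_one, Equiv.Perm.mul_apply, Equiv.Perm.inv_def]
        have hSx : (S ^ (-(i : ℤ) - 1)) (Φ x) = (S ^ (-(i : ℤ))) (S.symm (Φ x)) := by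
          simp [zpow_sub_one, Equiv.Perm.mul_apply, Equiv.Perm.inv_def]
        rw [hTx, h1, h2, hSx]
  set G : Set X := {x | ∀ n : ℤ, Φ ((T ^ n) x) = (S ^ n) (Φ x)} with hG_def
  have hGnull : μ Gᶜ = 0 := by
    have hGae : ∀ᵐ x ∂μ, x ∈ G := ae_all_iff.mpr hequivZ
    rwa [ae_iff] at hGae
  set G' : Set X := (toMeasurable μ Gᶜ)ᶜ with hG'_def
  have hG'meas : MeasurableSet G' := (measurableSet_toMeasurable μ Gᶜ).compl
  have hG'sub : G' ⊆ G := fun x hx => by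
    by_contra h
    exact hx (subset_toMeasurable μ Gᶜ h)
  have hG'c : μ G'ᶜ = 0 := by
    rw [hG'_def, compl_compl, measure_toMeasurable]; exact hGnull
  have hofR : ENNReal.ofReal (δ' / 2) ≠ 0 := (ENNReal.ofReal_pos.mpr (by linarith)).ne'
  obtain ⟨C₁, hC₁cl, hC₁μ, hC₁cont⟩ := lusin_cont μ Φ hΦ hofR
  obtain ⟨C₂, hC₂sub, hC₂cl, hC₂μ⟩ :=
    hG'meas.exists_isClosed_diff_lt (measure_ne_top μ _) hofR
  set K := C₁ ∩ C₂ with hK_def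
  have hKcl : IsClosed K := hC₁cl.inter hC₂cl
  have hKG : K ⊆ G := fun x hx => hG'sub (hC₂sub hx.2)
  have hKcont : ContinuousOn Φ K := hC₁cont.mono inter_subset_left
  have hKμ : μ Kᶜ ≤ ENNReal.ofReal δ' := by
    have h2 : μ C₂ᶜ ≤ ENNReal.ofReal (δ' / 2) := by
      have hsub : C₂ᶜ ⊆ G'ᶜ ∪ (G' \ C₂) := by
        intro x hx
        by_cases hxG' : x ∈ G'
        · exact Or.inr ⟨hxG', hx⟩
        · exact Or.inl hxG'
      calc μ C₂ᶜ ≤ μ G'ᶜ + μ (G' \ C₂) := (measure_mono hsub).trans (measure_union_le _ _)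
        _ ≤ 0 + ENNReal.ofReal (δ' / 2) := add_le_add hG'c.le hC₂μ.le
        _ = ENNReal.ofReal (δ' / 2) := zero_add _
    calc μ Kᶜ = μ (C₁ᶜ ∪ C₂ᶜ) := by rw [hK_def, compl_inter]
      _ ≤ μ C₁ᶜ + μ C₂ᶜ := measure_union_le _ _
      _ ≤ ENNReal.ofReal (δ' / 2) + ENNReal.ofReal (δ' / 2) := add_le_add hC₁μ h2
      _ = ENNReal.ofReal δ' := by
          rw [← ENNReal.ofReal_add (by linarith) (by linarith)]; norm_num
  -- uniform continuity on K
  obtain ⟨δ₀, hδ₀, hunif⟩ := Metric.uniformContinuousOn_iff.mp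
    (hKcl.isCompact.uniformContinuousOn_of_continuous hKcont) (ε / 2) (by linarith)
  refine ⟨D / δ₀, 1, ?_⟩
  intro N hN
  have hN0 : (0:ℝ) ≤ N := Nat.cast_nonneg N
  have hNR : (1:ℝ) ≤ N := by exact_mod_cast hN
  set L := D / δ₀ with hL_def
  have hL : 0 ≤ L := div_nonneg hD hδ₀.le
  have main : ∀ I : Finset ℤ, I.card = N → ∃ A : Set X, IsClosed A ∧
      μ Aᶜ ≤ ENNReal.ofReal (δ' / η) ∧
      ∀ x ∈ K, x ∈ A → ∀ x' ∈ K, x' ∈ A →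
        margMetric S I (Φ x) (Φ x') ≤ L * margMetric T I x x' + ε * N := by
    intro I hIcard
    set ind : ℤ → X → ℝ := fun n => ((⇑(T ^ n)) ⁻¹' Kᶜ).indicator (fun _ => (1:ℝ)) with hind_def
    have hind_nonneg : ∀ n x, 0 ≤ ind n x := fun n x =>
      Set.indicator_nonneg (fun _ _ => zero_le_one) x
    set Fr : X → ℝ := fun x => ∑ n ∈ I, ind n x with hFr_def
    have hFr_nonneg : ∀ x, 0 ≤ Fr x := fun x =>
      Finset.sum_nonneg fun n _ => hind_nonneg n x
    have hpre : ∀ n : ℤ, MeasurableSet ((⇑(T ^ n)) ⁻¹' Kᶜ) := fun n =>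
      (hTiterC n).measurable hKcl.measurableSet.compl
    refine ⟨{x | Fr x ≤ η * N}, ?_, ?_, ?_⟩
    · -- closedness via lower semicontinuity
      have hlsc : LowerSemicontinuous Fr := lowerSemicontinuous_sum fun n _ =>
        ((hKcl.isOpen_compl.preimage (hTiterC n)).lowerSemicontinuous_indicator zero_le_one)
      have : {x | Fr x ≤ η * N} = {x | η * N < Fr x}ᶜ := by
        ext x; simp [not_lt]
      rw [this]
      exact (isOpen_iff_mem_nhds.mpr fun x hx => hlsc x (η * N) hx).isClosed_compl
    · -- Markov inequality
      set Fe : X → ℝ≥0∞ :=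
        fun x => ∑ n ∈ I, ((⇑(T ^ n)) ⁻¹' Kᶜ).indicator (fun _ => (1:ℝ≥0∞)) x with hFe_def
      have hFe_meas : Measurable Fe :=
        Finset.measurable_sum _ fun n _ => measurable_const.indicator (hpre n)
      have hFe_int : ∫⁻ x, Fe x ∂μ = (N : ℝ≥0∞) * μ Kᶜ := by
        rw [hFe_def, lintegral_finset_sum _ fun n _ => measurable_const.indicator (hpre n)]
        have heach : ∀ n ∈ I,
            ∫⁻ x, ((⇑(T ^ n)) ⁻¹' Kᶜ).indicator (fun _ => (1:ℝ≥0∞)) x ∂μ = μ Kᶜ := by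
          intro n _
          rw [lintegral_indicator_const (hpre n), one_mul,
            (hTiter n).measure_preimage hKcl.measurableSet.compl.nullMeasurableSet]
        rw [Finset.sum_congr rfl heach, Finset.sum_const, nsmul_eq_mul, hIcard]
      have hFeFr : ∀ x, Fe x = ENNReal.ofReal (Fr x) := by
        intro x
        simp only [hFe_def, hFr_def, hind_def]
        rw [ENNReal.ofReal_sum_of_nonneg
          fun n _ => Set.indicator_nonneg (fun _ _ => zero_le_one) x]
        refine Finset.sum_congr rfl fun n _ => ?_
        by_cases h : (T ^ n) x ∈ K
        · simp [Set.indicator_apply, h]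
        · simp [Set.indicator_apply, h]
      have hηN : (0:ℝ) < η * N := by nlinarith
      have hsubset : {x | Fr x ≤ η * N}ᶜ ⊆ {x | ENNReal.ofReal (η * N) ≤ Fe x} := by
        intro x hx
        have hlt : η * N < Fr x := not_le.mp hx
        rw [Set.mem_setOf_eq, hFeFr x]
        exact ENNReal.ofReal_le_ofReal hlt.le
      have hNne0 : (N : ℝ≥0∞) ≠ 0 := Nat.cast_ne_zero.mpr (by omega)
      calc μ {x | Fr x ≤ η * N}ᶜ ≤ μ {x | ENNReal.ofReal (η * N) ≤ Fe x} := measure_mono hsubset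
        _ ≤ (∫⁻ x, Fe x ∂μ) / ENNReal.ofReal (η * N) :=
            meas_ge_le_lintegral_div hFe_meas.aemeasurable
              (ENNReal.ofReal_pos.mpr hηN).ne' ENNReal.ofReal_ne_top
        _ = ((N : ℝ≥0∞) * μ Kᶜ) / ((N : ℝ≥0∞) * ENNReal.ofReal η) := by
            rw [hFe_int, ENNReal.ofReal_mul hη.le, ENNReal.ofReal_natCast, mul_comm (ENNReal.ofReal η)]
        _ ≤ ((N : ℝ≥0∞) * ENNReal.ofReal δ') / ((N : ℝ≥0∞) * ENNReal.ofReal η) := by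
            gcongr
        _ = ENNReal.ofReal δ' / ENNReal.ofReal η :=
            ENNReal.mul_div_mul_left _ _ hNne0 (ENNReal.natCast_ne_top N)
        _ = ENNReal.ofReal (δ' / η) := (ENNReal.ofReal_div_of_pos hη).symm
    · -- the Lipschitz estimate
      intro x hxK hxA x' hx'K hx'A
      have hxG := hKG hxK
      have hx'G := hKG hx'K
      have hrw : margMetric S I (Φ x) (Φ x')
          = ∑ n ∈ I, dist (Φ ((T ^ n) x)) (Φ ((T ^ n) x')) := by
        unfold margMetric
        exact Finset.sum_congr rfl fun n _ => by rw [hxG n, hx'G n]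
      have key : ∀ n ∈ I, dist (Φ ((T ^ n) x)) (Φ ((T ^ n) x')) ≤
          L * dist ((T ^ n) x) ((T ^ n) x') + ε / 2 + D * (ind n x + ind n x') := by
        intro n _
        set a := (T ^ n) x with ha_def
        set b := (T ^ n) x' with hb_def
        have hd0 : 0 ≤ dist a b := dist_nonneg
        have hLd : 0 ≤ L * dist a b := mul_nonneg hL hd0
        by_cases haK : a ∈ K
        · by_cases hbK : b ∈ K
          · have hxpre : x ∉ (⇑(T ^ n)) ⁻¹' Kᶜ := by
              simp only [Set.mem_preimage, Set.mem_compl_iff, not_not]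
              exact haK
            have hx'pre : x' ∉ (⇑(T ^ n)) ⁻¹' Kᶜ := by
              simp only [Set.mem_preimage, Set.mem_compl_iff, not_not]
              exact hbK
            have hia : ind n x = 0 := by
              simp only [hind_def]; exact Set.indicator_of_notMem hxpre _
            have hib : ind n x' = 0 := by
              simp only [hind_def]; exact Set.indicator_of_notMem hx'pre _
            rw [hia, hib]
            by_cases hdist : dist a b < δ₀
            · have h1 := (hunif a haK b hbK hdist).le
              linarith
            · push_neg at hdist
              have h1 : dist (Φ a) (Φ b) ≤ D := hdistD _ _
              have h2 : D = L * δ₀ := by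
                rw [hL_def]; field_simp
              have h3 : L * δ₀ ≤ L * dist a b := mul_le_mul_of_nonneg_left hdist hL
              linarith
          · have hx'pre : x' ∈ (⇑(T ^ n)) ⁻¹' Kᶜ := by
              simp only [Set.mem_preimage, Set.mem_compl_iff]
              exact hbK
            have hib : ind n x' = 1 := by
              simp only [hind_def]; exact Set.indicator_of_mem hx'pre _
            have h1 : dist (Φ a) (Φ b) ≤ D := hdistD _ _
            have h2 := hind_nonneg n x
            nlinarith
        · have hxpre : x ∈ (⇑(T ^ n)) ⁻¹' Kᶜ := by
              simp only [Set.mem_preimage, Set.mem_compl_iff]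
              exact haK
          have hia : ind n x = 1 := by
            simp only [hind_def]; exact Set.indicator_of_mem hxpre _
          have h1 : dist (Φ a) (Φ b) ≤ D := hdistD _ _
          have h2 := hind_nonneg n x'
          nlinarith
      have hsum : ∑ n ∈ I, dist (Φ ((T ^ n) x)) (Φ ((T ^ n) x'))
          ≤ L * margMetric T I x x' + (N : ℝ) * (ε / 2) + D * (Fr x + Fr x') := by
        calc ∑ n ∈ I, dist (Φ ((T ^ n) x)) (Φ ((T ^ n) x'))
            ≤ ∑ n ∈ I, (L * dist ((T ^ n) x) ((T ^ n) x') + ε / 2 + D * (ind n x + ind n x')) :=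
              Finset.sum_le_sum key
          _ = L * margMetric T I x x' + (N : ℝ) * (ε / 2) + D * (Fr x + Fr x') := by
              unfold margMetric
              simp only [hFr_def, Finset.sum_add_distrib, ← Finset.mul_sum, Finset.sum_const,
                nsmul_eq_mul, hIcard]
      have hη4 : η * (4 * (D + 1)) = ε := by
        rw [hη_def]; field_simp
      have hFx : Fr x ≤ η * N := hxA
      have hFx' : Fr x' ≤ η * N := hx'A
      have hQ : D * (Fr x + Fr x') ≤ D * (η * N + η * N) :=
        mul_le_mul_of_nonneg_left (add_le_add hFx hFx') hD
      rw [hrw]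
      have hfinal : (N : ℝ) * (ε / 2) + D * (η * N + η * N) ≤ ε * N := by nlinarith
      linarith
  have card₁ : (Finset.Ico (-(N : ℤ)) 0).card = N := by
    rw [Int.card_Ico]; simp
  have card₂ : (Finset.Ico (0 : ℤ) (N : ℤ)).card = N := by
    rw [Int.card_Ico]; simp
  obtain ⟨A₁, hA₁cl, hA₁μ, hA₁est⟩ := main _ card₁
  obtain ⟨A₂, hA₂cl, hA₂μ, hA₂est⟩ := main _ card₂
  refine ⟨K ∩ (A₁ ∩ A₂), (hKcl.inter (hA₁cl.inter hA₂cl)).isCompact, ?_, ?_, ?_⟩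
  · -- measure estimate
    have hX₀meas : MeasurableSet (K ∩ (A₁ ∩ A₂)) :=
      (hKcl.inter (hA₁cl.inter hA₂cl)).measurableSet
    have hcompl : μ (K ∩ (A₁ ∩ A₂))ᶜ ≤ ENNReal.ofReal (ε / 2) := by
      calc μ (K ∩ (A₁ ∩ A₂))ᶜ ≤ μ (Kᶜ ∪ (A₁ᶜ ∪ A₂ᶜ)) := by
            apply measure_mono
            intro x hx
            simp only [Set.mem_compl_iff, Set.mem_inter_iff, not_and_or, Set.mem_union] at hx ⊢
            tauto
        _ ≤ μ Kᶜ + (μ A₁ᶜ + μ A₂ᶜ) :=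
            (measure_union_le _ _).trans (add_le_add le_rfl (measure_union_le _ _))
        _ ≤ ENNReal.ofReal δ' + (ENNReal.ofReal (δ' / η) + ENNReal.ofReal (δ' / η)) :=
            add_le_add hKμ (add_le_add hA₁μ hA₂μ)
        _ = ENNReal.ofReal (δ' + (δ' / η + δ' / η)) := by
            rw [← ENNReal.ofReal_add (by positivity) (by positivity),
              ← ENNReal.ofReal_add (by positivity) (by positivity)]
        _ ≤ ENNReal.ofReal (ε / 2) := by
            apply ENNReal.ofReal_le_ofReal
            have heq : δ' + (δ' / η + δ' / η) = ε / 2 := by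
              rw [hδ'_def]
              field_simp
              ring
            exact heq.le
    have htr : (μ (K ∩ (A₁ ∩ A₂))ᶜ).toReal ≤ ε / 2 :=
      ENNReal.toReal_le_of_le_ofReal (by linarith) hcompl
    have hsum : (μ (K ∩ (A₁ ∩ A₂))).toReal + (μ (K ∩ (A₁ ∩ A₂))ᶜ).toReal = 1 := by
      have h := measure_add_measure_compl (μ := μ) hX₀meas
      have h2 := congrArg ENNReal.toReal h
      rwa [ENNReal.toReal_add (measure_ne_top μ _) (measure_ne_top μ _), measure_univ,
        ENNReal.toReal_one] at h2
    linarith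
  · exact hKcont.mono (fun x hx => hx.1)
  · intro x hx x' hx'
    exact ⟨hA₁est x hx.1 hx.2.1 x' hx'.1 hx'.2.1, hA₂est x hx.1 hx.2.2 x' hx'.1 hx'.2.2⟩

end main
end

section
/- Suppose Φ : (X, d^X, μ, T) → (Y, d^Y, ν, S) is a Borel factor map of compact model probability-preserving systems (Φ_*μ = ν and Φ ∘ T = S ∘ Φ μ-almost everywhere), and that α > 1, δ > 0 and κ > κ′ > 0. Then for every α₁ ∈ [1, α) there are κ₁ ∈ (κ′, κ) and δ₁ ∈ (0, δ) such that for all sufficiently large N, BICOV_{α₁,κ₁,κ′, δ₁·N}(X, d^X_{[-N;0)}, d^X_{[0;N)}, μ) ≥ BICOV_{α,κ,κ′, δ·N}(Y, d^Y_{[-N;0)}, d^Y_{[0;N)}, ν). -/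
open MeasureTheory

/-- The `a`-partial `δ`-bi-covering number of the subset `U` of a pair-pseudometric
space, with respect to the measure `μ'`. -/
noncomputable def subBicov {X : Type*} [MeasurableSpace X]
    (d₁ d₂ : X → X → ℝ) (μ' : Measure X) (U : Set X) (a δ : ℝ) : ℕ∞ :=
  sInf {n : ℕ∞ | ∃ F : Finset X, ↑F ⊆ U ∧ (F.card : ℕ∞) = n ∧
    ENNReal.ofReal a < μ' (U ∩ pball d₂ δ (U ∩ pball d₁ δ ↑F))}

/-- The bi-covering number profile `BICOV_{α,κ,κ′,δ}(X,d₁,d₂,μ)`. -/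
noncomputable def BICOV {X : Type*} [MeasurableSpace X]
    (d₁ d₂ : X → X → ℝ) (μ : Measure X) (α κ κ' δ : ℝ) : ℕ∞ :=
  ⨅ (μ' : Measure X) (_ : IsProbabilityMeasure μ')
    (_ : ∀ A : Set X, MeasurableSet A → μ' A ≤ ENNReal.ofReal α * μ A),
    ⨆ (U : Set X) (_ : MeasurableSet U) (_ : ENNReal.ofReal κ ≤ μ' U),
      subBicov d₁ d₂ μ' U κ' δ

section Auxiliary

open Metric ENNReal
open scoped Classical

private lemma perm_zpow_succ {X : Type*} (T : Equiv.Perm X) (n : ℤ) (x : X) :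
    (T ^ (n + 1)) x = T ((T ^ n) x) := by
  rw [add_comm, zpow_add, zpow_one, Equiv.Perm.mul_apply]

private lemma perm_zpow_pred {X : Type*} (T : Equiv.Perm X) (n : ℤ) (x : X) :
    (T ^ (n - 1)) x = T.symm ((T ^ n) x) := by
  have : (T ^ (n - 1)) = T⁻¹ * T ^ n := by
    rw [sub_eq_add_neg, add_comm, zpow_add, zpow_neg_one]
  rw [this, Equiv.Perm.mul_apply, ← Equiv.Perm.inv_def]

lemma cont_perm_zpow {X : Type*} [TopologicalSpace X] (T : Equiv.Perm X)
    (h : Continuous ⇑T) (h' : Continuous ⇑T.symm) (n : ℤ) : Continuous ⇑(T ^ n) := by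
  induction n using Int.induction_on with
  | zero => simpa using continuous_id
  | succ i ih =>
    have : ⇑(T ^ ((i : ℤ) + 1)) = ⇑T ∘ ⇑(T ^ (i : ℤ)) := by
      funext x; exact perm_zpow_succ T i x
    rw [this]; exact h.comp ih
  | pred i ih =>
    have : ⇑(T ^ (-(i : ℤ) - 1)) = ⇑T.symm ∘ ⇑(T ^ (-(i : ℤ))) := by
      funext x; exact perm_zpow_pred T _ x
    rw [this]; exact h'.comp ih

lemma mp_perm_zpow {X : Type*} [MeasurableSpace X] (T : Equiv.Perm X) (μ : Measure X)
    (hT : MeasurePreserving ⇑T μ μ) (hT' : MeasurePreserving ⇑T.symm μ μ) (n : ℤ) :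
    MeasurePreserving ⇑(T ^ n) μ μ := by
  induction n using Int.induction_on with
  | zero => simpa using MeasurePreserving.id μ
  | succ i ih =>
    have : ⇑(T ^ ((i : ℤ) + 1)) = ⇑T ∘ ⇑(T ^ (i : ℤ)) := by
      funext x; exact perm_zpow_succ T i x
    rw [this]; exact hT.comp ih
  | pred i ih =>
    have : ⇑(T ^ (-(i : ℤ) - 1)) = ⇑T.symm ∘ ⇑(T ^ (-(i : ℤ))) := by
      funext x; exact perm_zpow_pred T _ x
    rw [this]; exact hT'.comp ih

lemma equivariance_zpow {X Y : Type*} (T : Equiv.Perm X) (S : Equiv.Perm Y) (Φ : X → Y)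
    (x : X) (h : ∀ n : ℤ, Φ (T ((T ^ n) x)) = S (Φ ((T ^ n) x))) :
    ∀ n : ℤ, Φ ((T ^ n) x) = (S ^ n) (Φ x) := by
  intro n
  induction n using Int.induction_on with
  | zero => simp
  | succ i ih =>
    rw [perm_zpow_succ T i x, h i, ih, perm_zpow_succ S i (Φ x)]
  | pred i ih =>
    have h2 := h (-(i : ℤ) - 1)
    rw [← perm_zpow_succ T _ x] at h2
    have h3 : (-(i:ℤ) - 1) + 1 = -(i:ℤ) := by ring
    rw [h3, ih] at h2
    have : Φ ((T ^ (-(i:ℤ) - 1)) x) = S.symm ((S ^ (-(i:ℤ))) (Φ x)) := by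
      apply S.injective; rw [← h2, Equiv.apply_symm_apply]
    rw [this, ← perm_zpow_pred S _ (Φ x)]

lemma isOpen_pball {X : Type*} [TopologicalSpace X] {d : X → X → ℝ}
    (hd : ∀ a, Continuous (d a)) (δ : ℝ) (A : Set X) : IsOpen (pball d δ A) := by
  have : pball d δ A = ⋃ a ∈ A, (d a) ⁻¹' Set.Iio δ := by
    ext x; simp [pball]
  rw [this]
  exact isOpen_biUnion fun a _ => (isOpen_Iio).preimage (hd a)

lemma cont_margMetric {X : Type*} [MetricSpace X] (T : Equiv.Perm X)
    (h : Continuous ⇑T) (h' : Continuous ⇑T.symm) (I : Finset ℤ) (a : X) :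
    Continuous (margMetric T I a) := by
  apply continuous_finset_sum
  intro n _
  exact Continuous.dist continuous_const (cont_perm_zpow T h h' n)

lemma sum_dist_bound {X Y : Type*} [MetricSpace X] [MetricSpace Y]
    (T : Equiv.Perm X) (Φ : X → Y) (I : Finset ℤ) (K : Set X) (D ρ ρ' : ℝ)
    (hD : ∀ y y' : Y, dist y y' ≤ D) (hD0 : 0 ≤ D) (hρ : 0 < ρ) (hρ' : 0 ≤ ρ')
    (hK : ∀ x ∈ K, ∀ x' ∈ K, dist x x' < ρ → dist (Φ x) (Φ x') < ρ')
    (x x' : X) :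
    ∑ n ∈ I, dist (Φ ((T ^ n) x)) (Φ ((T ^ n) x')) ≤
      I.card * ρ' + D * ((∑ n ∈ I, if (T ^ n) x ∈ K then (0:ℝ) else 1)
        + (∑ n ∈ I, if (T ^ n) x' ∈ K then (0:ℝ) else 1)
        + (∑ n ∈ I, dist ((T ^ n) x) ((T ^ n) x')) / ρ) := by
  have key : ∀ n ∈ I, dist (Φ ((T ^ n) x)) (Φ ((T ^ n) x')) ≤
      ρ' + D * ((if (T ^ n) x ∈ K then (0:ℝ) else 1)
        + (if (T ^ n) x' ∈ K then (0:ℝ) else 1)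
        + (if dist ((T ^ n) x) ((T ^ n) x') < ρ then (0:ℝ) else 1)) := by
    intro n _
    have hDd := hD (Φ ((T ^ n) x)) (Φ ((T ^ n) x'))
    by_cases h1 : (T ^ n) x ∈ K <;> by_cases h2 : (T ^ n) x' ∈ K <;>
      by_cases h3 : dist ((T ^ n) x) ((T ^ n) x') < ρ <;>
      simp only [h1, h2, h3, if_true, if_false] <;>
      first
        | nlinarith [hK _ h1 _ h2 h3]
        | nlinarith
  calc ∑ n ∈ I, dist (Φ ((T ^ n) x)) (Φ ((T ^ n) x'))
      ≤ ∑ n ∈ I, (ρ' + D * ((if (T ^ n) x ∈ K then (0:ℝ) else 1)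
        + (if (T ^ n) x' ∈ K then (0:ℝ) else 1)
        + (if dist ((T ^ n) x) ((T ^ n) x') < ρ then (0:ℝ) else 1))) :=
        Finset.sum_le_sum key
    _ = I.card * ρ' + D * ((∑ n ∈ I, if (T ^ n) x ∈ K then (0:ℝ) else 1)
        + (∑ n ∈ I, if (T ^ n) x' ∈ K then (0:ℝ) else 1)
        + (∑ n ∈ I, if dist ((T ^ n) x) ((T ^ n) x') < ρ then (0:ℝ) else 1)) := by
        rw [Finset.sum_add_distrib, Finset.sum_const, nsmul_eq_mul, ← Finset.mul_sum,
          Finset.sum_add_distrib, Finset.sum_add_distrib]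
    _ ≤ _ := by
        have : (∑ n ∈ I, if dist ((T ^ n) x) ((T ^ n) x') < ρ then (0:ℝ) else 1)
            ≤ (∑ n ∈ I, dist ((T ^ n) x) ((T ^ n) x')) / ρ := by
          rw [Finset.sum_div]
          apply Finset.sum_le_sum
          intro n _
          split_ifs with h
          · positivity
          · rw [le_div_iff₀ hρ]; push_neg at h; linarith
        have h2 : (0:ℝ) ≤ ∑ n ∈ I, if (T ^ n) x ∈ K then (0:ℝ) else 1 := by positivity
        have h3 : (0:ℝ) ≤ ∑ n ∈ I, if (T ^ n) x' ∈ K then (0:ℝ) else 1 := by positivity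
        nlinarith

lemma exists_good_compact {X Y : Type*}
    [MetricSpace X] [CompactSpace X] [MeasurableSpace X] [BorelSpace X]
    [MetricSpace Y] [CompactSpace Y] [MeasurableSpace Y] [BorelSpace Y]
    (μ : Measure X) [IsFiniteMeasure μ] (Φ : X → Y) (hΦ : Measurable Φ)
    (η ρ' : ℝ) (hη : 0 < η) (hρ' : 0 < ρ') :
    ∃ K : Set X, IsCompact K ∧ MeasurableSet K ∧ μ Kᶜ ≤ ENNReal.ofReal η ∧
      ∃ ρ > 0, ∀ x ∈ K, ∀ x' ∈ K, dist x x' < ρ → dist (Φ x) (Φ x') < ρ' := by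
  -- finite cover of Y by balls of radius ρ'/3
  obtain ⟨t0, -, ht0fin, ht0cov⟩ :=
    finite_cover_balls_of_compact (isCompact_univ : IsCompact (Set.univ : Set Y))
      (show (0:ℝ) < ρ'/3 by linarith)
  obtain ⟨s, rfl⟩ := Set.Finite.exists_finset_coe ht0fin
  set m := s.card with hm
  set c : Fin m → Y := fun i => (s.equivFin.symm i : Y) with hc
  set B : Fin m → Set Y := fun i => ball (c i) (ρ'/3) with hB
  have hcov : ∀ y : Y, ∃ i, y ∈ B i := by
    intro y
    have := ht0cov (Set.mem_univ y)
    simp only [Set.mem_iUnion] at this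
    obtain ⟨z, hz, hyz⟩ := this
    exact ⟨s.equivFin ⟨z, hz⟩, by simpa [hB, hc] using hyz⟩
  -- disjointified pieces
  set P : Fin m → Set Y := fun i => B i \ ⋃ (j : Fin m) (_ : j < i), B j with hP
  have hPmeas : ∀ i, MeasurableSet (P i) :=
    fun i => (isOpen_ball.measurableSet).diff
      (MeasurableSet.iUnion fun j => MeasurableSet.iUnion fun _ => isOpen_ball.measurableSet)
  have hPcov : ∀ y : Y, ∃ i, y ∈ P i := by
    intro y
    have hne : (Finset.univ.filter (fun i => y ∈ B i)).Nonempty := by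
      obtain ⟨i, hi⟩ := hcov y
      exact ⟨i, by simp [hi]⟩
    set i0 := (Finset.univ.filter (fun i => y ∈ B i)).min' hne with hi0
    refine ⟨i0, ?_, ?_⟩
    · have := Finset.min'_mem _ hne
      simpa [hi0] using (Finset.mem_filter.mp this).2
    · simp only [Set.mem_iUnion, not_exists]
      intro j hj hyj
      have : i0 ≤ j := Finset.min'_le _ j (by simp [hyj])
      exact absurd hj (not_lt.mpr this)
  have hPdisj : ∀ i j, i ≠ j → Disjoint (P i) (P j) := by
    intro i j hij
    rcases lt_or_gt_of_ne hij with h | h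
    · refine Set.disjoint_left.mpr fun y hyi hyj => ?_
      exact hyj.2 (Set.mem_iUnion.mpr ⟨i, Set.mem_iUnion.mpr ⟨h, hyi.1⟩⟩)
    · refine Set.disjoint_left.mpr fun y hyi hyj => ?_
      exact hyi.2 (Set.mem_iUnion.mpr ⟨j, Set.mem_iUnion.mpr ⟨h, hyj.1⟩⟩)
  have hPdiam : ∀ i, ∀ y ∈ P i, ∀ y' ∈ P i, dist y y' < ρ' := by
    intro i y hy y' hy'
    have h1 : dist y (c i) < ρ'/3 := mem_ball.mp hy.1
    have h2 : dist (c i) y' < ρ'/3 := by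
      have := mem_ball.mp hy'.1; rwa [dist_comm] at this
    calc dist y y' ≤ dist y (c i) + dist (c i) y' := dist_triangle _ _ _
      _ < ρ' := by linarith
  -- compact pieces inside the preimages
  have hQ : ∀ i : Fin m, ∃ C, C ⊆ Φ ⁻¹' (P i) ∧ IsCompact C ∧
      μ (Φ ⁻¹' (P i) \ C) < ENNReal.ofReal (η / (m + 1)) := by
    intro i
    refine (hΦ (hPmeas i)).exists_isCompact_diff_lt (measure_ne_top μ _) ?_
    simp only [ne_eq, ENNReal.ofReal_eq_zero, not_le]
    positivity
  choose C hCsub hCcomp hCmeas using hQ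
  refine ⟨⋃ i, C i, isCompact_iUnion hCcomp, (isCompact_iUnion hCcomp).isClosed.measurableSet,
    ?_, ?_⟩
  · -- measure bound
    have hsub : (⋃ i, C i)ᶜ ⊆ ⋃ i, (Φ ⁻¹' (P i) \ C i) := by
      intro x hx
      obtain ⟨i, hi⟩ := hPcov (Φ x)
      refine Set.mem_iUnion.mpr ⟨i, hi, ?_⟩
      intro hxC
      exact hx (Set.mem_iUnion.mpr ⟨i, hxC⟩)
    calc μ (⋃ i, C i)ᶜ ≤ μ (⋃ i, (Φ ⁻¹' (P i) \ C i)) := measure_mono hsub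
      _ ≤ ∑ i : Fin m, μ (Φ ⁻¹' (P i) \ C i) := measure_iUnion_fintype_le μ _
      _ ≤ ∑ _i : Fin m, ENNReal.ofReal (η / (m + 1)) :=
          Finset.sum_le_sum fun i _ => (hCmeas i).le
      _ = m * ENNReal.ofReal (η / (m + 1)) := by
          rw [Finset.sum_const, Finset.card_univ, Fintype.card_fin, nsmul_eq_mul]
      _ ≤ ENNReal.ofReal η := by
          rw [← ENNReal.ofReal_natCast m, ← ENNReal.ofReal_mul (by positivity)]
          apply ENNReal.ofReal_le_ofReal
          have hm1 : (0:ℝ) < m + 1 := by positivity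
          calc (m : ℝ) * (η / (m+1)) ≤ (m+1) * (η / (m+1)) := by
                apply mul_le_mul_of_nonneg_right (by linarith) (by positivity)
            _ = η := by field_simp
  · -- separation radius
    have hth : ∀ p : Fin m × Fin m, ∃ d, 0 < d ∧ (p.1 ≠ p.2 →
        Disjoint (thickening d (C p.1)) (thickening d (C p.2))) := by
      intro p
      by_cases hp : p.1 = p.2
      · exact ⟨1, one_pos, fun h => absurd hp h⟩
      · have hdisj : Disjoint (C p.1) (C p.2) :=
          Set.disjoint_of_subset (hCsub p.1) (hCsub p.2)
            ((hPdisj p.1 p.2 hp).preimage Φ)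
        obtain ⟨d, hd, hdd⟩ := hdisj.exists_thickenings (hCcomp p.1) (hCcomp p.2).isClosed
        exact ⟨d, hd, fun _ => hdd⟩
    choose dfun hdpos hddisj using hth
    by_cases hmU : Nonempty (Fin m × Fin m)
    · haveI := hmU
      set ρ := (Finset.univ : Finset (Fin m × Fin m)).inf' Finset.univ_nonempty dfun with hρ
      refine ⟨ρ, ?_, ?_⟩
      · rw [hρ]
        exact (Finset.lt_inf'_iff _).mpr fun p _ => hdpos p
      · rintro x hx x' hx' hdist
        obtain ⟨i, hxi⟩ := Set.mem_iUnion.mp hx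
        obtain ⟨j, hxj⟩ := Set.mem_iUnion.mp hx'
        have hij : i = j := by
          by_contra hij
          have hρle : ρ ≤ dfun (i, j) := Finset.inf'_le _ (Finset.mem_univ _)
          have h1 : x' ∈ thickening (dfun (i,j)) (C i) :=
            mem_thickening_iff.mpr ⟨x, hxi, by rw [dist_comm]; linarith⟩
          have h2 : x' ∈ thickening (dfun (i,j)) (C j) :=
            self_subset_thickening (hdpos _) _ hxj
          exact Set.disjoint_left.mp (hddisj (i,j) hij) h1 h2
        subst hij
        exact hPdiam i _ (hCsub i hxi) _ (hCsub i hxj)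
    · refine ⟨1, one_pos, ?_⟩
      rintro x hx
      obtain ⟨i, -⟩ := Set.mem_iUnion.mp hx
      exact absurd ⟨(i, i)⟩ hmU

end Auxiliary

open Metric ENNReal
open scoped Classical

/-- **The bi-covering number profile is an isomorphism invariant**: it does not
increase under factor maps of compact model probability-preserving systems, after a
slight adjustment of the parameters. -/
theorem BICOV_mono_under_factor
    {X Y : Type*}
    [MetricSpace X] [CompactSpace X] [MeasurableSpace X] [BorelSpace X]
    [MetricSpace Y] [CompactSpace Y] [MeasurableSpace Y] [BorelSpace Y]
    (T : Equiv.Perm X) (hTc : Continuous ⇑T) (hTc' : Continuous ⇑T.symm)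
    (S : Equiv.Perm Y) (hSc : Continuous ⇑S) (hSc' : Continuous ⇑S.symm)
    (μ : Measure X) [IsProbabilityMeasure μ] (hT : MeasurePreserving ⇑T μ μ)
    (ν : Measure Y) [IsProbabilityMeasure ν] (hS : MeasurePreserving ⇑S ν ν)
    (Φ : X → Y) (hΦ : Measurable Φ) (hmap : Measure.map Φ μ = ν)
    (hequiv : ∀ᵐ x ∂μ, Φ (T x) = S (Φ x))
    (α δ κ κ' : ℝ) (hα : 1 < α) (hδ : 0 < δ) (hκ' : 0 < κ') (hκ : κ' < κ) :
    ∀ α₁ : ℝ, 1 ≤ α₁ → α₁ < α →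
      ∃ κ₁ : ℝ, κ' < κ₁ ∧ κ₁ < κ ∧
      ∃ δ₁ : ℝ, 0 < δ₁ ∧ δ₁ < δ ∧
      ∃ N₀ : ℕ, ∀ N : ℕ, N₀ ≤ N →
        BICOV (margMetric S (Finset.Ico (-(N : ℤ)) 0))
            (margMetric S (Finset.Ico (0 : ℤ) (N : ℤ))) ν α κ κ' (δ * N)
          ≤ BICOV (margMetric T (Finset.Ico (-(N : ℤ)) 0))
              (margMetric T (Finset.Ico (0 : ℤ) (N : ℤ))) μ α₁ κ₁ κ' (δ₁ * N) := by
  classical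
  intro α₁ hα₁1 hα₁α
  -- basic constants
  have hαpos : (0:ℝ) < α := lt_trans one_pos hα
  set D := Metric.diam (Set.univ : Set Y) with hDdef
  have hD0 : 0 ≤ D := Metric.diam_nonneg
  have hDbound : ∀ y y' : Y, dist y y' ≤ D := fun y y' =>
    Metric.dist_le_diam_of_mem isCompact_univ.isBounded (Set.mem_univ y) (Set.mem_univ y')
  have hD1 : (0:ℝ) < D + 1 := by linarith
  set ρ' : ℝ := δ/4 with hρ'def
  have hρ'pos : 0 < ρ' := by rw [hρ'def]; linarith
  set ε : ℝ := δ/(8*(D+1)) with hεdef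
  have hεpos : 0 < ε := by rw [hεdef]; positivity
  set κ₁ : ℝ := (κ + κ')/2 with hκ₁def
  have hκ₁l : κ' < κ₁ := by rw [hκ₁def]; linarith
  have hκ₁u : κ₁ < κ := by rw [hκ₁def]; linarith
  have hκ₁pos : 0 < κ₁ := lt_trans hκ' hκ₁l
  set η : ℝ := ε*(κ - κ₁)/(4*α) with hηdef
  have hηpos : 0 < η := by rw [hηdef]; have : 0 < κ - κ₁ := by linarith
                           positivity
  obtain ⟨K, hKcomp, hKmeas, hKμ, ρ, hρpos, hKunif⟩ :=
    exists_good_compact μ Φ hΦ η ρ' hηpos hρ'pos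
  set δ₁ : ℝ := min (δ/2) (ρ*δ/(4*(D+1))) with hδ₁def
  have hδ₁pos : 0 < δ₁ := by
    rw [hδ₁def]; apply lt_min (by linarith); positivity
  have hδ₁lt : δ₁ < δ := lt_of_le_of_lt (min_le_left _ _) (by linarith)
  have hδ₁le : δ₁ ≤ ρ*δ/(4*(D+1)) := min_le_right _ _
  refine ⟨κ₁, hκ₁l, hκ₁u, δ₁, hδ₁pos, hδ₁lt, 1, ?_⟩
  intro N hN1
  have hN1' : (1:ℝ) ≤ (N:ℝ) := by exact_mod_cast hN1
  have hNpos : (0:ℝ) < (N:ℝ) := lt_of_lt_of_le one_pos hN1'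
  -- index windows
  set Im : Finset ℤ := Finset.Ico (-(N:ℤ)) 0 with hImdef
  set Ip : Finset ℤ := Finset.Ico (0:ℤ) (N:ℤ) with hIpdef
  set J : Finset ℤ := Finset.Ico (-(N:ℤ)) (N:ℤ) with hJdef
  have hImJ : Im ⊆ J := by
    rw [hImdef, hJdef]; apply Finset.Ico_subset_Ico le_rfl; exact_mod_cast Nat.zero_le N
  have hIpJ : Ip ⊆ J := by
    rw [hIpdef, hJdef]; apply Finset.Ico_subset_Ico _ le_rfl; omega
  have hImcard : (Im.card : ℝ) = (N:ℝ) := by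
    rw [hImdef, Int.card_Ico]; simp
  have hIpcard : (Ip.card : ℝ) = (N:ℝ) := by
    rw [hIpdef, Int.card_Ico]; simp
  have hJcard : J.card = 2*N := by
    rw [hJdef, Int.card_Ico]; omega
  -- dynamics facts
  have hTmeas : ∀ n : ℤ, Measurable ⇑(T ^ n) :=
    fun n => (cont_perm_zpow T hTc hTc' n).measurable
  have hTsymm : MeasurePreserving ⇑T.symm μ μ := by
    let e : X ≃ᵐ X :=
      { toEquiv := T, measurable_toFun := hTc.measurable, measurable_invFun := hTc'.measurable }
    exact MeasurePreserving.symm e hT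
  have hTmp : ∀ n : ℤ, MeasurePreserving ⇑(T ^ n) μ μ := mp_perm_zpow T μ hT hTsymm
  -- equivariance on a full measure set
  have hA0 : μ {x | ¬ Φ (T x) = S (Φ x)} = 0 := ae_iff.mp hequiv
  obtain ⟨M, hMsub, hMmeas, hM0⟩ := exists_measurable_superset_of_null hA0
  set E₀ : Set X := ⋂ n : ℤ, (⇑(T ^ n)) ⁻¹' Mᶜ with hE₀def
  have hE₀meas : MeasurableSet E₀ :=
    MeasurableSet.iInter fun n => (hTmeas n) hMmeas.compl
  have hE₀0 : μ E₀ᶜ = 0 := by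
    have hcompl : E₀ᶜ = ⋃ n : ℤ, (⇑(T ^ n)) ⁻¹' M := by
      rw [hE₀def, Set.compl_iInter]
      simp [Set.preimage_compl]
    rw [hcompl]
    refine le_antisymm ?_ (zero_le)
    calc μ (⋃ n : ℤ, (⇑(T ^ n)) ⁻¹' M) ≤ ∑' n : ℤ, μ ((⇑(T ^ n)) ⁻¹' M) :=
          measure_iUnion_le _
      _ = 0 := by
          have : ∀ n : ℤ, μ ((⇑(T ^ n)) ⁻¹' M) = 0 := fun n => by
            rw [(hTmp n).measure_preimage hMmeas.nullMeasurableSet, hM0]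
          simp [this]
  have hE₀equiv : ∀ x ∈ E₀, ∀ n : ℤ, Φ ((T ^ n) x) = (S ^ n) (Φ x) := by
    intro x hx
    apply equivariance_zpow
    intro n
    have hxn : (T ^ n) x ∈ Mᶜ := Set.mem_iInter.mp hx n
    by_contra hne
    exact hxn (hMsub hne)
  -- the bad-time counting function and the good set G
  set b : X → ℝ := fun x => ∑ n ∈ J, if (T ^ n) x ∈ K then (0:ℝ) else 1 with hbdef
  have hbmeas : Measurable b := by
    rw [hbdef]
    apply Finset.measurable_sum
    intro n _
    exact Measurable.ite ((hTmeas n) hKmeas) measurable_const measurable_const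
  have hbnonneg : ∀ x, 0 ≤ b x := by
    intro x; rw [hbdef]
    apply Finset.sum_nonneg; intro n _; split_ifs <;> norm_num
  set G : Set X := {x | b x < ε * N} with hGdef
  have hGmeas : MeasurableSet G := measurableSet_lt hbmeas measurable_const
  -- Markov inequality
  have hμG : μ Gᶜ ≤ ENNReal.ofReal ((κ - κ₁)/(2*α)) := by
    set f : X → ℝ≥0∞ := fun x => ∑ n ∈ J, if (T ^ n) x ∈ K then (0:ℝ≥0∞) else 1 with hfdef
    have hterm : ∀ n : ℤ, Measurable (fun x => if (T ^ n) x ∈ K then (0:ℝ≥0∞) else 1) :=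
      fun n => Measurable.ite ((hTmeas n) hKmeas) measurable_const measurable_const
    have hfmeas : Measurable f := by
      rw [hfdef]; exact Finset.measurable_sum _ fun n _ => hterm n
    have hfint : ∫⁻ x, f x ∂μ ≤ (2*N : ℕ) * ENNReal.ofReal η := by
      rw [hfdef, lintegral_finset_sum _ fun n _ => hterm n]
      have heach : ∀ n ∈ J, ∫⁻ x, (if (T ^ n) x ∈ K then (0:ℝ≥0∞) else 1) ∂μ
          ≤ ENNReal.ofReal η := by
        intro n _
        have hind : (fun x => if (T ^ n) x ∈ K then (0:ℝ≥0∞) else 1)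
            = Set.indicator ((⇑(T ^ n)) ⁻¹' Kᶜ) (1 : X → ℝ≥0∞) := by
          funext x
          by_cases h : (T ^ n) x ∈ K <;> simp [Set.indicator_apply, h]
        rw [hind, lintegral_indicator_one ((hTmeas n) hKmeas.compl),
          (hTmp n).measure_preimage hKmeas.compl.nullMeasurableSet]
        exact hKμ
      calc ∑ n ∈ J, ∫⁻ x, (if (T ^ n) x ∈ K then (0:ℝ≥0∞) else 1) ∂μ
          ≤ ∑ _n ∈ J, ENNReal.ofReal η := Finset.sum_le_sum heach
        _ = J.card • ENNReal.ofReal η := Finset.sum_const _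
        _ = (2*N : ℕ) * ENNReal.ofReal η := by rw [hJcard, nsmul_eq_mul]
    have hGc : Gᶜ = {x | ENNReal.ofReal (ε*N) ≤ f x} := by
      ext x
      simp only [hGdef, Set.mem_compl_iff, Set.mem_setOf_eq, not_lt]
      have hfx : f x = ENNReal.ofReal (b x) := by
        rw [hfdef, hbdef]
        rw [ENNReal.ofReal_sum_of_nonneg (fun n _ => by split_ifs <;> norm_num)]
        apply Finset.sum_congr rfl
        intro n _
        split_ifs <;> simp
      rw [hfx, ENNReal.ofReal_le_ofReal_iff (hbnonneg x)]
    have hmark := mul_meas_ge_le_lintegral₀ (μ := μ) hfmeas.aemeasurable (ENNReal.ofReal (ε*N))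
    rw [← hGc] at hmark
    have h2 : ((2*N : ℕ) : ℝ≥0∞) * ENNReal.ofReal η
        = ENNReal.ofReal (ε*N) * ENNReal.ofReal ((κ - κ₁)/(2*α)) := by
      rw [← ENNReal.ofReal_natCast (2*N), ← ENNReal.ofReal_mul (by positivity),
        ← ENNReal.ofReal_mul (by positivity)]
      congr 1
      push_cast
      rw [hηdef]
      field_simp
      ring
    have hchain : ENNReal.ofReal (ε*N) * μ Gᶜ
        ≤ ENNReal.ofReal (ε*N) * ENNReal.ofReal ((κ - κ₁)/(2*α)) :=
      le_trans hmark (le_trans hfint h2.le)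
    exact (ENNReal.mul_le_mul_iff_right
      (by simp only [ne_eq, ENNReal.ofReal_eq_zero, not_le]; positivity)
      ENNReal.ofReal_ne_top).mp hchain
  -- window bad-count bound
  have hwindow : ∀ I : Finset ℤ, I ⊆ J → ∀ x ∈ G,
      (∑ n ∈ I, if (T ^ n) x ∈ K then (0:ℝ) else 1) < ε*N := by
    intro I hIJ x hx
    refine lt_of_le_of_lt ?_ hx
    exact Finset.sum_le_sum_of_subset_of_nonneg hIJ
      (fun n _ _ => by split_ifs <;> norm_num)
  -- the key distance estimate
  have key : ∀ I : Finset ℤ, I ⊆ J → (I.card : ℝ) = (N:ℝ) →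
      ∀ a ∈ E₀ ∩ G, ∀ c ∈ E₀ ∩ G, margMetric T I a c < δ₁ * N →
      margMetric S I (Φ a) (Φ c) < δ * N := by
    intro I hIJ hIcard a ha c hc hd
    have hrw : margMetric S I (Φ a) (Φ c) = ∑ n ∈ I, dist (Φ ((T ^ n) a)) (Φ ((T ^ n) c)) := by
      unfold margMetric
      apply Finset.sum_congr rfl
      intro n _
      rw [hE₀equiv a ha.1 n, hE₀equiv c hc.1 n]
    rw [hrw]
    have hb1 := hwindow I hIJ a ha.2
    have hb2 := hwindow I hIJ c hc.2
    have hsum := sum_dist_bound T Φ I K D ρ ρ' hDbound hD0 hρpos hρ'pos.le hKunif a c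
    unfold margMetric at hd
    have hdnn : (0:ℝ) ≤ ∑ n ∈ I, dist ((T ^ n) a) ((T ^ n) c) :=
      Finset.sum_nonneg fun n _ => dist_nonneg
    -- numeric estimates
    have e1 : D * (ε*N) ≤ δ*N/8 := by
      have hq : D * (ε*N) = D * ((δ*N)/(8*(D+1))) := by rw [hεdef]; ring
      have hq2 : (D+1) * ((δ*N)/(8*(D+1))) = δ*N/8 := by field_simp
      rw [hq, ← hq2]
      apply mul_le_mul_of_nonneg_right (by linarith) (by positivity)
    have e2 : D * ((δ₁*N)/ρ) ≤ δ*N/4 := by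
      have h1 : D * ((δ₁*N)/ρ) ≤ D * (((ρ*δ/(4*(D+1)))*N)/ρ) := by
        gcongr
      have h2 : D * (((ρ*δ/(4*(D+1)))*N)/ρ) = (D/(D+1)) * (δ*N/4) := by
        field_simp
      have h3 : (D/(D+1)) * (δ*N/4) ≤ δ*N/4 := by
        apply mul_le_of_le_one_left (by positivity)
        rw [div_le_one hD1]; linarith
      linarith
    have hb0 : (0:ℝ) ≤ ∑ n ∈ I, if (T ^ n) a ∈ K then (0:ℝ) else 1 :=
      Finset.sum_nonneg fun n _ => by split_ifs <;> norm_num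
    have hb0' : (0:ℝ) ≤ ∑ n ∈ I, if (T ^ n) c ∈ K then (0:ℝ) else 1 :=
      Finset.sum_nonneg fun n _ => by split_ifs <;> norm_num
    have hDA : D * (∑ n ∈ I, if (T ^ n) a ∈ K then (0:ℝ) else 1) ≤ δ*N/8 :=
      le_trans (mul_le_mul_of_nonneg_left hb1.le hD0) e1
    have hDB : D * (∑ n ∈ I, if (T ^ n) c ∈ K then (0:ℝ) else 1) ≤ δ*N/8 :=
      le_trans (mul_le_mul_of_nonneg_left hb2.le hD0) e1
    have hDC : D * ((∑ n ∈ I, dist ((T ^ n) a) ((T ^ n) c)) / ρ) ≤ δ*N/4 := by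
      refine le_trans (mul_le_mul_of_nonneg_left ?_ hD0) e2
      gcongr
    have hcard : (I.card : ℝ) * ρ' = (N:ℝ) * (δ/4) := by rw [hIcard, hρ'def]
    have hexpand : D * ((∑ n ∈ I, if (T ^ n) a ∈ K then (0:ℝ) else 1)
        + (∑ n ∈ I, if (T ^ n) c ∈ K then (0:ℝ) else 1)
        + (∑ n ∈ I, dist ((T ^ n) a) ((T ^ n) c)) / ρ)
        = D * (∑ n ∈ I, if (T ^ n) a ∈ K then (0:ℝ) else 1)
        + D * (∑ n ∈ I, if (T ^ n) c ∈ K then (0:ℝ) else 1)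
        + D * ((∑ n ∈ I, dist ((T ^ n) a) ((T ^ n) c)) / ρ) := by ring
    have hδN : (0:ℝ) < δ * N := by positivity
    rw [hexpand] at hsum
    linarith [hsum]
  -- now the BICOV comparison
  rw [BICOV, BICOV]
  apply le_iInf; intro μ'
  apply le_iInf; intro hμ'prob
  apply le_iInf; intro hμ'dom
  haveI := hμ'prob
  set ν' : Measure Y := Measure.map Φ μ' with hν'def
  haveI hν'prob : IsProbabilityMeasure ν' := Measure.isProbabilityMeasure_map hΦ.aemeasurable
  have hν'dom : ∀ A : Set Y, MeasurableSet A → ν' A ≤ ENNReal.ofReal α * ν A := by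
    intro A hA
    rw [hν'def, Measure.map_apply hΦ hA, ← hmap, Measure.map_apply hΦ hA]
    calc μ' (Φ ⁻¹' A) ≤ ENNReal.ofReal α₁ * μ (Φ ⁻¹' A) := hμ'dom _ (hΦ hA)
      _ ≤ ENNReal.ofReal α * μ (Φ ⁻¹' A) :=
          mul_le_mul_left (ENNReal.ofReal_le_ofReal hα₁α.le) _
  refine le_trans (iInf_le_of_le ν' (iInf_le_of_le hν'prob (iInf_le _ hν'dom))) ?_
  apply iSup_le; intro V; apply iSup_le; intro hVmeas; apply iSup_le; intro hVκ
  set U : Set X := Φ ⁻¹' V ∩ (E₀ ∩ G) with hUdef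
  have hUmeas : MeasurableSet U := (hΦ hVmeas).inter (hE₀meas.inter hGmeas)
  -- μ' U is not much smaller than κ
  have hEc : μ' (E₀ ∩ G)ᶜ ≤ ENNReal.ofReal (κ - κ₁) := by
    rw [Set.compl_inter]
    calc μ' (E₀ᶜ ∪ Gᶜ) ≤ μ' E₀ᶜ + μ' Gᶜ := measure_union_le _ _
      _ ≤ 0 + ENNReal.ofReal (κ - κ₁) := by
          apply add_le_add
          · calc μ' E₀ᶜ ≤ ENNReal.ofReal α₁ * μ E₀ᶜ := hμ'dom _ hE₀meas.compl
              _ = 0 := by rw [hE₀0, mul_zero]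
          · calc μ' Gᶜ ≤ ENNReal.ofReal α₁ * μ Gᶜ := hμ'dom _ hGmeas.compl
              _ ≤ ENNReal.ofReal α * ENNReal.ofReal ((κ - κ₁)/(2*α)) :=
                  mul_le_mul' (ENNReal.ofReal_le_ofReal hα₁α.le) hμG
              _ = ENNReal.ofReal (α * ((κ - κ₁)/(2*α))) :=
                  (ENNReal.ofReal_mul hαpos.le).symm
              _ ≤ ENNReal.ofReal (κ - κ₁) := by
                  apply ENNReal.ofReal_le_ofReal
                  have hval : α * ((κ - κ₁)/(2*α)) = (κ - κ₁)/2 := by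
                    field_simp
                  rw [hval]; linarith
      _ = ENNReal.ofReal (κ - κ₁) := zero_add _
  have hκμ'V : ENNReal.ofReal κ ≤ μ' (Φ ⁻¹' V) := by
    rwa [hν'def, Measure.map_apply hΦ hVmeas] at hVκ
  have hsplit : μ' (Φ ⁻¹' V) ≤ μ' U + μ' (E₀ ∩ G)ᶜ := by
    refine le_trans (measure_mono ?_) (measure_union_le _ _)
    intro x hx
    by_cases h : x ∈ E₀ ∩ G
    · exact Or.inl ⟨hx, h⟩
    · exact Or.inr h
  have hUκ₁ : ENNReal.ofReal κ₁ ≤ μ' U := by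
    have hadd : ENNReal.ofReal κ₁ + ENNReal.ofReal (κ - κ₁)
        ≤ μ' U + ENNReal.ofReal (κ - κ₁) := by
      rw [← ENNReal.ofReal_add hκ₁pos.le (by linarith)]
      rw [show κ₁ + (κ - κ₁) = κ by ring]
      exact le_trans hκμ'V (le_trans hsplit (add_le_add_right hEc _))
    exact (ENNReal.add_le_add_iff_right ENNReal.ofReal_ne_top).mp hadd
  refine le_trans ?_ (le_iSup_of_le U (le_iSup_of_le hUmeas (le_iSup_of_le hUκ₁ le_rfl)))
  -- compare the sub-bicovering numbers
  rw [subBicov, subBicov]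
  apply le_sInf
  rintro n ⟨F, hFU, hFcard, hFμ⟩
  set F' : Finset Y := F.image Φ with hF'def
  have hF'V : ↑F' ⊆ V := by
    intro y hy
    rw [hF'def] at hy
    simp only [Finset.coe_image, Set.mem_image] at hy
    obtain ⟨x, hxF, rfl⟩ := hy
    exact (hFU hxF).1
  have hWmeas : MeasurableSet
      (V ∩ pball (margMetric S Ip) (δ*N) (V ∩ pball (margMetric S Im) (δ*N) ↑F')) :=
    hVmeas.inter (isOpen_pball (cont_margMetric S hSc hSc' Ip) _ _).measurableSet
  have hsub : U ∩ pball (margMetric T Ip) (δ₁*N) (U ∩ pball (margMetric T Im) (δ₁*N) ↑F)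
      ⊆ Φ ⁻¹' (V ∩ pball (margMetric S Ip) (δ*N)
          (V ∩ pball (margMetric S Im) (δ*N) ↑F')) := by
    rintro x ⟨hxU, z, ⟨hzU, f, hfF, hfz⟩, hzx⟩
    have hxE : x ∈ E₀ ∩ G := hxU.2
    have hzE : z ∈ E₀ ∩ G := hzU.2
    have hfE : f ∈ E₀ ∩ G := (hFU hfF).2
    refine ⟨hxU.1, Φ z, ⟨hzU.1, Φ f, ?_, ?_⟩, ?_⟩
    · rw [hF'def]
      simp only [Finset.coe_image, Set.mem_image]
      exact ⟨f, hfF, rfl⟩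
    · exact key Im hImJ hImcard f hfE z hzE hfz
    · exact key Ip hIpJ hIpcard z hzE x hxE hzx
  have hμ'W : ENNReal.ofReal κ' <
      ν' (V ∩ pball (margMetric S Ip) (δ*N) (V ∩ pball (margMetric S Im) (δ*N) ↑F')) := by
    rw [hν'def, Measure.map_apply hΦ hWmeas]
    exact lt_of_lt_of_le hFμ (measure_mono hsub)
  calc sInf {k : ℕ∞ | ∃ F₀ : Finset Y, ↑F₀ ⊆ V ∧ (F₀.card : ℕ∞) = k ∧
        ENNReal.ofReal κ' < ν' (V ∩ pball (margMetric S Ip) (δ*N)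
          (V ∩ pball (margMetric S Im) (δ*N) ↑F₀))}
      ≤ (F'.card : ℕ∞) := sInf_le ⟨F', hF'V, rfl, hμ'W⟩
    _ ≤ (F.card : ℕ∞) := by
        rw [hF'def]
        exact_mod_cast Nat.cast_le.mpr Finset.card_image_le
    _ = n := hFcard
end

section
/- Let (X,d) be a compact metric space and let T : ℝ × X → X be a jointly continuous flow (T^0 = id and T^{s+t} = T^s ∘ T^t). Then for every ε, δ > 0 there is δ₁ > 0 such that for every x ∈ X and every compact interval K ⊆ ℝ of length Leb(K) ≥ 1, cov( ( B^{d_K}_{δ₁·Leb(K)}(x), d^∞_K ), δ ) < exp(ε·Leb(K)). -/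
open MeasureTheory
open scoped ENNReal

noncomputable def covN {X : Type*} (A : Set X) (ρ : X → X → ℝ) (δ : ℝ) : ℕ∞ :=
  sInf {n : ℕ∞ | ∃ F : Finset X, ↑F ⊆ A ∧ (F.card : ℕ∞) = n ∧
    ∀ a ∈ A, ∃ b ∈ F, ρ b a < δ}

lemma flow_unif {X : Type*} [MetricSpace X] [CompactSpace X]
    (T : ℝ → X → X) (hcont : Continuous fun p : ℝ × X => T p.1 p.2)
    (h0 : ∀ x, T 0 x = x) {e : ℝ} (he : 0 < e) :
    ∃ η : ℝ, 0 < η ∧ ∀ s : ℝ, |s| ≤ η → ∀ y : X, dist (T s y) y < e := by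
  have hK : IsCompact ((Set.Icc (-1:ℝ) 1) ×ˢ (Set.univ : Set X)) :=
    (isCompact_Icc).prod isCompact_univ
  have huc := hK.uniformContinuousOn_of_continuous hcont.continuousOn
  rw [Metric.uniformContinuousOn_iff] at huc
  obtain ⟨d, hd, hball⟩ := huc e he
  refine ⟨min (d/2) 1, by positivity, fun s hs y => ?_⟩
  have hs1 : |s| ≤ 1 := hs.trans (min_le_right _ _)
  have hsd : |s| < d := lt_of_le_of_lt (hs.trans (min_le_left _ _)) (by linarith)
  have h1 : ((s, y) : ℝ × X) ∈ (Set.Icc (-1:ℝ) 1) ×ˢ (Set.univ : Set X) :=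
    ⟨abs_le.mp hs1, trivial⟩
  have h2 : ((0, y) : ℝ × X) ∈ (Set.Icc (-1:ℝ) 1) ×ˢ (Set.univ : Set X) :=
    ⟨by constructor <;> norm_num, trivial⟩
  have hdist : dist ((s, y) : ℝ × X) (0, y) < d := by
    rw [Prod.dist_eq]
    simp [Real.dist_eq, hsd, hd.le]
  have := hball _ h1 _ h2 hdist
  simpa [h0 y] using this

lemma net_exists {X : Type*} [MetricSpace X] [CompactSpace X] {e : ℝ} (he : 0 < e) :
    ∃ D : Finset X, ∀ y : X, ∃ z ∈ D, dist y z < e := by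
  obtain ⟨t, -, htfin, hcov⟩ := finite_cover_balls_of_compact (isCompact_univ (X := X)) he
  refine ⟨htfin.toFinset, fun y => ?_⟩
  obtain ⟨z, hz, hyz⟩ := Set.mem_iUnion₂.mp (hcov (Set.mem_univ y))
  exact ⟨z, htfin.mem_toFinset.mpr hz, Metric.mem_ball.mp hyz⟩

lemma count_codes {m : ℕ} {β : Type*} [Fintype β] [DecidableEq β] {α Kr : ℝ}
    (hα0 : 0 < α) (hα1 : α ≤ 1)
    (C : Finset (Fin m → Option β))
    (hC : ∀ c ∈ C, ((Finset.univ.filter (fun i => c i ≠ none)).card : ℝ) ≤ Kr) :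
    (C.card : ℝ) * α ^ Kr ≤ (1 + (Fintype.card β) * α) ^ m := by
  classical
  set f : Option β → ℝ := fun v => v.elim 1 (fun _ => α) with hf
  have hw : ∀ c : Fin m → Option β,
      (∏ i, f (c i)) = α ^ ((Finset.univ.filter (fun i => c i ≠ none)).card) := by
    intro c
    rw [← Finset.prod_filter_mul_prod_filter_not Finset.univ (fun i => c i ≠ none)]
    have h1 : ∏ i ∈ Finset.univ.filter (fun i => c i ≠ none), f (c i)
        = α ^ ((Finset.univ.filter (fun i => c i ≠ none)).card) := by
      rw [Finset.prod_congr rfl (fun i hi => ?_), Finset.prod_const]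
      rcases Option.ne_none_iff_exists'.mp (Finset.mem_filter.mp hi).2 with ⟨z, hz⟩
      simp [hf, hz]
    have h2 : ∏ i ∈ Finset.univ.filter (fun i => ¬ c i ≠ none), f (c i) = 1 := by
      rw [Finset.prod_congr rfl (fun i hi => ?_), Finset.prod_const_one]
      have := (Finset.mem_filter.mp hi).2
      rw [not_not] at this
      simp [hf, this]
    rw [h1, h2, mul_one]
  have hsum : ∑ c : Fin m → Option β, ∏ i, f (c i) = (1 + (Fintype.card β) * α) ^ m := by
    rw [← Fintype.prod_sum (fun (_ : Fin m) (v : Option β) => f v)]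
    have : ∑ v : Option β, f v = 1 + (Fintype.card β) * α := by
      rw [Fintype.sum_option]
      simp [hf, mul_comm]
    rw [Finset.prod_congr rfl (fun i _ => this), Finset.prod_const, Finset.card_univ,
      Fintype.card_fin]
  calc (C.card : ℝ) * α ^ Kr = ∑ _c ∈ C, α ^ Kr := by
        rw [Finset.sum_const, nsmul_eq_mul]
      _ ≤ ∑ c ∈ C, ∏ i, f (c i) := by
        refine Finset.sum_le_sum (fun c hc => ?_)
        rw [hw c, ← Real.rpow_natCast]
        exact Real.rpow_le_rpow_of_exponent_ge hα0 hα1 (hC c hc)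
      _ ≤ ∑ c : Fin m → Option β, ∏ i, f (c i) := by
        refine Finset.sum_le_sum_of_subset_of_nonneg (Finset.subset_univ C) (fun c _ _ => ?_)
        exact Finset.prod_nonneg (fun i _ => by rcases c i with _ | z <;> simp [hf, hα0.le])
      _ = _ := hsum


lemma numerics_aux {ε η δ L lg : ℝ} {N m : ℕ} {α β δ₁ Kr fc : ℝ}
    (hε : 0 < ε) (hη : 0 < η) (hδ : 0 < δ) (hL : 0 < L)
    (hβ : β = ε * η / (2 * (1 + η)))
    (hα : α = min (1/2) ((Real.exp β - 1)/((N:ℝ)+1)))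
    (hlg : lg = -Real.log α)
    (hδ₁ : δ₁ = ε * η * δ / (64 * (1 + η) * lg))
    (hKr : Kr = 16 * δ₁ * L * (1 + η) / (η * δ))
    (hm : (m:ℝ) ≤ L * (1+η)/η)
    (hα0 : 0 < α) (hlgpos : 0 < lg)
    (hfc : 0 ≤ fc) (hFcard : fc * α ^ Kr ≤ (1 + (N:ℝ) * α) ^ m) :
    fc < Real.exp (ε * L) := by
  have hβpos : 0 < β := by rw [hβ]; positivity
  have hexpβ : 1 < Real.exp β := by
    calc (1:ℝ) = Real.exp 0 := Real.exp_zero.symm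
    _ < Real.exp β := Real.exp_lt_exp.mpr hβpos
  have hNα : (N:ℝ) * α ≤ Real.exp β - 1 := by
    have h1 : α ≤ (Real.exp β - 1)/((N:ℝ)+1) := by
      rw [hα]; exact min_le_right _ _
    have h2 : (N:ℝ) * α ≤ (N:ℝ) * ((Real.exp β - 1)/((N:ℝ)+1)) :=
      mul_le_mul_of_nonneg_left h1 (Nat.cast_nonneg _)
    have h4 : ((N:ℝ)/((N:ℝ)+1)) ≤ 1 := by
      rw [div_le_one (by positivity)]; linarith
    have h3 : (N:ℝ) * ((Real.exp β - 1)/((N:ℝ)+1)) ≤ Real.exp β - 1 := by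
      calc (N:ℝ) * ((Real.exp β - 1)/((N:ℝ)+1))
          = ((N:ℝ)/((N:ℝ)+1)) * (Real.exp β - 1) := by ring
        _ ≤ 1 * (Real.exp β - 1) := mul_le_mul_of_nonneg_right h4 (by linarith)
        _ = Real.exp β - 1 := one_mul _
    linarith
  have hpow : ((1:ℝ) + (N:ℝ) * α) ^ m ≤ Real.exp (ε/2 * L) := by
    have h1 : (1:ℝ) + (N:ℝ)*α ≤ Real.exp β := by linarith
    have h2 : ((1:ℝ) + (N:ℝ)*α)^m ≤ (Real.exp β)^m := by
      apply pow_le_pow_left₀ ?_ h1 m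
      positivity
    have h3 : (Real.exp β)^m = Real.exp ((m:ℝ) * β) := by
      rw [← Real.exp_nat_mul]
    have h4 : (m:ℝ) * β ≤ ε/2 * L := by
      have h5 : (m:ℝ) * β ≤ (L*(1+η)/η) * β := mul_le_mul_of_nonneg_right hm hβpos.le
      have h6 : (L*(1+η)/η) * β = ε/2 * L := by
        rw [hβ]; field_simp
      linarith
    calc ((1:ℝ) + (N:ℝ)*α)^m ≤ (Real.exp β)^m := h2
      _ = Real.exp ((m:ℝ) * β) := h3
      _ ≤ Real.exp (ε/2 * L) := Real.exp_le_exp.mpr h4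
  have hrpow : Real.exp (-(ε/2*L)) < α ^ Kr := by
    rw [Real.rpow_def_of_pos hα0]
    apply Real.exp_lt_exp.mpr
    have hlg' : Real.log α ≠ 0 := by
      intro h; rw [hlg, h] at hlgpos; simp at hlgpos
    have hKrlg : Kr * lg = ε/4 * L := by
      rw [hKr, hδ₁, hlg]
      field_simp
      ring
    have heq2 : Real.log α * Kr = -(Kr * lg) := by rw [hlg]; ring
    rw [heq2, hKrlg]
    have := mul_pos hε hL
    linarith
  have hαK : 0 < α ^ Kr := Real.rpow_pos_of_pos hα0 _
  have h5 : fc ≤ Real.exp (ε/2*L) / α^Kr := by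
    rw [le_div_iff₀ hαK]; exact hFcard.trans hpow
  have h6 : Real.exp (ε/2*L)/α^Kr < Real.exp (ε/2*L)/Real.exp (-(ε/2*L)) :=
    div_lt_div_of_pos_left (Real.exp_pos _) (Real.exp_pos _) hrpow
  have h7 : Real.exp (ε/2*L)/Real.exp (-(ε/2*L)) = Real.exp (ε*L) := by
    rw [← Real.exp_sub]; ring_nf
  linarith

/-- **Bowen–Dinaburg balls inside Hamming-like balls for a flow.**
For a jointly continuous flow on a compact metric space, for every `ε, δ > 0` there is
`δ₁ > 0` such that every ball of radius `δ₁·Leb(K)` for the integrated metric `d_K` can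
be covered by fewer than `exp(ε·Leb(K))` sets of `d^∞_K`-radius `δ`, for every compact
interval `K` of length at least `1`. -/
theorem cov_dinf_of_ball_dint
    {X : Type*} [MetricSpace X] [CompactSpace X]
    (T : ℝ → X → X) (hcont : Continuous fun p : ℝ × X => T p.1 p.2)
    (h0 : ∀ x, T 0 x = x) (hadd : ∀ s t : ℝ, ∀ x, T (s + t) x = T s (T t x))
    (ε δ : ℝ) (hε : 0 < ε) (hδ : 0 < δ) :
    ∃ δ₁ : ℝ, 0 < δ₁ ∧ ∀ x : X, ∀ a b : ℝ, a ≤ b → 1 ≤ b - a →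
      (covN {x' : X | (∫ t in Set.Icc a b, dist (T t x) (T t x')) < δ₁ * (b - a)}
          (fun y z => sSup ((fun t => dist (T t y) (T t z)) '' Set.Icc a b)) δ : ℝ≥0∞)
        < ENNReal.ofReal (Real.exp (ε * (b - a))) := by
  classical
  obtain ⟨η, hη, hflow⟩ := flow_unif T hcont h0 (e := δ/32) (by positivity)
  obtain ⟨D, hD⟩ := net_exists (X := X) (e := δ/8) (by positivity)
  set N : ℕ := D.card with hN
  set β : ℝ := ε * η / (2 * (1 + η)) with hβ
  have hβpos : 0 < β := by positivity
  have hexpβ : 1 < Real.exp β := by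
    calc (1:ℝ) = Real.exp 0 := Real.exp_zero.symm
    _ < Real.exp β := Real.exp_lt_exp.mpr hβpos
  set α : ℝ := min (1/2) ((Real.exp β - 1) / (N + 1)) with hα
  have hα0 : 0 < α := lt_min (by norm_num) (div_pos (by linarith) (by positivity))
  have hα2 : α ≤ 1/2 := min_le_left _ _
  have hα1 : α ≤ 1 := hα2.trans (by norm_num)
  set lg : ℝ := -Real.log α with hlg
  have hlgpos : 0 < lg := by
    rw [hlg, neg_pos]
    exact Real.log_neg hα0 (lt_of_le_of_lt hα2 (by norm_num))
  set δ₁ : ℝ := ε * η * δ / (64 * (1 + η) * lg) with hδ₁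
  have hδ₁pos : 0 < δ₁ := by positivity
  refine ⟨δ₁, hδ₁pos, fun x a b hab hL1 => ?_⟩
  set L : ℝ := b - a with hLdef
  have hLpos : 0 < L := by linarith
  -- the partition
  set m : ℕ := ⌈L / η⌉₊ with hm
  have hm0 : 0 < m := Nat.ceil_pos.mpr (by positivity)
  have hm0' : (0:ℝ) < m := by exact_mod_cast hm0
  set ℓ : ℝ := L / m with hℓ
  have hℓpos : 0 < ℓ := by positivity
  have hℓη : ℓ ≤ η := by
    rw [hℓ, div_le_iff₀ hm0']
    have h1 : L / η ≤ (m : ℝ) := Nat.le_ceil (L / η)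
    have h2 : L ≤ (m : ℝ) * η := (div_le_iff₀ hη).mp h1
    linarith
  have hmle : (m : ℝ) ≤ L * (1 + η) / η := by
    have h1 : (m : ℝ) < L / η + 1 := by
      have := Nat.ceil_lt_add_one (a := L / η) (by positivity)
      exact_mod_cast this
    have h3 : L * (1 + η) / η = L / η + L := by field_simp
    linarith
  have hmη : (m : ℝ) * η ≤ L * (1 + η) := (le_div_iff₀ hη).mp hmle
  have hℓlow : η / (1 + η) ≤ ℓ := by
    rw [hℓ, div_le_div_iff₀ (by positivity) hm0']
    nlinarith
  set pt : ℕ → ℝ := fun i => a + i * ℓ with hpt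
  have hpt_diff : ∀ j : ℕ, pt (j+1) - pt j = ℓ := by
    intro j; simp only [hpt]; push_cast; ring
  have hpt_mono : ∀ j : ℕ, pt j ≤ pt (j+1) := by
    intro j; have := hpt_diff j; linarith
  have hpt0 : pt 0 = a := by simp [hpt]
  have hptm : pt m = b := by
    simp only [hpt, hℓ]
    field_simp
    linarith
  -- time-shift estimate
  have hshift : ∀ s t : ℝ, |s - t| ≤ η → ∀ y : X, dist (T s y) (T t y) < δ/32 := by
    intro s t hst y
    have : T s y = T (s - t) (T t y) := by rw [← hadd, sub_add_cancel]
    rw [this]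
    exact hflow _ hst _
  -- bad intervals
  set bad : X → Fin m → Prop := fun x' i =>
    ∃ t ∈ Set.Icc (pt i) (pt (i+1)), δ/8 ≤ dist (T t x) (T t x') with hbad
  have hbad_spread : ∀ x' : X, ∀ i : Fin m, bad x' i →
      ∀ s ∈ Set.Icc (pt i) (pt (i+1)), δ/16 ≤ dist (T s x) (T s x') := by
    intro x' i hbi s hs
    obtain ⟨t, ht, hge⟩ := hbi
    have hst : |s - t| ≤ η := by
      rw [abs_sub_le_iff]
      have := hpt_diff (i : ℕ)
      constructor <;> [skip; skip] <;>
        · simp only [Set.mem_Icc] at hs ht; linarith [hℓη]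
    have h1 := hshift s t hst x
    have h2 := hshift s t hst x'
    have h3 := dist_triangle4 (T t x) (T s x) (T s x') (T t x')
    have h4 : dist (T t x) (T s x) = dist (T s x) (T t x) := dist_comm _ _
    have h5 : dist (T s x') (T t x') = dist (T s x') (T t x') := rfl
    linarith [dist_comm (T s x') (T t x') ▸ h2]
  have hTx : ∀ y : X, Continuous fun t => T t y :=
    fun y => hcont.comp (continuous_id.prodMk continuous_const)
  set A : Set X := {x' : X | (∫ t in Set.Icc a b, dist (T t x) (T t x')) < δ₁ * L} with hA
  set Kr : ℝ := 16 * δ₁ * L * (1 + η) / (η * δ) with hKr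
  have hbad_count : ∀ x' ∈ A, ((Finset.univ.filter (fun i => bad x' i)).card : ℝ) ≤ Kr := by
    intro x' hx'
    have hgc : Continuous fun t => dist (T t x) (T t x') := (hTx x).dist (hTx x')
    have hii : ∀ k : ℕ, IntervalIntegrable (fun t => dist (T t x) (T t x')) volume
        (pt k) (pt (k+1)) := fun k => hgc.intervalIntegrable _ _
    have hsplit : (∫ t in Set.Icc a b, dist (T t x) (T t x'))
        = ∑ i ∈ Finset.range m, ∫ t in Set.Ioc (pt i) (pt (i+1)), dist (T t x) (T t x') := by
      rw [integral_Icc_eq_integral_Ioc, ← intervalIntegral.integral_of_le hab, ← hpt0, ← hptm,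
        ← intervalIntegral.sum_integral_adjacent_intervals (fun k _ => hii k)]
      exact Finset.sum_congr rfl (fun i _ => intervalIntegral.integral_of_le (hpt_mono i))
    have hone : ∀ i : Fin m, bad x' i →
        ℓ * (δ/16) ≤ ∫ t in Set.Ioc (pt i) (pt (i+1)), dist (T t x) (T t x') := by
      intro i hbi
      have hvol : volume (Set.Ioc (pt i) (pt (i+1))) = ENNReal.ofReal ℓ := by
        rw [Real.volume_Ioc, hpt_diff]
      have h := setIntegral_ge_of_const_le (c := δ/16) measurableSet_Ioc
        (by rw [hvol]; exact ENNReal.ofReal_ne_top)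
        (fun t ht => hbad_spread x' i hbi t (Set.Ioc_subset_Icc_self ht))
        (hgc.integrableOn_Ioc)
      rw [measureReal_def, hvol, ENNReal.toReal_ofReal hℓpos.le, smul_eq_mul] at h
      linarith
    have hnn : ∀ i : Fin m, 0 ≤ ∫ t in Set.Ioc (pt i) (pt (i+1)), dist (T t x) (T t x') :=
      fun i => setIntegral_nonneg measurableSet_Ioc (fun t _ => dist_nonneg)
    have hsum_ge : ((Finset.univ.filter (fun i => bad x' i)).card : ℝ) * (ℓ * (δ/16))
        ≤ ∑ i ∈ Finset.range m, ∫ t in Set.Ioc (pt i) (pt (i+1)), dist (T t x) (T t x') := by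
      rw [← Fin.sum_univ_eq_sum_range
        (fun i => ∫ t in Set.Ioc (pt i) (pt (i+1)), dist (T t x) (T t x'))]
      calc ((Finset.univ.filter (fun i => bad x' i)).card : ℝ) * (ℓ * (δ/16))
          = ∑ _i ∈ Finset.univ.filter (fun i => bad x' i), ℓ * (δ/16) := by
            rw [Finset.sum_const, nsmul_eq_mul]
        _ ≤ ∑ i ∈ Finset.univ.filter (fun i => bad x' i),
              ∫ t in Set.Ioc (pt i) (pt (i+1)), dist (T t x) (T t x') :=
            Finset.sum_le_sum (fun i hi => hone i (Finset.mem_filter.mp hi).2)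
        _ ≤ ∑ i : Fin m, ∫ t in Set.Ioc (pt i) (pt (i+1)), dist (T t x) (T t x') :=
            Finset.sum_le_sum_of_subset_of_nonneg (Finset.filter_subset _ _)
              (fun i _ _ => hnn i)
    have hxlt : (∫ t in Set.Icc a b, dist (T t x) (T t x')) < δ₁ * L := hx'
    set q : ℝ := ((Finset.univ.filter (fun i => bad x' i)).card : ℝ) with hq
    have hqnn : 0 ≤ q := Nat.cast_nonneg _
    rw [← hsplit] at hsum_ge
    have hqlt : q * (ℓ * (δ/16)) < δ₁ * L := lt_of_le_of_lt hsum_ge hxlt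
    have e0 : η ≤ ℓ * (1+η) := (div_le_iff₀ (by positivity)).mp hℓlow
    have e2 : q*δ*η ≤ q*δ*(ℓ*(1+η)) :=
      mul_le_mul_of_nonneg_left e0 (mul_nonneg hqnn hδ.le)
    have e3 : q*δ*(ℓ*(1+η)) = (q*(ℓ*(δ/16)))*(16*(1+η)) := by ring
    have e4 : (q*(ℓ*(δ/16)))*(16*(1+η)) ≤ (δ₁*L)*(16*(1+η)) :=
      mul_le_mul_of_nonneg_right hqlt.le (by positivity)
    rw [hKr, le_div_iff₀ (by positivity : (0:ℝ) < η * δ)]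
    clear_value q ℓ L δ₁
    linarith
  set netpt : X → {z // z ∈ D} := fun y => ⟨(hD y).choose, (hD y).choose_spec.1⟩ with hnetpt
  have hnet : ∀ y : X, dist y ((netpt y) : X) < δ/8 := fun y => (hD y).choose_spec.2
  set code : X → (Fin m → Option {z // z ∈ D}) :=
    fun x' i => if bad x' i then some (netpt (T (pt i) x')) else none with hcode
  have hclose : ∀ y z : X, code y = code z → ∀ t ∈ Set.Icc a b,
      dist (T t y) (T t z) ≤ δ/2 := by
    intro y z hyz t ht
    obtain ⟨hta, htb⟩ := ht
    set j : ℕ := min ⌊(t - a)/ℓ⌋₊ (m - 1) with hj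
    have hjm : j < m := lt_of_le_of_lt (min_le_right _ _) (Nat.pred_lt hm0.ne')
    have hptj_le : pt j ≤ t := by
      have h1 : (j:ℝ) ≤ (t - a)/ℓ := by
        have h0' := Nat.floor_le (div_nonneg (by linarith) hℓpos.le : (0:ℝ) ≤ (t - a)/ℓ)
        have h2 : (j:ℝ) ≤ (⌊(t-a)/ℓ⌋₊ : ℝ) := by exact_mod_cast min_le_left _ _
        linarith
      have h3 := (le_div_iff₀ hℓpos).mp h1
      simp only [hpt]; linarith
    have hle_ptj1 : t ≤ pt (j + 1) := by
      rcases le_or_gt ⌊(t - a)/ℓ⌋₊ (m - 1) with hc | hc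
      · have hjf : j = ⌊(t - a)/ℓ⌋₊ := min_eq_left hc
        have h1 : (t - a)/ℓ < (j:ℝ) + 1 := by
          have := Nat.lt_floor_add_one ((t - a)/ℓ)
          rw [hjf]; push_cast; linarith
        have h2 := (div_lt_iff₀ hℓpos).mp h1
        simp only [hpt]; push_cast; linarith
      · have hjf : j = m - 1 := min_eq_right hc.le
        have hjm1 : j + 1 = m := by omega
        rw [hjm1, hptm]; exact htb
    have hmem : t ∈ Set.Icc (pt j) (pt (j+1)) := ⟨hptj_le, hle_ptj1⟩
    set i : Fin m := ⟨j, hjm⟩ with hi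
    have hcci := congrFun hyz i
    have hshift_t : ∀ w : X, dist (T t w) (T (pt j) w) < δ/32 := by
      intro w
      apply hshift
      rw [abs_sub_le_iff]
      have := hpt_diff j
      constructor <;> linarith [hℓη]
    by_cases hb : bad y i
    · have hbz : bad z i := by
        by_contra hbz
        simp only [hcode, if_pos hb, if_neg hbz] at hcci
        exact Option.some_ne_none _ hcci
      have heq : netpt (T (pt (i:ℕ)) y) = netpt (T (pt (i:ℕ)) z) := by
        simp only [hcode, if_pos hb, if_pos hbz] at hcci
        exact Option.some_injective _ hcci
      have h1 : dist (T (pt j) y) ((netpt (T (pt j) y)) : X) < δ/8 := hnet _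
      have h2 : dist (T (pt j) z) ((netpt (T (pt j) y)) : X) < δ/8 := by
        have h3 := hnet (T (pt j) z)
        have h4 : netpt (T (pt j) y) = netpt (T (pt j) z) := heq
        rw [h4]; exact h3
      have h5 := hshift_t y
      have h6 := hshift_t z
      have h7 := dist_triangle4 (T t y) (T (pt j) y) (T (pt j) z) (T t z)
      have h8 := dist_triangle_right (T (pt j) y) (T (pt j) z)
        ((netpt (T (pt j) y)) : X)
      have h9 := dist_comm (T (pt j) z) (T t z)
      linarith
    · have hbz : ¬ bad z i := by
        intro hbz
        simp only [hcode, if_neg hb, if_pos hbz] at hcci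
        exact Option.some_ne_none _ hcci.symm
      have hy : dist (T t x) (T t y) < δ/8 := by
        by_contra h
        exact hb ⟨t, hmem, not_lt.mp h⟩
      have hz : dist (T t x) (T t z) < δ/8 := by
        by_contra h
        exact hbz ⟨t, hmem, not_lt.mp h⟩
      have h7 := dist_triangle_left (T t y) (T t z) (T t x)
      linarith
  -- representatives of codes
  set rep : (Fin m → Option {z // z ∈ D}) → X := fun c =>
    if h : ∃ y ∈ A, code y = c then h.choose else x with hrep
  set Cs : Finset (Fin m → Option {z // z ∈ D}) := Finset.univ.filter
    (fun c => ∃ y ∈ A, code y = c) with hCs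
  set F : Finset X := Cs.image rep with hF
  have hFsub : ↑F ⊆ A := by
    intro p hp
    simp only [hF, Finset.coe_image, Set.mem_image, Finset.mem_coe, hCs,
      Finset.mem_filter] at hp
    obtain ⟨c, ⟨-, hc⟩, rfl⟩ := hp
    simp only [hrep, dif_pos hc]
    exact hc.choose_spec.1
  have hFcov : ∀ p ∈ A, ∃ q ∈ F,
      sSup ((fun t => dist (T t q) (T t p)) '' Set.Icc a b) < δ := by
    intro p hp
    have hcmem : code p ∈ Cs := Finset.mem_filter.mpr ⟨Finset.mem_univ _, ⟨p, hp, rfl⟩⟩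
    refine ⟨rep (code p), Finset.mem_image_of_mem rep hcmem, ?_⟩
    have hex : ∃ y ∈ A, code y = code p := ⟨p, hp, rfl⟩
    have hqc : code (rep (code p)) = code p := by
      simp only [hrep, dif_pos hex]
      exact hex.choose_spec.2
    have hcl := hclose _ _ hqc
    have hsup : sSup ((fun t => dist (T t (rep (code p))) (T t p)) '' Set.Icc a b) ≤ δ/2 := by
      apply Real.sSup_le ?_ (by positivity)
      rintro v ⟨t, ht, rfl⟩
      exact hcl t ht
    linarith
  -- counting
  have hCsKr : ∀ c ∈ Cs, ((Finset.univ.filter (fun i => c i ≠ none)).card : ℝ) ≤ Kr := by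
    intro c hc
    obtain ⟨y, hyA, rfl⟩ := (Finset.mem_filter.mp hc).2
    have hfe : (Finset.univ.filter (fun i => code y i ≠ none))
        = (Finset.univ.filter (fun i => bad y i)) := by
      apply Finset.filter_congr
      intro i _
      simp only [hcode]
      by_cases hb : bad y i <;> simp [hb]
    rw [hfe]
    exact hbad_count y hyA
  have hcount : (Cs.card : ℝ) * α ^ Kr ≤ (1 + (N:ℝ) * α) ^ m := by
    have h := count_codes (β := {z // z ∈ D}) hα0 hα1 Cs hCsKr
    rwa [Fintype.card_coe] at h
  have hFcard : (F.card : ℝ) * α ^ Kr ≤ (1 + (N:ℝ) * α) ^ m := by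
    refine le_trans (mul_le_mul_of_nonneg_right ?_ (Real.rpow_nonneg hα0.le _)) hcount
    exact_mod_cast Finset.card_image_le
  have hcard_lt : (F.card : ℝ) < Real.exp (ε * L) :=
    numerics_aux hε hη hδ hLpos hβ hα hlg hδ₁ hKr hmle hα0 hlgpos
      (Nat.cast_nonneg _) hFcard
  -- conclude
  have h8 : covN A (fun y z => sSup ((fun t => dist (T t y) (T t z)) '' Set.Icc a b)) δ
      ≤ ((F.card : ℕ∞)) := sInf_le ⟨F, hFsub, rfl, hFcov⟩
  calc (covN A (fun y z => sSup ((fun t => dist (T t y) (T t z)) '' Set.Icc a b)) δ : ℝ≥0∞)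
      ≤ ((F.card : ℕ∞) : ℝ≥0∞) := ENat.toENNReal_le.mpr h8
    _ = ((F.card : ℕ) : ℝ≥0∞) := by simp
    _ = ENNReal.ofReal ((F.card : ℕ) : ℝ) := (ENNReal.ofReal_natCast _).symm
    _ < ENNReal.ofReal (Real.exp (ε * L)) :=
        (ENNReal.ofReal_lt_ofReal_iff (Real.exp_pos _)).mpr hcard_lt
end

section
/- Let A be a finite set, let Y ⊆ A^ℤ be a nonempty closed shift-invariant subset with shift map S, equipped with the metric d(y,y′) := ∑_{n∈ℤ} 2^{−|n|}·1[y_n ≠ y′_n], and let σ : Y → ℝ be Hölder continuous with respect to d. Then for every ε > 0 there is δ > 0 such that for all N ∈ ℕ and all y, y′ ∈ Y: if max_{n∈[0;N)} d(S^n y, S^n y′) < δ, then max_{n∈[0;N)} |σ^y_n − σ^{y′}_n| < ε. -/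
open scoped Classical

/-- The standard metric on `A^ℤ`: `d(y,y′) := ∑_{n∈ℤ} 2^{−|n|}·1[y_n ≠ y′_n]`. -/
noncomputable def shiftDist {A : Type*} (y y' : ℤ → A) : ℝ :=
  ∑' n : ℤ, if y n ≠ y' n then (2 : ℝ) ^ (-|n|) else 0

/-- The (leftward) shift on `A^ℤ`. -/
def shiftMap {A : Type*} (y : ℤ → A) : ℤ → A := fun n => y (n + 1)

/-- Cocycle partial sums `σ^y_n := ∑_{m=0}^{n−1} σ(S^m y)` for `n : ℕ`. -/
noncomputable def cocSum {A : Type*} (σ : (ℤ → A) → ℝ) (y : ℤ → A) (n : ℕ) : ℝ :=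
  ∑ m ∈ Finset.range n, σ (shiftMap^[m] y)

section Helpers

variable {A : Type*}

lemma summable_two_zpow_neg_abs : Summable (fun n : ℤ => (2:ℝ) ^ (-|n|)) := by
  rw [summable_int_iff_summable_nat_and_neg]
  constructor <;>
  · apply Summable.congr
      (Summable.mul_left 1 (summable_geometric_of_lt_one (by norm_num : (0:ℝ) ≤ 2⁻¹) (by norm_num)))
    intro n
    simp [zpow_neg, zpow_natCast, inv_pow]

lemma shiftDist_summand_nonneg (y y' : ℤ → A) (n : ℤ) :
    0 ≤ (if y n ≠ y' n then (2:ℝ) ^ (-|n|) else 0) := by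
  split <;> positivity

lemma summable_shiftDist (y y' : ℤ → A) :
    Summable (fun n : ℤ => if y n ≠ y' n then (2:ℝ) ^ (-|n|) else 0) := by
  apply Summable.of_nonneg_of_le (shiftDist_summand_nonneg y y') _ summable_two_zpow_neg_abs
  intro n
  split
  · exact le_rfl
  · positivity

lemma shiftDist_nonneg (y y' : ℤ → A) : 0 ≤ shiftDist y y' :=
  tsum_nonneg (shiftDist_summand_nonneg y y')

lemma le_shiftDist {y y' : ℤ → A} {k : ℤ} (h : y k ≠ y' k) :
    (2:ℝ) ^ (-|k|) ≤ shiftDist y y' := by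
  have := Summable.le_tsum (summable_shiftDist y y') k (fun j _ => shiftDist_summand_nonneg y y' j)
  rwa [if_pos h] at this

lemma tail_right_summable (J : ℤ) :
    Summable (fun k : ℤ => if J ≤ k then (2:ℝ) ^ (-k) else 0) ∧
    ∑' k : ℤ, (if J ≤ k then (2:ℝ) ^ (-k) else 0) = 2 * (2:ℝ) ^ (-J) := by
  set f : ℤ → ℝ := fun k => if J ≤ k then (2:ℝ) ^ (-k) else 0 with hf
  set g : ℕ → ℝ := fun j => (2:ℝ) ^ (-J) * (2⁻¹:ℝ) ^ j with hg
  have hinj : Function.Injective (fun j : ℕ => J + (j:ℤ)) := by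
    intro a b h
    simpa using h
  have hrange : ∀ k ∉ Set.range (fun j : ℕ => J + (j:ℤ)), f k = 0 := by
    intro k hk
    rw [hf]
    simp only
    rw [if_neg]
    intro hJk
    exact hk ⟨(k - J).toNat, by show J + (((k - J).toNat : ℕ) : ℤ) = k; omega⟩
  have hcomp : ∀ j : ℕ, f (J + (j:ℤ)) = g j := by
    intro j
    rw [hf, hg]
    simp only [if_pos (by omega : J ≤ J + (j:ℤ))]
    rw [neg_add, zpow_add₀ (by norm_num : (2:ℝ) ≠ 0)]
    congr 1
    simp [zpow_neg, zpow_natCast, inv_pow]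
  have hgsum : Summable g :=
    Summable.mul_left _ (summable_geometric_of_lt_one (by norm_num) (by norm_num))
  have hfsum : Summable f := by
    rw [← Function.Injective.summable_iff hinj hrange]
    exact hgsum.congr (fun j => (hcomp j).symm)
  refine ⟨hfsum, ?_⟩
  have heq : ∑' k : ℤ, f k = ∑' j : ℕ, g j := by
    apply tsum_eq_tsum_of_ne_zero_bij (fun j => J + ((j : ℕ) : ℤ))
    · intro a b h
      exact Subtype.ext (hinj h)
    · intro k hk
      have hk' : f k ≠ 0 := hk
      have : k ∈ Set.range (fun j : ℕ => J + (j:ℤ)) := by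
        by_contra hr
        exact hk' (hrange k hr)
      obtain ⟨j, hj⟩ := this
      exact ⟨⟨j, by show (2:ℝ) ^ (-J) * (2⁻¹:ℝ) ^ j ≠ 0; positivity⟩, hj⟩
    · intro j
      exact hcomp j
  rw [heq, hg, tsum_mul_left, tsum_geometric_of_lt_one (by norm_num) (by norm_num)]
  norm_num [mul_comm]

end Helpers

section Helpers2

variable {A : Type*}

lemma tail_left_summable (J : ℤ) :
    Summable (fun k : ℤ => if k ≤ J then (2:ℝ) ^ k else 0) ∧
    ∑' k : ℤ, (if k ≤ J then (2:ℝ) ^ k else 0) = 2 * (2:ℝ) ^ J := by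
  obtain ⟨hs, hv⟩ := tail_right_summable (-J)
  have hcomp : ∀ k : ℤ, (fun k : ℤ => if -J ≤ k then (2:ℝ) ^ (-k) else 0) ((Equiv.neg ℤ) k)
      = (if k ≤ J then (2:ℝ) ^ k else 0) := by
    intro k
    simp only [Equiv.neg_apply, neg_neg]
    by_cases h : k ≤ J
    · rw [if_pos (by omega), if_pos h]
    · rw [if_neg (by omega), if_neg h]
  constructor
  · have := ((Equiv.neg ℤ).summable_iff
      (f := fun k : ℤ => if -J ≤ k then (2:ℝ) ^ (-k) else 0)).2 hs
    exact this.congr hcomp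
  · have := (Equiv.neg ℤ).tsum_eq (fun k : ℤ => if -J ≤ k then (2:ℝ) ^ (-k) else 0)
    calc ∑' k : ℤ, (if k ≤ J then (2:ℝ) ^ k else 0)
        = ∑' k : ℤ, (fun k : ℤ => if -J ≤ k then (2:ℝ) ^ (-k) else 0) ((Equiv.neg ℤ) k) := by
          exact tsum_congr (fun k => (hcomp k).symm)
      _ = ∑' k : ℤ, (if -J ≤ k then (2:ℝ) ^ (-k) else 0) := this
      _ = 2 * (2:ℝ) ^ J := by rw [hv, neg_neg]

lemma shiftDist_le_of_agree {y y' : ℤ → A} {a b : ℤ}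
    (h : ∀ k, a ≤ k → k ≤ b → y k = y' k) :
    shiftDist y y' ≤ (2:ℝ) ^ a + (2:ℝ) ^ (-b) := by
  obtain ⟨hsl, hvl⟩ := tail_left_summable (a - 1)
  obtain ⟨hsr, hvr⟩ := tail_right_summable (b + 1)
  have hle : ∀ k : ℤ, (if y k ≠ y' k then (2:ℝ) ^ (-|k|) else 0) ≤
      (if k ≤ a - 1 then (2:ℝ) ^ k else 0) + (if b + 1 ≤ k then (2:ℝ) ^ (-k) else 0) := by
    intro k
    by_cases hk1 : a ≤ k ∧ k ≤ b
    · rw [if_neg (not_not_intro (h k hk1.1 hk1.2)), if_neg (by omega), if_neg (by omega)]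
      norm_num
    · have h2 : k ≤ a - 1 ∨ b + 1 ≤ k := by omega
      have hbase : (if y k ≠ y' k then (2:ℝ) ^ (-|k|) else 0) ≤ (2:ℝ) ^ (-|k|) := by
        split
        · exact le_rfl
        · positivity
      rcases h2 with h2 | h2
      · refine hbase.trans ?_
        rw [if_pos h2]
        have : (2:ℝ) ^ (-|k|) ≤ (2:ℝ) ^ k := by
          exact zpow_le_zpow_right₀ one_le_two (neg_abs_le k)
        have hpos : (0:ℝ) ≤ (if b + 1 ≤ k then (2:ℝ) ^ (-k) else 0) := by
          split <;> positivity
        linarith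
      · refine hbase.trans ?_
        rw [if_pos h2]
        have : (2:ℝ) ^ (-|k|) ≤ (2:ℝ) ^ (-k) := by
          exact zpow_le_zpow_right₀ one_le_two (neg_le_neg (le_abs_self k))
        have hpos : (0:ℝ) ≤ (if k ≤ a - 1 then (2:ℝ) ^ k else 0) := by
          split <;> positivity
        linarith
  have := Summable.tsum_le_tsum hle (summable_shiftDist y y') (hsl.add hsr)
  rw [Summable.tsum_add hsl hsr, hvl, hvr] at this
  refine le_trans this (le_of_eq ?_)
  rw [← zpow_one_add₀ (two_ne_zero), ← zpow_one_add₀ (two_ne_zero)]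
  congr 1 <;> ring

lemma shiftMap_iterate_apply (y : ℤ → A) (m : ℕ) (j : ℤ) :
    shiftMap^[m] y j = y (j + m) := by
  induction m generalizing j with
  | zero => simp
  | succ m ih =>
    rw [Function.iterate_succ_apply']
    show (shiftMap^[m] y) (j + 1) = y (j + (m + 1 : ℕ))
    rw [ih (j + 1)]
    congr 1
    push_cast
    ring

end Helpers2

/-- **Hölder cocycles over subshifts are uniformly controlled by orbit-proximity**:
if `σ` is Hölder for the metric `d` on a closed shift-invariant `Y ⊆ A^ℤ`, then for
every `ε > 0` there is `δ > 0` such that whenever the orbits of two points of `Y` stay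
`δ`-close up to time `N`, all their cocycle partial sums up to time `N` differ by less
than `ε`. -/
theorem holder_cocycle_close_on_close_orbits
    {A : Type*} [Finite A] [TopologicalSpace A] [DiscreteTopology A]
    (Y : Set (ℤ → A)) (hYne : Y.Nonempty) (hYclosed : IsClosed Y)
    (hYinv : shiftMap '' Y = Y)
    (σ : (ℤ → A) → ℝ)
    (hHolder : ∃ c : ℝ, ∃ θ : ℝ, 0 < θ ∧ θ ≤ 1 ∧
      ∀ y ∈ Y, ∀ y' ∈ Y, |σ y - σ y'| ≤ c * (shiftDist y y') ^ θ) :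
    ∀ ε : ℝ, 0 < ε → ∃ δ : ℝ, 0 < δ ∧ ∀ N : ℕ, ∀ y ∈ Y, ∀ y' ∈ Y,
      (∀ n ∈ Finset.range N, shiftDist (shiftMap^[n] y) (shiftMap^[n] y') < δ) →
      ∀ n ∈ Finset.range N, |cocSum σ y n - cocSum σ y' n| < ε := by
  obtain ⟨c, θ, hθ0, hθ1, hH⟩ := hHolder
  intro ε hε
  set C : ℝ := max c 0 with hCdef
  have hC : 0 ≤ C := le_max_right _ _
  have hH' : ∀ z ∈ Y, ∀ z' ∈ Y, |σ z - σ z'| ≤ C * (shiftDist z z') ^ θ := by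
    intro z hz z' hz'
    refine (hH z hz z' hz').trans ?_
    exact mul_le_mul_of_nonneg_right (le_max_left _ _) (Real.rpow_nonneg (shiftDist_nonneg z z') θ)
  set q : ℝ := (2:ℝ) ^ (-θ) with hqdef
  have hq0 : 0 < q := Real.rpow_pos_of_pos two_pos _
  have hq1 : q < 1 := Real.rpow_lt_one_of_one_lt_of_neg one_lt_two (neg_neg_iff_pos.mpr hθ0)
  have hq1' : 0 < 1 - q := by linarith
  set K : ℝ := C * 2 * (2 * (1 - q)⁻¹) with hKdef
  have hK : 0 ≤ K := by positivity
  obtain ⟨L, hL⟩ := exists_pow_lt_of_lt_one (show (0:ℝ) < ε / (K + 1) by positivity) hq1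
  have hKL : K * q ^ L < ε := by
    have h1 : K * q ^ L ≤ (K + 1) * q ^ L := by
      apply mul_le_mul_of_nonneg_right (by linarith) (by positivity)
    have h2 : (K + 1) * q ^ L < (K + 1) * (ε / (K + 1)) := by
      apply mul_lt_mul_of_pos_left hL (by linarith)
    have h3 : (K + 1) * (ε / (K + 1)) = ε := by field_simp
    linarith
  refine ⟨(2:ℝ) ^ (-(L:ℤ)), by positivity, ?_⟩
  intro N y hy y' hy' hclose n hn
  rw [Finset.mem_range] at hn
  have hN1 : 1 ≤ N := Nat.one_le_iff_ne_zero.mpr (by omega)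
  -- membership of iterates
  have hmemY : ∀ (z : ℤ → A), z ∈ Y → ∀ m : ℕ, shiftMap^[m] z ∈ Y := by
    intro z hz m
    induction m with
    | zero => simpa using hz
    | succ m ih =>
      rw [Function.iterate_succ_apply']
      rw [← hYinv]
      exact Set.mem_image_of_mem shiftMap ih
  -- agreement on the big window
  have key : ∀ k : ℤ, -(L:ℤ) ≤ k → k ≤ (N:ℤ) - 1 + L → y k = y' k := by
    intro k h1 h2
    by_contra hne
    set m : ℤ := max 0 (min k ((N:ℤ) - 1)) with hmdef
    have hm0 : 0 ≤ m := le_max_left _ _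
    have hNZ : 1 ≤ (N:ℤ) := by exact_mod_cast hN1
    have hmN : m ≤ (N:ℤ) - 1 := by omega
    have habs : |k - m| ≤ (L:ℤ) := by
      rw [abs_le]
      omega
    have hmn : ((m.toNat : ℤ)) = m := Int.toNat_of_nonneg hm0
    have hmem : m.toNat ∈ Finset.range N := by
      rw [Finset.mem_range]
      omega
    have hdiff : shiftMap^[m.toNat] y (k - m) ≠ shiftMap^[m.toNat] y' (k - m) := by
      rw [shiftMap_iterate_apply, shiftMap_iterate_apply, hmn]
      have hk : k - m + m = k := by ring
      rw [hk]
      exact hne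
    have hge := le_shiftDist hdiff
    have hδle : (2:ℝ) ^ (-(L:ℤ)) ≤ (2:ℝ) ^ (-|k - m|) :=
      zpow_le_zpow_right₀ one_le_two (by omega)
    exact absurd (hclose m.toNat hmem) (not_lt.mpr (hδle.trans hge))
  -- distance bound at each time m < N
  have hdistm : ∀ m : ℕ, m < N →
      shiftDist (shiftMap^[m] y) (shiftMap^[m] y') ≤
        2 * (2:ℝ) ^ (-((L:ℤ) + (min m (N - 1 - m) : ℕ))) := by
    intro m hm
    have h1 : shiftDist (shiftMap^[m] y) (shiftMap^[m] y') ≤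
        (2:ℝ) ^ (-((L:ℤ) + m)) + (2:ℝ) ^ (-((L:ℤ) + ((N - 1 - m : ℕ) : ℤ))) := by
      apply shiftDist_le_of_agree
      intro k hk1 hk2
      rw [shiftMap_iterate_apply, shiftMap_iterate_apply]
      apply key <;> omega
    refine h1.trans ?_
    have e1 : (2:ℝ) ^ (-((L:ℤ) + m)) ≤ (2:ℝ) ^ (-((L:ℤ) + (min m (N - 1 - m) : ℕ))) :=
      zpow_le_zpow_right₀ one_le_two (by
        have : (min m (N - 1 - m) : ℕ) ≤ m := min_le_left _ _
        omega)
    have e2 : (2:ℝ) ^ (-((L:ℤ) + ((N - 1 - m : ℕ) : ℤ))) ≤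
        (2:ℝ) ^ (-((L:ℤ) + (min m (N - 1 - m) : ℕ))) :=
      zpow_le_zpow_right₀ one_le_two (by
        have : (min m (N - 1 - m) : ℕ) ≤ N - 1 - m := min_le_right _ _
        omega)
    linarith
  -- rpow computation
  have hrpow : ∀ t : ℕ, (2 * (2:ℝ) ^ (-((L:ℤ) + (t:ℤ)))) ^ θ ≤ 2 * q ^ L * q ^ t := by
    intro t
    have hb : (2 * (2:ℝ) ^ (-((L:ℤ) + (t:ℤ)))) = (2:ℝ) ^ ((1 - ((L:ℤ) + t) : ℤ) : ℝ) := by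
      rw [Real.rpow_intCast]
      rw [zpow_sub₀ (two_ne_zero), zpow_one, zpow_neg]
      ring
    rw [hb, ← Real.rpow_natCast q L, ← Real.rpow_natCast q t, hqdef,
      ← Real.rpow_mul (by norm_num : (0:ℝ) ≤ 2), ← Real.rpow_mul (by norm_num : (0:ℝ) ≤ 2),
      ← Real.rpow_mul (by norm_num : (0:ℝ) ≤ 2)]
    have h2 : (2:ℝ) = (2:ℝ) ^ (1:ℝ) := (Real.rpow_one 2).symm
    calc ((2:ℝ) ^ (((1 - ((L:ℤ) + t) : ℤ) : ℝ) * θ))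
        = (2:ℝ) ^ (θ + ((-θ * L) + (-θ * t))) := by
          congr 1
          push_cast
          ring
      _ = (2:ℝ) ^ (θ:ℝ) * ((2:ℝ) ^ (-θ * (L:ℝ)) * (2:ℝ) ^ (-θ * (t:ℝ))) := by
          rw [Real.rpow_add two_pos, Real.rpow_add two_pos]
      _ ≤ 2 * ((2:ℝ) ^ (-θ * (L:ℝ)) * (2:ℝ) ^ (-θ * (t:ℝ))) := by
          have : (2:ℝ) ^ (θ:ℝ) ≤ (2:ℝ) ^ (1:ℝ) :=
            Real.rpow_le_rpow_of_exponent_le one_le_two hθ1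
          rw [Real.rpow_one] at this
          apply mul_le_mul_of_nonneg_right this
          positivity
      _ = 2 * (2:ℝ) ^ (-θ * (L:ℝ)) * (2:ℝ) ^ (-θ * (t:ℝ)) := by ring
  -- term bound
  have hterm : ∀ m : ℕ, m < N →
      |σ (shiftMap^[m] y) - σ (shiftMap^[m] y')| ≤
        C * 2 * q ^ L * (q ^ m + q ^ (N - 1 - m)) := by
    intro m hm
    have h1 := hH' _ (hmemY y hy m) _ (hmemY y' hy' m)
    have h2 : (shiftDist (shiftMap^[m] y) (shiftMap^[m] y')) ^ θ ≤
        2 * q ^ L * q ^ (min m (N - 1 - m)) := by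
      refine le_trans ?_ (hrpow (min m (N - 1 - m)))
      exact Real.rpow_le_rpow (shiftDist_nonneg _ _) (hdistm m hm) hθ0.le
    have h3 : q ^ (min m (N - 1 - m)) ≤ q ^ m + q ^ (N - 1 - m) := by
      rcases min_choice m (N - 1 - m) with h | h <;> rw [h]
      · have : (0:ℝ) ≤ q ^ (N - 1 - m) := by positivity
        linarith
      · have : (0:ℝ) ≤ q ^ m := by positivity
        linarith
    calc |σ (shiftMap^[m] y) - σ (shiftMap^[m] y')|
        ≤ C * (shiftDist (shiftMap^[m] y) (shiftMap^[m] y')) ^ θ := h1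
      _ ≤ C * (2 * q ^ L * q ^ (min m (N - 1 - m))) := mul_le_mul_of_nonneg_left h2 hC
      _ ≤ C * (2 * q ^ L * (q ^ m + q ^ (N - 1 - m))) := by
          apply mul_le_mul_of_nonneg_left _ hC
          apply mul_le_mul_of_nonneg_left h3
          positivity
      _ = C * 2 * q ^ L * (q ^ m + q ^ (N - 1 - m)) := by ring
  -- sum the geometric bounds
  have hgeo : ∑ m ∈ Finset.range N, (q ^ m + q ^ (N - 1 - m)) ≤ 2 * (1 - q)⁻¹ := by
    rw [Finset.sum_add_distrib]
    have hrefl : ∑ m ∈ Finset.range N, q ^ (N - 1 - m) = ∑ m ∈ Finset.range N, q ^ m :=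
      Finset.sum_range_reflect (fun i => q ^ i) N
    rw [hrefl]
    have hone : ∑ m ∈ Finset.range N, q ^ m ≤ (1 - q)⁻¹ := by
      have := Summable.sum_le_tsum (Finset.range N) (fun i _ => by positivity)
        (summable_geometric_of_lt_one hq0.le hq1)
      rwa [tsum_geometric_of_lt_one hq0.le hq1] at this
    linarith
  -- final chain
  have hsum : |cocSum σ y n - cocSum σ y' n| ≤ K * q ^ L := by
    rw [cocSum, cocSum, ← Finset.sum_sub_distrib]
    refine le_trans (Finset.abs_sum_le_sum_abs _ _) ?_
    have hstep : ∑ m ∈ Finset.range n, |σ (shiftMap^[m] y) - σ (shiftMap^[m] y')| ≤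
        ∑ m ∈ Finset.range n, C * 2 * q ^ L * (q ^ m + q ^ (N - 1 - m)) := by
      apply Finset.sum_le_sum
      intro m hm
      rw [Finset.mem_range] at hm
      exact hterm m (by omega)
    refine hstep.trans ?_
    have hsub : ∑ m ∈ Finset.range n, C * 2 * q ^ L * (q ^ m + q ^ (N - 1 - m)) ≤
        ∑ m ∈ Finset.range N, C * 2 * q ^ L * (q ^ m + q ^ (N - 1 - m)) := by
      apply Finset.sum_le_sum_of_subset_of_nonneg
        (Finset.range_subset_range.mpr (by omega))
      intro i _ _
      positivity
    refine hsub.trans ?_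
    rw [← Finset.mul_sum]
    calc C * 2 * q ^ L * ∑ m ∈ Finset.range N, (q ^ m + q ^ (N - 1 - m))
        ≤ C * 2 * q ^ L * (2 * (1 - q)⁻¹) := by
          apply mul_le_mul_of_nonneg_left hgeo
          positivity
      _ = K * q ^ L := by rw [hKdef]; ring
  linarith
end

section
/- Let K ⊆ ℝ be a compact interval with length L := Leb(K), let d ∈ ℕ, let D₁ ≥ D₂ ≥ … ≥ D_d > 0, and suppose 0 < δ ≤ min{D_d/10, L/10}. Then cov( (DCS_{d,D}(K), d_DCS), δ ) ≤ (2L/δ)·(2D₁/δ)·(2D₂/δ)²·(2D₃/δ)⁴·…·(2D_d/δ)^{2^{d−1}}. -/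
open scoped ENNReal

/-- The set `DCS_{d,D}(K)` of discrete Cantor sets of depth `d` contained in
`K = [a,b]` with gap upper bounds `D`. -/
def DCSset (a b : ℝ) (d : ℕ) (D : Fin d → ℝ) : Set ((Fin d → Bool) → ℝ) :=
  {x | (∀ ω, x ω ∈ Set.Icc a b) ∧
    ∀ (i : ℕ) (hi : i < d), ∀ ω ω' : Fin d → Bool,
      (∀ j : Fin d, (j : ℕ) < i → ω j = ω' j) → |x ω - x ω'| ≤ D ⟨i, hi⟩}

/-- The sup metric on families indexed by `{0,1}^d`. -/
noncomputable def dDCS {d : ℕ} (x y : (Fin d → Bool) → ℝ) : ℝ :=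
  Finset.univ.sup' Finset.univ_nonempty (fun ω : Fin d → Bool => |x ω - y ω|)

namespace CovDCSProof

variable {d : ℕ}

/-- The all-`false` word. -/
def zf {d : ℕ} : Fin d → Bool := fun _ => false

/-- Zeroing a word from position `i` on. -/
def Zm (i : ℕ) (ω : Fin d → Bool) : Fin d → Bool := fun k => if (k : ℕ) < i then ω k else false

lemma Zm_zero (ω : Fin d → Bool) : Zm 0 ω = zf := by
  funext k; simp [Zm, zf]

lemma Zm_top (ω : Fin d → Bool) : Zm d ω = ω := by
  funext k; simp [Zm, k.isLt]

lemma Zm_Zm {i j : ℕ} (h : i ≤ j) (ω : Fin d → Bool) : Zm i (Zm j ω) = Zm i ω := by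
  funext k
  by_cases hk : (k : ℕ) < i
  · simp [Zm, hk, lt_of_lt_of_le hk h]
  · simp [Zm, hk]

/-- One plus the index of the last `true` coordinate (0 if none). -/
def lastIdx (ω : Fin d → Bool) : ℕ :=
  (Finset.univ.filter fun j => ω j = true).sup fun j => (j : ℕ) + 1

lemma lastIdx_le (ω : Fin d → Bool) : lastIdx ω ≤ d :=
  Finset.sup_le fun j _ => j.isLt

lemma lastIdx_pos {ω : Fin d → Bool} (h : ω ≠ zf) : 1 ≤ lastIdx ω := by
  obtain ⟨j, hj⟩ := Function.ne_iff.mp h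
  have hj' : ω j = true := by
    simpa [zf] using hj
  have : (j : ℕ) + 1 ≤ lastIdx ω :=
    Finset.le_sup (f := fun j : Fin d => (j : ℕ) + 1) (by simp [hj'])
  omega

lemma eq_false_of_lastIdx_le {ω : Fin d → Bool} {k : Fin d} (h : lastIdx ω ≤ (k : ℕ)) :
    ω k = false := by
  by_contra hk
  have hk' : ω k = true := by simpa using hk
  have : (k : ℕ) + 1 ≤ lastIdx ω :=
    Finset.le_sup (f := fun j : Fin d => (j : ℕ) + 1) (by simp [hk'])
  omega

lemma lastIdx_Zm_succ {ω : Fin d → Bool} {k : Fin d} (hk : ω k = true) :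
    lastIdx (Zm ((k : ℕ) + 1) ω) = (k : ℕ) + 1 := by
  apply le_antisymm
  · apply Finset.sup_le
    intro j hj
    simp only [Finset.mem_filter, Finset.mem_univ, true_and, Zm] at hj
    by_cases hlt : (j : ℕ) < (k : ℕ) + 1
    · omega
    · simp [hlt] at hj; exact absurd (Fin.le_iff_val_le_val.mp hj.1) (by omega)
  · apply Finset.le_sup (f := fun j : Fin d => (j : ℕ) + 1)
    simp [Zm, hk]


lemma diffNE {ω ω' : Fin d → Bool} (h : ω ≠ ω') :
    (Finset.univ.filter fun j => ω j ≠ ω' j).Nonempty := by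
  obtain ⟨j, hj⟩ := Function.ne_iff.mp h
  exact ⟨j, by simp [hj]⟩

/-- First differing coordinate. -/
noncomputable def mD {ω ω' : Fin d → Bool} (h : ω ≠ ω') : Fin d :=
  (Finset.univ.filter fun j => ω j ≠ ω' j).min' (diffNE h)

lemma mD_mem {ω ω' : Fin d → Bool} (h : ω ≠ ω') : ω (mD h) ≠ ω' (mD h) := by
  have := Finset.min'_mem _ (diffNE h)
  simpa [mD] using this

lemma agree_of_lt_mD {ω ω' : Fin d → Bool} (h : ω ≠ ω') {k : Fin d} (hk : k < mD h) :
    ω k = ω' k := by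
  by_contra hne
  exact absurd (Finset.min'_le _ k (by simp [hne])) (not_le.mpr hk)

/-- The "ultrametric" cost function. -/
noncomputable def cD (D : Fin d → ℝ) (ω ω' : Fin d → Bool) : ℝ :=
  if h : ω = ω' then 0 else D (mD h)

lemma cD_self (D : Fin d → ℝ) (ω : Fin d → Bool) : cD D ω ω = 0 := dif_pos rfl

variable {D : Fin d → ℝ}

lemma cD_nonneg (hDpos : ∀ i, 0 < D i) (ω ω' : Fin d → Bool) : 0 ≤ cD D ω ω' := by
  unfold cD; split
  · exact le_refl 0
  · exact (hDpos _).le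

lemma cD_le_of_agree (hDpos : ∀ i, 0 < D i) (hDanti : ∀ i j : Fin d, i ≤ j → D j ≤ D i)
    {i : ℕ} (hi : i < d) {ω ω' : Fin d → Bool}
    (hag : ∀ j : Fin d, (j : ℕ) < i → ω j = ω' j) : cD D ω ω' ≤ D ⟨i, hi⟩ := by
  unfold cD; split
  · exact (hDpos _).le
  · next h =>
    apply hDanti
    refine le_of_not_gt fun hlt => ?_
    exact mD_mem h (hag _ hlt)

lemma cD_triangle (hDpos : ∀ i, 0 < D i) (hDanti : ∀ i j : Fin d, i ≤ j → D j ≤ D i)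
    (ω τ σ : Fin d → Bool) : cD D ω σ ≤ cD D ω τ + cD D τ σ := by
  by_cases h1 : ω = σ
  · rw [h1, cD_self]
    exact add_nonneg (cD_nonneg hDpos _ _) (cD_nonneg hDpos _ _)
  by_cases h2 : ω = τ
  · subst h2; rw [cD_self]; simp
  by_cases h3 : τ = σ
  · subst h3; rw [cD_self]; simp
  have hmin : min (mD h2) (mD h3) ≤ mD h1 := by
    apply Finset.le_min'
    intro k hk
    simp only [Finset.mem_filter, Finset.mem_univ, true_and] at hk
    by_contra hlt
    push_neg at hlt
    have e1 : ω k = τ k := agree_of_lt_mD h2 (lt_of_lt_of_le hlt (min_le_left _ _))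
    have e2 : τ k = σ k := agree_of_lt_mD h3 (lt_of_lt_of_le hlt (min_le_right _ _))
    exact hk (e1.trans e2)
  unfold cD
  rw [dif_neg h1, dif_neg h2, dif_neg h3]
  rcases le_total (mD h2) (mD h3) with hc | hc
  · have h4 : D (mD h1) ≤ D (mD h2) := hDanti _ _ (by rwa [min_eq_left hc] at hmin)
    linarith [hDpos (mD h3)]
  · have h4 : D (mD h1) ≤ D (mD h3) := hDanti _ _ (by rwa [min_eq_right hc] at hmin)
    linarith [hDpos (mD h2)]

/-- Clamp into `[a,b]`. -/
def clampf (a b t : ℝ) : ℝ := max a (min t b)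

lemma clampf_mem {a b : ℝ} (hab : a ≤ b) (t : ℝ) : clampf a b t ∈ Set.Icc a b := by
  constructor
  · exact le_max_left _ _
  · exact max_le hab (min_le_right _ _)

lemma clampf_eq {a b t : ℝ} (h : t ∈ Set.Icc a b) : clampf a b t = t := by
  unfold clampf
  rw [min_eq_left h.2, max_eq_right h.1]

lemma clampf_le_clampf {a b u v t : ℝ} (h : u ≤ v + t) (ht : 0 ≤ t) :
    clampf a b u ≤ clampf a b v + t := by
  unfold clampf
  apply max_le
  · exact le_trans (le_max_left a (min v b)) (le_add_of_nonneg_right ht)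
  · have h1 : min u b ≤ min (v + t) (b + t) :=
      min_le_min h (le_add_of_nonneg_right ht)
    rw [min_add_add_right] at h1
    exact le_trans h1 (by linarith [le_max_right a (min v b)])

/-- The nonexpansive retraction onto `DCSset`. -/
noncomputable def proj (a b : ℝ) (D : Fin d → ℝ) (y : (Fin d → Bool) → ℝ) :
    (Fin d → Bool) → ℝ :=
  fun ω => clampf a b (Finset.univ.inf' Finset.univ_nonempty fun σ => y σ + cD D ω σ)

lemma inf_le_inf (hDpos : ∀ i, 0 < D i) (hDanti : ∀ i j : Fin d, i ≤ j → D j ≤ D i)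
    (y z : (Fin d → Bool) → ℝ) {t : ℝ} (hyz : ∀ σ, y σ ≤ z σ + t) (ω ω' : Fin d → Bool) :
    (Finset.univ.inf' Finset.univ_nonempty fun σ => y σ + cD D ω σ)
      ≤ (Finset.univ.inf' Finset.univ_nonempty fun σ => z σ + cD D ω' σ) + cD D ω ω' + t := by
  obtain ⟨σ₀, _, hσ₀⟩ := Finset.exists_mem_eq_inf' (Finset.univ_nonempty)
      (fun σ => z σ + cD D ω' σ)
  have h1 : (Finset.univ.inf' Finset.univ_nonempty fun σ => y σ + cD D ω σ)
      ≤ y σ₀ + cD D ω σ₀ := Finset.inf'_le _ (Finset.mem_univ σ₀)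
  have h2 : cD D ω σ₀ ≤ cD D ω ω' + cD D ω' σ₀ := cD_triangle hDpos hDanti ω ω' σ₀
  have h3 := hyz σ₀
  rw [hσ₀]
  linarith

lemma proj_mem (hab : a ≤ b) (hDpos : ∀ i, 0 < D i)
    (hDanti : ∀ i j : Fin d, i ≤ j → D j ≤ D i) (y : (Fin d → Bool) → ℝ) :
    proj a b D y ∈ DCSset a b d D := by
  constructor
  · intro ω; exact clampf_mem hab _
  · intro i hi ω ω' hag
    have key : ∀ (μ ν : Fin d → Bool), (∀ j : Fin d, (j : ℕ) < i → μ j = ν j) →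
        proj a b D y μ - proj a b D y ν ≤ D ⟨i, hi⟩ := by
      intro μ ν hag'
      have h1 := inf_le_inf hDpos hDanti y y (t := 0) (fun σ => by simp) μ ν
      rw [add_zero] at h1
      have h2 : proj a b D y μ ≤ proj a b D y ν + cD D μ ν :=
        clampf_le_clampf h1 (cD_nonneg hDpos _ _)
      have h3 : cD D μ ν ≤ D ⟨i, hi⟩ := cD_le_of_agree hDpos hDanti hi hag'
      linarith
    rw [abs_sub_le_iff]
    exact ⟨key ω ω' hag, key ω' ω fun j hj => (hag j hj).symm⟩

lemma proj_eq_self (hDpos : ∀ i, 0 < D i) {a b : ℝ} {x : (Fin d → Bool) → ℝ}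
    (hx : x ∈ DCSset a b d D) : proj a b D x = x := by
  funext ω
  have h1 : (Finset.univ.inf' Finset.univ_nonempty fun σ => x σ + cD D ω σ) = x ω := by
    apply le_antisymm
    · have := Finset.inf'_le (fun σ => x σ + cD D ω σ) (Finset.mem_univ ω)
      rwa [cD_self, add_zero] at this
    · apply Finset.le_inf'
      intro σ _
      by_cases h : ω = σ
      · subst h; rw [cD_self, add_zero]
      · have hd1 : cD D ω σ = D (mD h) := dif_neg h
        have hag : ∀ j : Fin d, (j : ℕ) < (mD h : ℕ) → ω j = σ j := by
          intro j hj
          exact agree_of_lt_mD h (by exact hj)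
        have := hx.2 (mD h : ℕ) (mD h).isLt ω σ hag
        have heq : (⟨(mD h : ℕ), (mD h).isLt⟩ : Fin d) = mD h := rfl
        rw [heq] at this
        have := abs_le.mp this
        rw [hd1]
        linarith [this.1]
  rw [proj, h1, clampf_eq (hx.1 ω)]

lemma proj_dist (hDpos : ∀ i, 0 < D i) (hDanti : ∀ i j : Fin d, i ≤ j → D j ≤ D i)
    {a b t : ℝ} (ht : 0 ≤ t) {y z : (Fin d → Bool) → ℝ}
    (h : ∀ σ, |y σ - z σ| ≤ t) (ω : Fin d → Bool) :
    |proj a b D y ω - proj a b D z ω| ≤ t := by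
  rw [abs_sub_le_iff]
  constructor
  · have h1 := inf_le_inf hDpos hDanti y z (t := t)
      (fun σ => by linarith [(abs_le.mp (h σ)).2]) ω ω
    rw [cD_self, add_zero] at h1
    have := clampf_le_clampf (a := a) (b := b) h1 ht
    unfold proj
    linarith
  · have h1 := inf_le_inf hDpos hDanti z y (t := t)
      (fun σ => by linarith [(abs_le.mp (h σ)).1]) ω ω
    rw [cD_self, add_zero] at h1
    have := clampf_le_clampf (a := a) (b := b) h1 ht
    unfold proj
    linarith


/-- index of the level of a nonzero word -/
def lastF (hd : 0 < d) (ω : Fin d → Bool) : Fin d :=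
  ⟨lastIdx ω - 1, by have := lastIdx_le ω; omega⟩

noncomputable def KK (D : Fin d → ℝ) (G : ℝ) (j : Fin d) : ℤ := ⌊D j / G⌋ + 1

noncomputable def SS (hd : 0 < d) (a b G : ℝ) (D : Fin d → ℝ) (ω : Fin d → Bool) :
    Finset ℤ :=
  if ω = zf then Finset.Icc 0 ⌊(b - a) / G⌋
  else Finset.Icc (-(KK D G (lastF hd ω))) (KK D G (lastF hd ω))

noncomputable def reconZ (a G : ℝ) (p : (Fin d → Bool) → ℤ) (ω : Fin d → Bool) : ℝ :=
  a + G * ((p zf + ∑ k : Fin d, if ω k = true then p (Zm ((k : ℕ) + 1) ω) else 0 : ℤ) : ℝ)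
    + G / 2

def paramZ (m : (Fin d → Bool) → ℤ) (ω : Fin d → Bool) : ℤ :=
  if ω = zf then m zf else m ω - m (Zm (lastIdx ω - 1) ω)

lemma recon_paramZ (m : (Fin d → Bool) → ℤ) (ω : Fin d → Bool) :
    paramZ m zf + ∑ k : Fin d, (if ω k = true then paramZ m (Zm ((k : ℕ) + 1) ω) else 0)
      = m ω := by
  have hz : paramZ m zf = m zf := if_pos rfl
  have hterm : ∀ k : Fin d, (if ω k = true then paramZ m (Zm ((k : ℕ) + 1) ω) else 0)
      = m (Zm ((k : ℕ) + 1) ω) - m (Zm (k : ℕ) ω) := by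
    intro k
    by_cases hk : ω k = true
    · rw [if_pos hk]
      have hne : Zm ((k : ℕ) + 1) ω ≠ zf := by
        intro hcon
        have := congrFun hcon k
        simp [Zm, zf, Nat.lt_succ_self, hk] at this
      have hli := lastIdx_Zm_succ hk
      rw [paramZ, if_neg hne, hli]
      simp only [Nat.add_sub_cancel]
      rw [Zm_Zm (Nat.le_succ _) ω]
    · rw [if_neg hk]
      have hωk : ω k = false := by simpa using hk
      have heq : Zm ((k : ℕ) + 1) ω = Zm (k : ℕ) ω := by
        funext l
        by_cases hl : (l : ℕ) < (k : ℕ)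
        · simp [Zm, hl, Nat.lt_succ_of_lt hl]
        · by_cases hl' : (l : ℕ) < (k : ℕ) + 1
          · have hlk : l = k := Fin.ext (by omega)
            subst hlk
            simp [Zm, hl, hl', hωk]
          · simp [Zm, hl, hl']
      rw [heq, sub_self]
  rw [hz, Finset.sum_congr rfl fun k _ => hterm k]
  rw [Fin.sum_univ_eq_sum_range (fun i => m (Zm (i + 1) ω) - m (Zm i ω)) d]
  rw [Finset.sum_range_sub (fun i => m (Zm i ω)) d]
  rw [Zm_top, Zm_zero]
  ring


lemma fiber_eq (hd : 0 < d) (j : Fin d) :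
    ((Finset.univ.erase (zf (d := d))).filter fun ω => lastF hd ω = j) =
      Fintype.piFinset (fun k : Fin d =>
        if (k : ℕ) < (j : ℕ) then (Finset.univ : Finset Bool)
        else if k = j then {true} else {false}) := by
  ext ω
  simp only [Finset.mem_filter, Finset.mem_erase, Finset.mem_univ, and_true, true_and,
    Fintype.mem_piFinset]
  constructor
  · rintro ⟨hne, hlf⟩
    have h1 : lastIdx ω - 1 = (j : ℕ) := congrArg Fin.val hlf
    have hpos := lastIdx_pos hne
    have hli : lastIdx ω = (j : ℕ) + 1 := by omega
    intro k
    by_cases hk1 : (k : ℕ) < (j : ℕ)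
    · simp [hk1]
    · by_cases hk2 : k = j
      · subst hk2
        rw [if_neg hk1, if_pos rfl]
        simp only [Finset.mem_singleton]
        by_contra hjf
        have hωj : ω k = false := by simpa using hjf
        have hlast : lastIdx ω ≤ (k : ℕ) := by
          apply Finset.sup_le
          intro m hm
          simp only [Finset.mem_filter, Finset.mem_univ, true_and] at hm
          have hmk : m ≠ k := by
            intro he; subst he; rw [hm] at hωj; exact absurd hωj (by simp)
          have hmk' : (m : ℕ) ≠ (k : ℕ) := fun he => hmk (Fin.ext he)
          have : (m : ℕ) + 1 ≤ lastIdx ω :=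
            Finset.le_sup (f := fun j : Fin d => (j : ℕ) + 1) (by simp [hm])
          omega
        omega
      · have hk3 : (j : ℕ) < (k : ℕ) := by
          rcases Nat.lt_or_ge (j : ℕ) (k : ℕ) with h | h
          · exact h
          · exfalso; exact hk2 (Fin.ext (by omega))
        rw [if_neg hk1, if_neg hk2]
        simp only [Finset.mem_singleton]
        apply eq_false_of_lastIdx_le
        omega
  · intro hk
    have hj : ω j = true := by
      have := hk j
      rw [if_neg (lt_irrefl _), if_pos rfl] at this
      simpa using this
    have hfalse : ∀ k : Fin d, (j : ℕ) < (k : ℕ) → ω k = false := by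
      intro k h
      have := hk k
      rw [if_neg (by omega), if_neg (fun he => by subst he; omega)] at this
      simpa using this
    have hne : ω ≠ zf := by
      intro h
      rw [h] at hj
      exact absurd hj (by simp [zf])
    refine ⟨hne, ?_⟩
    have hli : lastIdx ω = (j : ℕ) + 1 := by
      apply le_antisymm
      · apply Finset.sup_le
        intro m hm
        simp only [Finset.mem_filter, Finset.mem_univ, true_and] at hm
        by_contra hgt
        push_neg at hgt
        have := hfalse m (by omega)
        rw [this] at hm
        exact absurd hm (by simp)
      · exact Finset.le_sup (f := fun i : Fin d => (i : ℕ) + 1) (by simp [hj])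
    apply Fin.ext
    simp [lastF, hli]

lemma card_filter_lt (j : Fin d) :
    (Finset.univ.filter fun k : Fin d => (k : ℕ) < (j : ℕ)).card = (j : ℕ) := by
  have h : (Finset.univ.filter fun k : Fin d => (k : ℕ) < (j : ℕ)).card
      = (Finset.range (j : ℕ)).card := by
    refine Finset.card_bij (fun k _ => (k : ℕ)) ?_ ?_ ?_
    · intro k hk
      simp only [Finset.mem_filter, Finset.mem_univ, true_and] at hk
      simpa using hk
    · intro k₁ h₁ k₂ h₂ h
      exact Fin.ext h
    · intro m hm
      simp only [Finset.mem_range] at hm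
      exact ⟨⟨m, lt_trans hm j.isLt⟩, by simp only [Finset.mem_filter, Finset.mem_univ, true_and]; exact hm, rfl⟩
  rw [h, Finset.card_range]

lemma fiber_card (hd : 0 < d) (j : Fin d) :
    (((Finset.univ.erase (zf (d := d))).filter fun ω => lastF hd ω = j)).card
      = 2 ^ (j : ℕ) := by
  rw [fiber_eq hd j, Fintype.card_piFinset]
  have hc : ∀ k : Fin d,
      (if (k : ℕ) < (j : ℕ) then (Finset.univ : Finset Bool)
        else if k = j then {true} else {false}).card
      = if (k : ℕ) < (j : ℕ) then 2 else 1 := by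
    intro k
    by_cases hk : (k : ℕ) < (j : ℕ)
    · simp [hk]
    · by_cases hk2 : k = j <;> simp [hk, hk2]
  rw [Finset.prod_congr rfl fun k _ => hc k]
  rw [Finset.prod_ite (fun _ => 2) (fun _ => 1)]
  rw [Finset.prod_const, Finset.prod_const, card_filter_lt, one_pow, mul_one]


lemma abs_floor_sub_le {u v t : ℝ} (h : |u - v| ≤ t) : |⌊u⌋ - ⌊v⌋| ≤ ⌊t⌋ + 1 := by
  have h1 := abs_le.mp h
  have f1 : (⌊u⌋ : ℝ) ≤ u := Int.floor_le u
  have f2 : u < (⌊u⌋ : ℝ) + 1 := Int.lt_floor_add_one u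
  have f3 : (⌊v⌋ : ℝ) ≤ v := Int.floor_le v
  have f4 : v < (⌊v⌋ : ℝ) + 1 := Int.lt_floor_add_one v
  have f5 : (⌊t⌋ : ℝ) ≤ t := Int.floor_le t
  have f6 : t < (⌊t⌋ : ℝ) + 1 := Int.lt_floor_add_one t
  have g1 : (⌊u⌋ : ℝ) < (⌊v⌋ : ℝ) + ((⌊t⌋ : ℝ) + 1) + 1 := by linarith
  have g2 : (⌊v⌋ : ℝ) < (⌊u⌋ : ℝ) + ((⌊t⌋ : ℝ) + 1) + 1 := by linarith
  have g1' : ⌊u⌋ < ⌊v⌋ + (⌊t⌋ + 1) + 1 := by exact_mod_cast g1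
  have g2' : ⌊v⌋ < ⌊u⌋ + (⌊t⌋ + 1) + 1 := by exact_mod_cast g2
  rw [abs_le]
  omega


end CovDCSProof

open CovDCSProof

/-- **Bounding the number of discrete Cantor sets.** -/
theorem cov_DCS_le
    (a b : ℝ) (hab : a ≤ b) (d : ℕ) (hd : 0 < d)
    (D : Fin d → ℝ) (hDpos : ∀ i, 0 < D i)
    (hDanti : ∀ i j : Fin d, i ≤ j → D j ≤ D i)
    (δ : ℝ) (hδ : 0 < δ)
    (hδD : δ ≤ D ⟨d - 1, Nat.sub_lt hd one_pos⟩ / 10)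
    (hδL : δ ≤ (b - a) / 10) :
    (covN (DCSset a b d D) dDCS δ : ℝ≥0∞)
      ≤ ENNReal.ofReal
          ((2 * (b - a) / δ) * ∏ i : Fin d, (2 * D i / δ) ^ (2 ^ (i : ℕ))) := by
  classical
  have hL10 : 10 * δ ≤ b - a := by linarith
  have hDL10 : 10 * δ ≤ D ⟨d - 1, Nat.sub_lt hd one_pos⟩ := by linarith
  have hD10 : ∀ j : Fin d, 10 * δ ≤ D j := by
    intro j
    refine le_trans hDL10 (hDanti j ⟨d - 1, Nat.sub_lt hd one_pos⟩ ?_)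
    rw [Fin.le_def]
    have hj := j.isLt
    simp only
    omega
  set G : ℝ := 3 * δ / 2 with hGdef
  have hG : 0 < G := by rw [hGdef]; linarith
  set PF : Finset ((Fin d → Bool) → ℤ) := Fintype.piFinset (SS hd a b G D) with hPF
  set F : Finset ((Fin d → Bool) → ℝ) :=
    PF.image (fun p => proj a b D (reconZ a G p)) with hF
  -- Centers lie in the DCS set.
  have hFA : ↑F ⊆ DCSset a b d D := by
    intro y hy
    rw [hF, Finset.coe_image] at hy
    obtain ⟨p, _, rfl⟩ := hy
    exact proj_mem hab hDpos hDanti _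
  -- Covering property.
  have hcov : ∀ x ∈ DCSset a b d D, ∃ c ∈ F, dDCS c x < δ := by
    intro x hx
    set m : (Fin d → Bool) → ℤ := fun ω => ⌊(x ω - a) / G⌋ with hm
    have hpmem : paramZ m ∈ PF := by
      rw [hPF, Fintype.mem_piFinset]
      intro ω
      by_cases hω : ω = zf
      · subst hω
        rw [SS, if_pos rfl, paramZ, if_pos rfl, Finset.mem_Icc]
        constructor
        · exact Int.floor_nonneg.mpr (div_nonneg (by linarith [(hx.1 zf).1]) hG.le)
        · exact Int.floor_le_floor ((div_le_div_iff_of_pos_right hG).mpr (by linarith [(hx.1 zf).2]))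
      · rw [SS, if_neg hω, paramZ, if_neg hω, Finset.mem_Icc]
        have hpos := lastIdx_pos hω
        have hle := lastIdx_le ω
        have hjn : lastIdx ω - 1 < d := by omega
        have hagree : ∀ k : Fin d, (k : ℕ) < lastIdx ω - 1 → ω k = Zm (lastIdx ω - 1) ω k := by
          intro k hk
          simp [Zm, hk]
        have hgap : |x ω - x (Zm (lastIdx ω - 1) ω)| ≤ D ⟨lastIdx ω - 1, hjn⟩ :=
          hx.2 (lastIdx ω - 1) hjn ω _ hagree
        have hdiv : |(x ω - a) / G - (x (Zm (lastIdx ω - 1) ω) - a) / G|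
            ≤ D ⟨lastIdx ω - 1, hjn⟩ / G := by
          have he : (x ω - a) / G - (x (Zm (lastIdx ω - 1) ω) - a) / G
              = (x ω - x (Zm (lastIdx ω - 1) ω)) / G := by ring
          rw [he, abs_div, abs_of_pos hG]
          exact (div_le_div_iff_of_pos_right hG).mpr hgap
        have hfl := abs_floor_sub_le hdiv
        have hKK : KK D G (lastF hd ω) = ⌊D ⟨lastIdx ω - 1, hjn⟩ / G⌋ + 1 := by
          rw [KK]
          congr 1
        rw [hKK]
        have := abs_le.mp hfl
        exact ⟨by linarith [this.1], by linarith [this.2]⟩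
    refine ⟨proj a b D (reconZ a G (paramZ m)), Finset.mem_image_of_mem _ hpmem, ?_⟩
    have hrecon : reconZ a G (paramZ m) = fun σ => a + G * ((m σ : ℤ) : ℝ) + G / 2 := by
      funext σ
      rw [reconZ, recon_paramZ m σ]
    rw [hrecon]
    rw [dDCS]
    rw [Finset.sup'_lt_iff]
    intro ω _
    have hq : ∀ σ, |(a + G * ((m σ : ℤ) : ℝ) + G / 2) - x σ| ≤ G / 2 := by
      intro σ
      have f1 : ((m σ : ℤ) : ℝ) ≤ (x σ - a) / G := by rw [hm]; exact Int.floor_le _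
      have f2 : (x σ - a) / G < ((m σ : ℤ) : ℝ) + 1 := by rw [hm]; exact Int.lt_floor_add_one _
      have g1 : G * ((m σ : ℤ) : ℝ) ≤ x σ - a := by
        rw [mul_comm]
        exact (le_div_iff₀ hG).mp f1
      have g2 : x σ - a < G * (((m σ : ℤ) : ℝ) + 1) := by
        rw [mul_comm]
        exact (div_lt_iff₀ hG).mp f2
      rw [abs_le]
      constructor <;> nlinarith
    have hle : |proj a b D (fun σ => a + G * ((m σ : ℤ) : ℝ) + G / 2) ω - x ω| ≤ G / 2 := by
      conv_lhs => rw [← proj_eq_self hDpos hx]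
      exact proj_dist hDpos hDanti (by linarith) hq ω
    have : G / 2 < δ := by rw [hGdef]; linarith
    linarith
  -- Cardinality bound.
  have hFle : F.card ≤ PF.card := Finset.card_image_le
  have hPFcard : PF.card = ∏ ω : Fin d → Bool, (SS hd a b G D ω).card := by
    rw [hPF]; exact Fintype.card_piFinset _
  have hzfcard : ((SS hd a b G D zf).card : ℝ) ≤ 2 * (b - a) / δ := by
    rw [SS, if_pos rfl, Int.card_Icc]
    have hK0 : (0 : ℤ) ≤ ⌊(b - a) / G⌋ :=
      Int.floor_nonneg.mpr (div_nonneg (by linarith) hG.le)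
    have hsub : (⌊(b - a) / G⌋ + 1 - 0 : ℤ) = ⌊(b - a) / G⌋ + 1 := by ring
    rw [hsub]
    have h0 : ((⌊(b - a) / G⌋ + 1 : ℤ).toNat : ℤ) = ⌊(b - a) / G⌋ + 1 :=
      Int.toNat_of_nonneg (by omega)
    have htn : ((⌊(b - a) / G⌋ + 1 : ℤ).toNat : ℝ) = ((⌊(b - a) / G⌋ : ℤ) : ℝ) + 1 := by
      exact_mod_cast h0
    rw [htn]
    have h1 : ((⌊(b - a) / G⌋ : ℤ) : ℝ) ≤ (b - a) / G := Int.floor_le _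
    have h2 : (b - a) / G = 2 / 3 * ((b - a) / δ) := by
      rw [hGdef]; field_simp
    have h1' : ((⌊(b - a) / G⌋ : ℤ) : ℝ) ≤ 2 / 3 * ((b - a) / δ) := h1.trans (le_of_eq h2)
    have hX : 10 ≤ (b - a) / δ := by rw [le_div_iff₀ hδ]; linarith
    have h3 : 2 * (b - a) / δ = 2 * ((b - a) / δ) := by ring
    rw [h3]
    linarith
  have hjcard : ∀ j : Fin d,
      ((2 * KK D G j + 1 : ℤ) : ℝ) ≤ 2 * D j / δ := by
    intro j
    have h1 : ((⌊D j / G⌋ : ℤ) : ℝ) ≤ D j / G := Int.floor_le _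
    have h2 : D j / G = 2 / 3 * (D j / δ) := by
      rw [hGdef]; field_simp
    have h1' : ((⌊D j / G⌋ : ℤ) : ℝ) ≤ 2 / 3 * (D j / δ) := h1.trans (le_of_eq h2)
    have hY : 10 ≤ D j / δ := by rw [le_div_iff₀ hδ]; linarith [hD10 j]
    have h3 : 2 * D j / δ = 2 * (D j / δ) := by ring
    rw [KK, h3]
    push_cast
    linarith
  have hKKpos : ∀ j : Fin d, (1 : ℤ) ≤ KK D G j := by
    intro j
    rw [KK]
    have : (0 : ℤ) ≤ ⌊D j / G⌋ :=
      Int.floor_nonneg.mpr (div_nonneg (hDpos j).le hG.le)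
    omega
  have hprod : ∏ ω ∈ Finset.univ.erase (zf (d := d)), ((SS hd a b G D ω).card : ℝ)
      ≤ ∏ i : Fin d, (2 * D i / δ) ^ (2 ^ (i : ℕ)) := by
    rw [← Finset.prod_fiberwise_of_maps_to
      (g := lastF hd) (t := Finset.univ)
      (fun ω _ => Finset.mem_univ _) (fun ω => ((SS hd a b G D ω).card : ℝ))]
    apply Finset.prod_le_prod
    · intro j _
      apply Finset.prod_nonneg
      intro ω _
      positivity
    · intro j _
      have hconst : ∀ ω ∈ (Finset.univ.erase (zf (d := d))).filter fun ω => lastF hd ω = j,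
          ((SS hd a b G D ω).card : ℝ) = ((2 * KK D G j + 1 : ℤ) : ℝ) := by
        intro ω hω
        rw [Finset.mem_filter, Finset.mem_erase] at hω
        obtain ⟨⟨hne, _⟩, hlf⟩ := hω
        rw [SS, if_neg hne, hlf, Int.card_Icc]
        have h0 : ((KK D G j + 1 - -KK D G j : ℤ).toNat : ℤ) = KK D G j + 1 - -KK D G j :=
          Int.toNat_of_nonneg (by linarith [hKKpos j])
        have h1 : ((KK D G j + 1 - -KK D G j : ℤ).toNat : ℝ)
            = ((KK D G j + 1 - -KK D G j : ℤ) : ℝ) := by exact_mod_cast h0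
        rw [h1]
        push_cast
        ring
      rw [Finset.prod_congr rfl hconst, Finset.prod_const, fiber_card hd j]
      apply pow_le_pow_left₀
      · have h1 : (1 : ℝ) ≤ ((KK D G j : ℤ) : ℝ) := by exact_mod_cast hKKpos j
        push_cast
        push_cast at h1
        linarith
      · exact hjcard j
  have hreal : ((PF.card : ℕ) : ℝ)
      ≤ (2 * (b - a) / δ) * ∏ i : Fin d, (2 * D i / δ) ^ (2 ^ (i : ℕ)) := by
    rw [hPFcard]
    push_cast
    rw [← Finset.mul_prod_erase Finset.univ _ (Finset.mem_univ (zf (d := d)))]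
    have hnn : (0 : ℝ) ≤ ∏ ω ∈ Finset.univ.erase (zf (d := d)), ((SS hd a b G D ω).card : ℝ) := by
      apply Finset.prod_nonneg; intro ω _; positivity
    calc ((SS hd a b G D zf).card : ℝ) * ∏ ω ∈ Finset.univ.erase (zf (d := d)),
          ((SS hd a b G D ω).card : ℝ)
        ≤ (2 * (b - a) / δ) * ∏ ω ∈ Finset.univ.erase (zf (d := d)),
          ((SS hd a b G D ω).card : ℝ) := by
          apply mul_le_mul_of_nonneg_right hzfcard hnn
      _ ≤ (2 * (b - a) / δ) * ∏ i : Fin d, (2 * D i / δ) ^ (2 ^ (i : ℕ)) := by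
          apply mul_le_mul_of_nonneg_left hprod
          exact div_nonneg (by linarith) hδ.le
  -- Put everything together.
  have h1 : covN (DCSset a b d D) dDCS δ ≤ (F.card : ℕ∞) :=
    sInf_le ⟨F, hFA, rfl, hcov⟩
  calc (covN (DCSset a b d D) dDCS δ : ℝ≥0∞)
      ≤ ((F.card : ℕ∞) : ℝ≥0∞) := ENat.toENNReal_le.mpr h1
    _ = ((F.card : ℕ) : ℝ≥0∞) := by simp
    _ ≤ ENNReal.ofReal ((2 * (b - a) / δ) * ∏ i : Fin d, (2 * D i / δ) ^ (2 ^ (i : ℕ))) := by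
        rw [← ENNReal.ofReal_natCast]
        apply ENNReal.ofReal_le_ofReal
        calc ((F.card : ℕ) : ℝ) ≤ ((PF.card : ℕ) : ℝ) := by exact_mod_cast hFle
          _ ≤ _ := hreal
end
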